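/- arXiv:2503.06379 — 5 statements merged into one kernel-verified Lean document; each statement's English description precedes it below -/
import Mathlib

section
/- Let G be a finite group and p a prime, and suppose G is not a p-group. Then χ(C_p(G)) = -Σ_{H ∈ I_p(G)} μ(H,G)·[G:H], where I_p(G) is the set of all subgroups of G that are intersections of a nonempty family of Sylow p-subgroups of G, and μ is the Möbius function of the finite poset I_p(G) ∪ {G} ordered by inclusion. -/
open scoped Classical in
/-- The Euler characteristic of (the order complex of) a finite poset `P`:
`χ(P) = Σ_{i ≥ 0} (-1)^i c_i` where `c_i` is the number of chains in `P` with
exactly `i + 1` elements; a chain with `i + 1` elements contributes `(-1)^i = (-1)^(card+1)`. -/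
noncomputable def posetEulerChar (P : Type*) [PartialOrder P] [Finite P] : ℤ :=
  letI := Fintype.ofFinite P
  ∑ s ∈ (Finset.univ : Finset P).powerset,
    if s.Nonempty ∧ IsChain (· ≤ ·) (s : Set P) then (-1 : ℤ) ^ (s.card + 1) else 0

/-- `μ` is the Möbius function of the poset `P`: `μ(x,x) = 1` and
`Σ_{x ≤ z ≤ y} μ(x,z) = 0` for all `x < y`. -/
def IsMobiusOf {P : Type*} [PartialOrder P] (μ : P → P → ℤ) : Prop :=
  (∀ x, μ x x = 1) ∧ ∀ x y : P, x < y → (∑ᶠ z ∈ Set.Icc x y, μ x z) = 0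

/-- The coset poset `C_p(G)`: all right cosets `Hx` (as subsets of `G`, ordered by
inclusion) where `H` ranges over the `p`-subgroups of `G` (including the trivial one). -/
def pCosets (p : ℕ) (G : Type*) [Group G] : Set (Set G) :=
  {S | ∃ (H : Subgroup G) (x : G), IsPGroup p H ∧ S = (fun h => h * x) '' (H : Set G)}


/-- `I_p(G)`: the set of subgroups of `G` that are intersections of nonempty families of
Sylow `p`-subgroups of `G`. -/
def sylowIntersections (p : ℕ) (G : Type*) [Group G] : Set (Subgroup G) :=
  {H | ∃ S : Set (Sylow p G), S.Nonempty ∧ H = ⨅ P ∈ S, (P : Subgroup G)}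

/-! ### Auxiliary material -/

open scoped Classical

namespace BrownAux

/-! #### Generic combinatorial lemmas -/

lemma alt_powerset_sum {β : Type*} {A : Finset β} (hA : A.Nonempty) :
    ∑ T ∈ A.powerset, (if T.Nonempty then (-1 : ℤ) ^ (T.card + 1) else 0) = 1 := by
  have h1 : ∀ T ∈ A.powerset,
      (if T.Nonempty then (-1 : ℤ) ^ (T.card + 1) else 0)
        = (-1 : ℤ) ^ (T.card + 1) + (if T = ∅ then 1 else 0) := by
    intro T _
    by_cases hT : T.Nonempty
    · rw [if_pos hT, if_neg (Finset.nonempty_iff_ne_empty.mp hT), add_zero]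
    · rw [if_neg hT, if_pos (Finset.not_nonempty_iff_eq_empty.mp hT),
        Finset.not_nonempty_iff_eq_empty.mp hT]
      simp
  rw [Finset.sum_congr rfl h1, Finset.sum_add_distrib]
  have h2 : ∑ T ∈ A.powerset, (-1 : ℤ) ^ (T.card + 1) = 0 := by
    have := Finset.sum_powerset_neg_one_pow_card_of_nonempty (x := A) hA
    calc ∑ T ∈ A.powerset, (-1 : ℤ) ^ (T.card + 1)
        = ∑ T ∈ A.powerset, (-1) * (-1 : ℤ) ^ T.card := by
          refine Finset.sum_congr rfl fun T _ => ?_; ring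
      _ = 0 := by rw [← Finset.mul_sum, this, mul_zero]
  rw [h2, zero_add, Finset.sum_ite_eq' A.powerset (∅ : Finset β) (fun _ => (1:ℤ))]
  simp

lemma cone_chain_sum {α : Type*} [PartialOrder α] {D : Finset α} {m : α}
    (hm : m ∈ D) (hmax : ∀ x ∈ D, x ≤ m) :
    ∑ s ∈ D.powerset,
      (if s.Nonempty ∧ IsChain (· ≤ ·) (↑s : Set α) then (-1 : ℤ) ^ (s.card + 1) else 0) = 1 := by
  set f : Finset α → ℤ := fun s =>
    if s.Nonempty ∧ IsChain (· ≤ ·) (↑s : Set α) then (-1 : ℤ) ^ (s.card + 1) else 0 with hf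
  have hD : D = insert m (D.erase m) := (Finset.insert_erase hm).symm
  rw [hD, Finset.sum_powerset_insert (Finset.notMem_erase m D), ← Finset.sum_add_distrib]
  have key : ∀ t ∈ (D.erase m).powerset, f t + f (insert m t) = if t = ∅ then 1 else 0 := by
    intro t ht
    have hmt : m ∉ t := fun h => Finset.notMem_erase m D (Finset.mem_powerset.mp ht h)
    by_cases h0 : t = ∅
    · subst h0
      rw [if_pos rfl]
      have : f ∅ = 0 := by simp [hf]
      rw [this, zero_add, hf]
      simp only [LawfulSingleton.insert_empty_eq]
      rw [if_pos]
      · simp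
      · exact ⟨Finset.singleton_nonempty m, by simp [IsChain.singleton]⟩
    · rw [if_neg h0]
      have hne : t.Nonempty := Finset.nonempty_iff_ne_empty.mpr h0
      by_cases hc : IsChain (· ≤ ·) (↑t : Set α)
      · have hci : IsChain (· ≤ ·) (↑(insert m t) : Set α) := by
          rw [Finset.coe_insert]
          exact hc.insert (fun b hb _ => Or.inr (hmax b
            (Finset.mem_of_mem_erase (Finset.mem_powerset.mp ht hb))))
        rw [hf]
        simp only
        rw [if_pos ⟨hne, hc⟩, if_pos ⟨Finset.insert_nonempty m t, hci⟩,
          Finset.card_insert_of_notMem hmt]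
        ring
      · have hci : ¬ IsChain (· ≤ ·) (↑(insert m t) : Set α) := by
          intro h
          exact hc (h.mono (by rw [Finset.coe_insert]; exact Set.subset_insert m ↑t))
        rw [hf]
        simp only
        rw [if_neg (fun h => hc h.2), if_neg (fun h => hci h.2), add_zero]
  rw [Finset.sum_congr rfl key, Finset.sum_ite_eq' _ (∅ : Finset α) (fun _ => (1:ℤ))]
  simp

lemma chain_top {α : Type*} [PartialOrder α] {s : Finset α}
    (hch : IsChain (· ≤ ·) (↑s : Set α)) (hne : s.Nonempty) : ∃ t ∈ s, ∀ x ∈ s, x ≤ t := by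
  classical
  induction s using Finset.induction with
  | empty => exact absurd hne (by simp)
  | @insert a s ha ih =>
    rcases s.eq_empty_or_nonempty with rfl | hs
    · exact ⟨a, by simp⟩
    · have hch' : IsChain (· ≤ ·) (↑s : Set α) :=
        hch.mono (by rw [Finset.coe_insert]; exact Set.subset_insert a ↑s)
      obtain ⟨t, hts, hmax⟩ := ih hch' hs
      have hat : a ≠ t := fun h => ha (h ▸ hts)
      rcases hch (by simp) (by simp [hts]) hat with h | h
      · exact ⟨t, by simp [hts], fun x hx => by
          rcases Finset.mem_insert.mp hx with rfl | hx
          · exact h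
          · exact hmax x hx⟩
      · exact ⟨a, by simp, fun x hx => by
          rcases Finset.mem_insert.mp hx with rfl | hx
          · exact le_refl x
          · exact le_trans (hmax x hx) h⟩

lemma regroup {β γ : Type*} (s : Finset β) (g : β → γ) (P : γ → Prop) (f : β → ℤ) :
    ∑ A ∈ (s.image g).filter P, ∑ T ∈ s.filter (fun T => g T = A), f T
      = ∑ T ∈ s.filter (fun T => P (g T)), f T := by
  classical
  rw [← Finset.sum_fiberwise_of_maps_to (g := g) (t := (s.image g).filter P)
    (fun T hT => Finset.mem_filter.mpr
      ⟨Finset.mem_image_of_mem g (Finset.filter_subset _ _ hT),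
        (Finset.mem_filter.mp hT).2⟩) f]
  refine Finset.sum_congr rfl fun A hA => ?_
  refine Finset.sum_congr ?_ (fun _ _ => rfl)
  ext T
  simp only [Finset.mem_filter]
  constructor
  · rintro ⟨hTs, hgT⟩
    exact ⟨⟨hTs, hgT ▸ (Finset.mem_filter.mp hA).2⟩, hgT⟩
  · rintro ⟨⟨hTs, _⟩, hgT⟩
    exact ⟨hTs, hgT⟩

lemma posetEulerChar_subtype {α : Type*} [PartialOrder α] [Finite α] (S : Set α)
    (C : Finset α) (hC : ∀ a, a ∈ C ↔ a ∈ S) :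
    posetEulerChar ↥S =
      ∑ s ∈ C.powerset,
        if s.Nonempty ∧ IsChain (· ≤ ·) (↑s : Set α) then (-1 : ℤ) ^ (s.card + 1) else 0 := by
  rw [posetEulerChar]
  letI := Fintype.ofFinite ↥S
  refine Finset.sum_nbij' (fun s => s.map (Function.Embedding.subtype _))
    (fun t => t.subtype (· ∈ S)) ?_ ?_ ?_ ?_ ?_
  · intro s _
    rw [Finset.mem_powerset]
    intro a ha
    rw [Finset.mem_map] at ha
    obtain ⟨x, _, rfl⟩ := ha
    exact (hC _).mpr x.2
  · intro t _
    exact Finset.mem_powerset.mpr (Finset.subset_univ _)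
  · intro s _
    ext x
    simp only [Finset.mem_subtype, Finset.mem_map, Function.Embedding.subtype,
      Function.Embedding.coeFn_mk]
    constructor
    · rintro ⟨y, hy, h⟩; rwa [show y = x from Subtype.ext h] at hy
    · intro h; exact ⟨x, h, rfl⟩
  · intro t ht
    ext a
    simp only [Finset.mem_map, Finset.mem_subtype, Function.Embedding.subtype,
      Function.Embedding.coeFn_mk]
    constructor
    · rintro ⟨x, hx, rfl⟩; exact hx
    · intro h
      exact ⟨⟨a, (hC a).mp (Finset.mem_powerset.mp ht h)⟩, h, rfl⟩
  · intro s _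
    have hcard : (s.map (Function.Embedding.subtype _)).card = s.card := Finset.card_map _
    have hne : (s.map (Function.Embedding.subtype _)).Nonempty ↔ s.Nonempty := by
      simp [Finset.map_nonempty]
    have hch : IsChain (· ≤ ·) (↑s : Set ↥S) ↔
        IsChain (· ≤ ·) (↑(s.map (Function.Embedding.subtype _)) : Set α) := by
      rw [Finset.coe_map]
      constructor
      · intro h x hx y hy hxy
        simp only [Set.mem_image, Finset.mem_coe] at hx hy
        obtain ⟨x', hx', rfl⟩ := hx
        obtain ⟨y', hy', rfl⟩ := hy
        rcases h hx' hy' (fun e => hxy (congrArg _ e)) with h' | h'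
        · exact Or.inl h'
        · exact Or.inr h'
      · intro h x hx y hy hxy
        have := h (Set.mem_image_of_mem _ hx) (Set.mem_image_of_mem _ hy)
          (fun e => hxy (Subtype.ext e))
        exact this
    rw [hcard]
    by_cases h : s.Nonempty ∧ IsChain (· ≤ ·) (↑s : Set ↥S)
    · rw [if_pos h, if_pos ⟨hne.mpr h.1, hch.mp h.2⟩]
    · rw [if_neg h, if_neg (fun h' => h ⟨hne.mp h'.1, hch.mpr h'.2⟩)]

lemma mobius_inversion {Q : Type*} [PartialOrder Q] [Fintype Q] (μ : Q → Q → ℤ)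
    (hμ : IsMobiusOf μ) (top : Q) (htop : ∀ z, z ≤ top) (m : Q → ℤ)
    (hmtop : ∑ z' ∈ Finset.univ.filter (fun z' => top ≤ z'), m z' = -1)
    (hmne : ∀ z, z ≠ top → ∑ z' ∈ Finset.univ.filter (fun z' => z ≤ z'), m z' = 0)
    (x : Q) : m x = -μ x top := by
  have hm : ∀ z, ∑ z' ∈ Finset.univ.filter (fun z' => z ≤ z'), m z'
      = if z = top then -1 else 0 := by
    intro z
    by_cases h : z = top
    · subst h; rw [if_pos rfl]; exact hmtop
    · rw [if_neg h]; exact hmne z h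
  have key : ∀ z' : Q, (∑ z ∈ Finset.univ.filter (fun z => x ≤ z ∧ z ≤ z'), μ x z)
      = if z' = x then 1 else 0 := by
    intro z'
    by_cases hx : z' = x
    · subst hx
      rw [if_pos rfl]
      rw [Finset.sum_eq_single z']
      · exact hμ.1 z'
      · intro b hb hbne
        exact absurd (le_antisymm (Finset.mem_filter.mp hb).2.2 (Finset.mem_filter.mp hb).2.1)
          hbne
      · intro h
        exact absurd (Finset.mem_filter.mpr ⟨Finset.mem_univ _, le_refl _, le_refl _⟩) h
    · rw [if_neg hx]
      by_cases hle : x ≤ z'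
      · have hlt : x < z' := lt_of_le_of_ne hle (Ne.symm hx)
        have h0 := hμ.2 x z' hlt
        have hset : Set.Icc x z' = ↑(Finset.univ.filter (fun z => x ≤ z ∧ z ≤ z')) := by
          ext z; simp [Set.mem_Icc]
        rw [hset, finsum_mem_coe_finset] at h0
        exact h0
      · rw [Finset.sum_eq_zero]
        intro z hz
        exact absurd (le_trans (Finset.mem_filter.mp hz).2.1 (Finset.mem_filter.mp hz).2.2) hle
  have S2 : ∑ z' : Q, ∑ z : Q, (if x ≤ z ∧ z ≤ z' then μ x z * m z' else 0) = m x := by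
    have : ∀ z' : Q, ∑ z : Q, (if x ≤ z ∧ z ≤ z' then μ x z * m z' else 0)
        = (if z' = x then 1 else 0) * m z' := by
      intro z'
      rw [← key z', Finset.sum_filter, Finset.sum_mul]
      refine Finset.sum_congr rfl fun z _ => ?_
      by_cases h : x ≤ z ∧ z ≤ z' <;> simp [h]
    rw [Finset.sum_congr rfl (fun z' _ => this z')]
    rw [Finset.sum_eq_single x]
    · simp
    · intro b _ hb; simp [hb]
    · intro h; exact absurd (Finset.mem_univ x) h
  have S1 : ∑ z : Q, ∑ z' : Q, (if x ≤ z ∧ z ≤ z' then μ x z * m z' else 0) = -μ x top := by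
    have : ∀ z : Q, ∑ z' : Q, (if x ≤ z ∧ z ≤ z' then μ x z * m z' else 0)
        = if z = top then -μ x top else 0 := by
      intro z
      by_cases hxz : x ≤ z
      · have : ∑ z' : Q, (if x ≤ z ∧ z ≤ z' then μ x z * m z' else 0)
            = μ x z * ∑ z' ∈ Finset.univ.filter (fun z' => z ≤ z'), m z' := by
          rw [Finset.sum_filter, Finset.mul_sum]
          refine Finset.sum_congr rfl fun z' _ => ?_
          by_cases h : z ≤ z' <;> simp [h, hxz]
        rw [this, hm z]
        by_cases hz : z = top
        · subst hz; simp
        · simp [hz]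
      · rw [Finset.sum_eq_zero (fun z' _ => by
          rw [if_neg (fun h => hxz h.1)])]
        rw [if_neg]
        intro h; subst h; exact hxz (htop x)
    rw [Finset.sum_congr rfl (fun z _ => this z)]
    rw [Finset.sum_eq_single top]
    · simp
    · intro b _ hb; simp [hb]
    · intro h; exact absurd (Finset.mem_univ top) h
  rw [← S2, Finset.sum_comm, S1]

/-! #### Right cosets -/

variable {G : Type*} [Group G] {p : ℕ}

def rc (H : Subgroup G) (g : G) : Set G := (fun h => h * g) '' (H : Set G)

def tr (g : G) (A : Set G) : Set G := (fun a => a * g) '' A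

def sylowCosets (p : ℕ) (G : Type*) [Group G] : Set (Set G) :=
  {S | ∃ (P : Sylow p G) (x : G), S = rc (P : Subgroup G) x}

lemma mem_rc {H : Subgroup G} {g a : G} : a ∈ rc H g ↔ a * g⁻¹ ∈ H := by
  constructor
  · rintro ⟨h, hh, rfl⟩; simpa using hh
  · intro h; exact ⟨a * g⁻¹, h, by group⟩

lemma self_mem_rc (H : Subgroup G) (g : G) : g ∈ rc H g := by
  rw [mem_rc]; simpa using H.one_mem

lemma rc_nonempty (H : Subgroup G) (g : G) : (rc H g).Nonempty := ⟨g, self_mem_rc H g⟩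

lemma rc_eq_of_mem {H : Subgroup G} {g a : G} (h : a ∈ rc H g) : rc H a = rc H g := by
  rw [mem_rc] at h
  ext x
  rw [mem_rc, mem_rc]
  constructor
  · intro hx
    have := H.mul_mem hx h
    simpa [mul_assoc] using this
  · intro hx
    have := H.mul_mem hx (H.inv_mem h)
    simpa [mul_assoc] using this

lemma rc_subset_rc {H K : Subgroup G} {g : G} : rc H g ⊆ rc K g ↔ H ≤ K := by
  constructor
  · intro h x hx
    have : (x * g) * g⁻¹ ∈ K := mem_rc.mp (h (mem_rc.mpr (by simpa using hx)))
    simpa using this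
  · intro h x hx
    exact mem_rc.mpr (h (mem_rc.mp hx))

lemma rc_inj_subgroup {H K : Subgroup G} {g : G} (h : rc H g = rc K g) : H = K :=
  le_antisymm (rc_subset_rc.mp h.le) (rc_subset_rc.mp h.ge)

lemma rc_eq_rc_iff {H : Subgroup G} {g g' : G} : rc H g = rc H g' ↔ g * g'⁻¹ ∈ H := by
  constructor
  · intro h
    exact mem_rc.mp (h ▸ self_mem_rc H g)
  · intro h
    exact rc_eq_of_mem (mem_rc.mpr h)

lemma card_rc_image [Fintype G] (H : Subgroup G) :
    ((Finset.univ : Finset G).image (fun g => rc H g)).card = H.index := by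
  have hconst : ∀ (a b : G), a⁻¹ * b ∈ H → rc H a⁻¹ = rc H b⁻¹ := by
    intro a b hab
    exact rc_eq_rc_iff.mpr (by simpa using hab)
  have hc : ∀ (a b : G), (QuotientGroup.mk a : G ⧸ H) = QuotientGroup.mk b →
      rc H a⁻¹ = rc H b⁻¹ := fun a b h => hconst a b (QuotientGroup.eq.mp h)
  let F : G ⧸ H → Set G := Quotient.lift (fun g => rc H g⁻¹) (fun a b h => hc a b (Quotient.sound h))
  have himg : (Finset.univ : Finset G).image (fun g => rc H g)
      = (Finset.univ : Finset (G ⧸ H)).image F := by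
    ext A
    simp only [Finset.mem_image, Finset.mem_univ, true_and]
    constructor
    · rintro ⟨g, rfl⟩
      exact ⟨QuotientGroup.mk g⁻¹, by simp [F]⟩
    · rintro ⟨q, rfl⟩
      obtain ⟨g, rfl⟩ := QuotientGroup.mk_surjective q
      exact ⟨g⁻¹, by simp [F]⟩
  rw [himg, Finset.card_image_of_injective _ ?_, Finset.card_univ, ← Nat.card_eq_fintype_card,
    ← Subgroup.index_eq_card]
  intro q1 q2 h
  obtain ⟨a, rfl⟩ := QuotientGroup.mk_surjective q1
  obtain ⟨b, rfl⟩ := QuotientGroup.mk_surjective q2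
  have : rc H a⁻¹ = rc H b⁻¹ := h
  rw [rc_eq_rc_iff] at this
  exact QuotientGroup.eq.mpr (by simpa using this)

/-! #### Translation -/

lemma tr_rc (g : G) (H : Subgroup G) (x : G) : tr g (rc H x) = rc H (x * g) := by
  unfold tr rc
  rw [Set.image_image]
  simp [mul_assoc]

lemma tr_bijective (g : G) : Function.Bijective (tr g : Set G → Set G) := by
  have : (tr g : Set G → Set G) = Set.image (Equiv.mulRight g) := rfl
  rw [this]
  exact (Equiv.Set.congr (Equiv.mulRight g)).bijective

lemma tr_tr (g : G) (A : Set G) : tr g⁻¹ (tr g A) = A := by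
  unfold tr
  rw [Set.image_image]
  simp

lemma tr_sInter (g : G) (T : Finset (Set G)) :
    ⋂₀ (↑(T.image (tr g)) : Set (Set G)) = tr g (⋂₀ (↑T : Set (Set G))) := by
  rw [Finset.coe_image, Set.sInter_image]
  ext a
  simp only [Set.mem_iInter, tr, Set.mem_image, Set.mem_sInter, Finset.mem_coe]
  constructor
  · intro h
    refine ⟨a * g⁻¹, fun t ht => ?_, by simp⟩
    obtain ⟨b, hb, hba⟩ := h t ht
    have : b = a * g⁻¹ := by rw [← hba]; group
    rwa [← this]
  · rintro ⟨b, hb, rfl⟩ t ht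
    exact ⟨b, hb t ht, rfl⟩

/-! #### Sylow intersections -/

lemma mem_rc_biInf {S : Set (Sylow p G)} {g a : G} :
    a ∈ rc (⨅ P ∈ S, (P : Subgroup G)) g ↔ ∀ P ∈ S, a ∈ rc (P : Subgroup G) g := by
  rw [mem_rc]
  simp only [Subgroup.mem_iInf]
  constructor
  · intro h P hP; exact mem_rc.mpr (h P hP)
  · intro h P hP; exact mem_rc.mp (h P hP)

lemma sylI_le_sylow {K : Subgroup G} (hK : K ∈ sylowIntersections p G) :
    ∃ P : Sylow p G, K ≤ (P : Subgroup G) := by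
  obtain ⟨S, ⟨P, hP⟩, rfl⟩ := hK
  exact ⟨P, biInf_le _ hP⟩

lemma sylI_isPGroup {K : Subgroup G} (hK : K ∈ sylowIntersections p G) : IsPGroup p K := by
  obtain ⟨P, hle⟩ := sylI_le_sylow hK
  exact P.isPGroup'.to_le hle

lemma sInter_eq_rc {T : Finset (Set G)} (hT : ∀ C ∈ T, C ∈ sylowCosets p G)
    (hTne : T.Nonempty) {g : G} (hg : g ∈ ⋂₀ (↑T : Set (Set G))) :
    ∃ K ∈ sylowIntersections p G, ⋂₀ (↑T : Set (Set G)) = rc K g := by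
  have hT' : ∀ C ∈ T, ∃ P : Sylow p G, C = rc (P : Subgroup G) g := by
    intro C hC
    obtain ⟨P, x, rfl⟩ := hT C hC
    exact ⟨P, (rc_eq_of_mem (Set.mem_sInter.mp hg _ hC)).symm⟩
  set S : Set (Sylow p G) := {P | rc (P : Subgroup G) g ∈ T} with hS
  have hSne : S.Nonempty := by
    obtain ⟨C, hC⟩ := hTne
    obtain ⟨P, rfl⟩ := hT' C hC
    exact ⟨P, hC⟩
  refine ⟨⨅ P ∈ S, (P : Subgroup G), ⟨S, hSne, rfl⟩, ?_⟩
  ext a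
  rw [Set.mem_sInter, mem_rc_biInf]
  constructor
  · intro h P hP
    exact h _ hP
  · intro h C hC
    obtain ⟨P, rfl⟩ := hT' C hC
    exact h P hC

lemma rc_sylI_eq_sInter [Finite G] {K : Subgroup G} (hK : K ∈ sylowIntersections p G) (g : G) :
    ∃ T : Finset (Set G), (∀ C ∈ T, C ∈ sylowCosets p G) ∧ T.Nonempty ∧
      ⋂₀ (↑T : Set (Set G)) = rc K g := by
  classical
  haveI : Finite (Subgroup G) := Finite.of_injective (fun H : Subgroup G => (H : Set G))
    SetLike.coe_injective
  haveI : Finite (Sylow p G) := Finite.of_injective (fun P : Sylow p G => (P : Subgroup G))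
    (fun a b h => Sylow.ext h)
  obtain ⟨S, hSne, rfl⟩ := hK
  have hfin : {C : Set G | ∃ P ∈ S, C = rc (P : Subgroup G) g}.Finite := by
    have : {C : Set G | ∃ P ∈ S, C = rc (P : Subgroup G) g}
        ⊆ Set.range (fun P : Sylow p G => rc (P : Subgroup G) g) := by
      rintro C ⟨P, _, rfl⟩; exact ⟨P, rfl⟩
    exact (Set.finite_range _).subset this
  refine ⟨hfin.toFinset, ?_, ?_, ?_⟩
  · intro C hC
    rw [Set.Finite.mem_toFinset] at hC
    obtain ⟨P, _, rfl⟩ := hC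
    exact ⟨P, g, rfl⟩
  · obtain ⟨P, hP⟩ := hSne
    exact ⟨rc (P : Subgroup G) g, Set.Finite.mem_toFinset _ |>.mpr ⟨P, hP, rfl⟩⟩
  · ext a
    rw [Set.mem_sInter, mem_rc_biInf]
    constructor
    · intro h P hP
      exact h _ (Set.Finite.mem_toFinset _ |>.mpr ⟨P, hP, rfl⟩)
    · intro h C hC
      simp only [Finset.mem_coe, Set.Finite.mem_toFinset] at hC
      obtain ⟨P, hP, rfl⟩ := hC
      exact h P hP

end BrownAux

/-! #### Finset versions -/

noncomputable def BrownAux.Cfin (p : ℕ) (G : Type*) [Group G] [Finite G] : Finset (Set G) :=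
  (Set.toFinite (pCosets p G)).toFinset
noncomputable def BrownAux.Mfin (p : ℕ) (G : Type*) [Group G] [Finite G] : Finset (Set G) :=
  (Set.toFinite (BrownAux.sylowCosets p G)).toFinset
noncomputable def BrownAux.UFfin (p : ℕ) (G : Type*) [Group G] [Finite G] :
    Finset (Finset (Set G)) :=
  (BrownAux.Mfin p G).powerset.filter
    (fun T => T.Nonempty ∧ (⋂₀ (↑T : Set (Set G))).Nonempty)
noncomputable def BrownAux.sylIFfin (p : ℕ) (G : Type*) [Group G] [Finite G] :
    Finset (Subgroup G) :=
  haveI : Finite (Subgroup G) := Finite.of_injective (fun H : Subgroup G => (H : Set G))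
    SetLike.coe_injective
  (Set.toFinite (sylowIntersections p G)).toFinset
noncomputable def BrownAux.cntK (p : ℕ) (G : Type*) [Group G] [Finite G] (K : Subgroup G) : ℤ :=
  ∑ T ∈ (BrownAux.UFfin p G).filter
      (fun (T : Finset (Set G)) => ⋂₀ (↑T : Set (Set G)) = BrownAux.rc K 1),
    (-1 : ℤ) ^ (T.card + 1)

namespace BrownAux

variable {G : Type*} [Group G] {p : ℕ} [Finite G]

lemma mem_sylIFfin {K : Subgroup G} :
    K ∈ sylIFfin p G ↔ K ∈ sylowIntersections p G := by
  rw [sylIFfin, Set.Finite.mem_toFinset]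

lemma mem_Mfin {A : Set G} : A ∈ Mfin p G ↔ ∃ (P : Sylow p G) (x : G), A = rc ↑P x := by
  rw [Mfin, Set.Finite.mem_toFinset]; rfl

lemma mem_UFfin {T : Finset (Set G)} :
    T ∈ UFfin p G ↔ (∀ C ∈ T, C ∈ sylowCosets p G) ∧ T.Nonempty ∧
      (⋂₀ (↑T : Set (Set G))).Nonempty := by
  rw [UFfin, Finset.mem_filter, Finset.mem_powerset]
  constructor
  · rintro ⟨h1, h2, h3⟩
    exact ⟨fun C hC => mem_Mfin.mp (h1 hC), h2, h3⟩
  · rintro ⟨h1, h2, h3⟩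
    exact ⟨fun C hC => mem_Mfin.mpr (h1 C hC), h2, h3⟩

lemma main1 :
    ∑ s ∈ (Cfin p G).powerset,
      (if s.Nonempty ∧ IsChain (· ≤ ·) (↑s : Set (Set G)) then (-1 : ℤ) ^ (s.card + 1) else 0)
    = ∑ T ∈ UFfin p G, (-1 : ℤ) ^ (T.card + 1) := by
  classical
  have hsummand : ∀ s ∈ (Cfin p G).powerset,
      (if s.Nonempty ∧ IsChain (· ≤ ·) (↑s : Set (Set G)) then (-1 : ℤ) ^ (s.card + 1) else 0)
      = ∑ T ∈ (Mfin p G).powerset,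
          (if (s.Nonempty ∧ IsChain (· ≤ ·) (↑s : Set (Set G))) ∧ T.Nonempty ∧
              (∀ x ∈ s, ∀ D ∈ T, x ≤ D)
            then (-1 : ℤ) ^ (s.card + 1) * (-1 : ℤ) ^ (T.card + 1) else 0) := by
    intro s hs
    by_cases hcs : s.Nonempty ∧ IsChain (· ≤ ·) (↑s : Set (Set G))
    · rw [if_pos hcs]
      set Ms : Finset (Set G) := (Mfin p G).filter (fun D => ∀ x ∈ s, x ≤ D) with hMs
      have hMsne : Ms.Nonempty := by
        obtain ⟨t, hts, htmax⟩ := chain_top hcs.2 hcs.1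
        have htC : t ∈ pCosets p G := by
          have := Finset.mem_powerset.mp hs hts
          rwa [Cfin, Set.Finite.mem_toFinset] at this
        obtain ⟨H, x, hH, rfl⟩ := htC
        obtain ⟨P, hP⟩ := hH.exists_le_sylow
        refine ⟨rc (P : Subgroup G) x, Finset.mem_filter.mpr ⟨?_, ?_⟩⟩
        · rw [Mfin, Set.Finite.mem_toFinset]; exact ⟨P, x, rfl⟩
        · intro y hy
          exact le_trans (htmax y hy) (rc_subset_rc.mpr hP)
      have hsub : Ms.powerset ⊆ (Mfin p G).powerset := by
        intro T hT
        exact Finset.mem_powerset.mpr ((Finset.mem_powerset.mp hT).trans (Finset.filter_subset _ _))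
      rw [← Finset.sum_subset hsub ?zero]
      case zero =>
        intro T hTM hTMs
        rw [if_neg]
        rintro ⟨-, -, hall⟩
        refine hTMs (Finset.mem_powerset.mpr fun D hD => Finset.mem_filter.mpr
          ⟨Finset.mem_powerset.mp hTM hD, fun x hx => hall x hx D hD⟩)
      have : ∀ T ∈ Ms.powerset,
          (if (s.Nonempty ∧ IsChain (· ≤ ·) (↑s : Set (Set G))) ∧ T.Nonempty ∧
              (∀ x ∈ s, ∀ D ∈ T, x ≤ D)
            then (-1 : ℤ) ^ (s.card + 1) * (-1 : ℤ) ^ (T.card + 1) else 0)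
          = (-1 : ℤ) ^ (s.card + 1) * (if T.Nonempty then (-1 : ℤ) ^ (T.card + 1) else 0) := by
        intro T hT
        by_cases hTne : T.Nonempty
        · rw [if_pos ⟨hcs, hTne, fun x hx D hD =>
            (Finset.mem_filter.mp (Finset.mem_powerset.mp hT hD)).2 x hx⟩, if_pos hTne]
        · rw [if_neg (fun h => hTne h.2.1), if_neg hTne, mul_zero]
      rw [Finset.sum_congr rfl this, ← Finset.mul_sum, alt_powerset_sum hMsne, mul_one]
    · rw [if_neg hcs]
      rw [Finset.sum_eq_zero]
      intro T _
      rw [if_neg (fun h => hcs h.1)]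
  rw [Finset.sum_congr rfl hsummand, Finset.sum_comm]
  have hinner : ∀ T ∈ (Mfin p G).powerset,
      (∑ s ∈ (Cfin p G).powerset,
        (if (s.Nonempty ∧ IsChain (· ≤ ·) (↑s : Set (Set G))) ∧ T.Nonempty ∧
            (∀ x ∈ s, ∀ D ∈ T, x ≤ D)
          then (-1 : ℤ) ^ (s.card + 1) * (-1 : ℤ) ^ (T.card + 1) else 0))
      = (if T.Nonempty ∧ (⋂₀ (↑T : Set (Set G))).Nonempty then (-1 : ℤ) ^ (T.card + 1) else 0) := by
    intro T hTM
    by_cases hTne : T.Nonempty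
    · set DT : Finset (Set G) := (Cfin p G).filter (fun x => ∀ D ∈ T, x ≤ D) with hDT
      have hsub : DT.powerset ⊆ (Cfin p G).powerset := by
        intro sT h
        exact Finset.mem_powerset.mpr ((Finset.mem_powerset.mp h).trans (Finset.filter_subset _ _))
      rw [← Finset.sum_subset hsub ?zero2]
      case zero2 =>
        intro sT hsC hsD
        rw [if_neg]
        rintro ⟨hcs, -, hall⟩
        exact hsD (Finset.mem_powerset.mpr fun x hx => Finset.mem_filter.mpr
          ⟨Finset.mem_powerset.mp hsC hx, fun D hD => hall x hx D hD⟩)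
      have hcongr : ∀ s ∈ DT.powerset,
          (if (s.Nonempty ∧ IsChain (· ≤ ·) (↑s : Set (Set G))) ∧ T.Nonempty ∧
              (∀ x ∈ s, ∀ D ∈ T, x ≤ D)
            then (-1 : ℤ) ^ (s.card + 1) * (-1 : ℤ) ^ (T.card + 1) else 0)
          = (if s.Nonempty ∧ IsChain (· ≤ ·) (↑s : Set (Set G))
              then (-1 : ℤ) ^ (s.card + 1) else 0) * (-1 : ℤ) ^ (T.card + 1) := by
        intro s hsD
        by_cases hcs : s.Nonempty ∧ IsChain (· ≤ ·) (↑s : Set (Set G))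
        · rw [if_pos ⟨hcs, hTne, fun x hx =>
            (Finset.mem_filter.mp (Finset.mem_powerset.mp hsD hx)).2⟩, if_pos hcs]
        · rw [if_neg (fun h => hcs h.1), if_neg hcs, zero_mul]
      rw [Finset.sum_congr rfl hcongr, ← Finset.sum_mul]
      by_cases hI : (⋂₀ (↑T : Set (Set G))).Nonempty
      · rw [if_pos ⟨hTne, hI⟩]
        obtain ⟨g, hg⟩ := hI
        have hTsyl : ∀ C ∈ T, C ∈ sylowCosets p G := by
          intro C hC
          have := Finset.mem_powerset.mp hTM hC
          rwa [Mfin, Set.Finite.mem_toFinset] at this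
        obtain ⟨K, hKI, hKT⟩ := sInter_eq_rc hTsyl hTne hg
        have hmDT : rc K g ∈ DT := by
          rw [hDT, Finset.mem_filter]
          refine ⟨?_, ?_⟩
          · rw [Cfin, Set.Finite.mem_toFinset]
            exact ⟨K, g, sylI_isPGroup hKI, rfl⟩
          · intro D hD
            rw [← hKT]
            exact Set.sInter_subset_of_mem hD
        have hmax : ∀ x ∈ DT, x ≤ rc K g := by
          intro x hx
          rw [← hKT]
          exact Set.subset_sInter fun D hD => (Finset.mem_filter.mp hx).2 D hD
        rw [cone_chain_sum hmDT hmax, one_mul]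
      · rw [if_neg (fun h => hI h.2)]
        have hDTempty : DT = ∅ := by
          rw [Finset.eq_empty_iff_forall_notMem]
          intro x hx
          have hxC : x ∈ pCosets p G := by
            have := (Finset.mem_filter.mp hx).1
            rwa [Cfin, Set.Finite.mem_toFinset] at this
          obtain ⟨H, y, hH, rfl⟩ := hxC
          refine hI ⟨y, Set.mem_sInter.mpr fun D hD => ?_⟩
          exact (Finset.mem_filter.mp hx).2 D hD (self_mem_rc H y)
        rw [hDTempty]
        simp
    · rw [Finset.sum_eq_zero (fun s _ => by rw [if_neg (fun h => hTne h.2.1)]),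
        if_neg (fun h => hTne h.1)]
  rw [Finset.sum_congr rfl hinner, UFfin, Finset.sum_filter]

lemma cnt_translate (K : Subgroup G) (g : G) :
    ∑ T ∈ (UFfin p G).filter (fun (T : Finset (Set G)) => ⋂₀ (↑T : Set (Set G)) = rc K g),
      (-1 : ℤ) ^ (T.card + 1) = cntK p G K := by
  classical
  rw [cntK]
  have tr_tr' : ∀ (h : G) (A : Set G), tr h (tr h⁻¹ A) = A := by
    intro h A
    have := tr_tr h⁻¹ A
    rwa [inv_inv] at this
  have himg : ∀ (h : G) (T : Finset (Set G)), (T.image (tr h⁻¹)).image (tr h) = T := by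
    intro h T
    rw [Finset.image_image]
    have : ∀ A ∈ T, (tr h ∘ tr h⁻¹) A = id A := fun A _ => tr_tr' h A
    rw [Finset.image_congr this, Finset.image_id]
  have himg' : ∀ (h : G) (T : Finset (Set G)), (T.image (tr h)).image (tr h⁻¹) = T := by
    intro h T
    rw [Finset.image_image]
    have : ∀ A ∈ T, (tr h⁻¹ ∘ tr h) A = id A := fun A _ => tr_tr h A
    rw [Finset.image_congr this, Finset.image_id]
  have hmem : ∀ (x : G) (T : Finset (Set G)), T ∈ UFfin p G → T.image (tr x) ∈ UFfin p G := by
    intro x T hT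
    rw [mem_UFfin] at hT ⊢
    refine ⟨?_, hT.2.1.image _, ?_⟩
    · intro C hC
      rw [Finset.mem_image] at hC
      obtain ⟨D, hD, rfl⟩ := hC
      obtain ⟨P, y, rfl⟩ := hT.1 D hD
      exact ⟨P, y * x, tr_rc x ↑P y⟩
    · rw [tr_sInter]
      obtain ⟨a, ha⟩ := hT.2.2
      exact ⟨a * x, ⟨a, ha, rfl⟩⟩
  refine Finset.sum_nbij' (fun T => T.image (tr g⁻¹)) (fun T => T.image (tr g)) ?_ ?_ ?_ ?_ ?_
  · intro T hT
    rw [Finset.mem_filter] at hT ⊢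
    refine ⟨hmem g⁻¹ T hT.1, ?_⟩
    rw [tr_sInter, hT.2, tr_rc]
    simp
  · intro T hT
    rw [Finset.mem_filter] at hT ⊢
    refine ⟨hmem g T hT.1, ?_⟩
    rw [tr_sInter, hT.2, tr_rc]
    simp
  · intro T _; exact himg g T
  · intro T _; exact himg' g T
  · intro T _
    rw [Finset.card_image_of_injective _ (tr_bijective g⁻¹).injective]

lemma mem_J {A : Set G} :
    A ∈ (UFfin p G).image (fun (T : Finset (Set G)) => ⋂₀ (↑T : Set (Set G)))
      ↔ ∃ K ∈ sylowIntersections p G, ∃ g : G, A = rc K g := by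
  constructor
  · intro hA
    obtain ⟨T, hT, rfl⟩ := Finset.mem_image.mp hA
    rw [mem_UFfin] at hT
    obtain ⟨g, hg⟩ := hT.2.2
    obtain ⟨K, hK, hEq⟩ := sInter_eq_rc hT.1 hT.2.1 hg
    exact ⟨K, hK, g, hEq⟩
  · rintro ⟨K, hK, g, rfl⟩
    obtain ⟨T, hT1, hT2, hT3⟩ := rc_sylI_eq_sInter hK g
    exact Finset.mem_image.mpr ⟨T, mem_UFfin.mpr ⟨hT1, hT2, hT3 ▸ (rc_nonempty K g)⟩, hT3⟩

lemma main3 {K : Subgroup G} (hK : K ∈ sylowIntersections p G) :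
    ∑ K' ∈ (sylIFfin p G).filter (fun K' => K ≤ K'), cntK p G K' = 1 := by
  classical
  have step1 : ∑ K' ∈ (sylIFfin p G).filter (fun K' => K ≤ K'), cntK p G K'
      = ∑ A ∈ ((UFfin p G).image (fun (T : Finset (Set G)) =>
            ⋂₀ (↑T : Set (Set G)))).filter (fun A => rc K 1 ⊆ A),
          ∑ T ∈ (UFfin p G).filter (fun (T : Finset (Set G)) => ⋂₀ (↑T : Set (Set G)) = A),
            (-1 : ℤ) ^ (T.card + 1) := by
    refine Finset.sum_bij (fun K' _ => rc K' 1) ?_ ?_ ?_ ?_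
    · intro K' hK'
      rw [Finset.mem_filter] at hK'
      refine Finset.mem_filter.mpr ⟨mem_J.mpr ⟨K', mem_sylIFfin.mp hK'.1, 1, rfl⟩, ?_⟩
      exact rc_subset_rc.mpr hK'.2
    · intro K1 _ K2 _ h
      exact rc_inj_subgroup h
    · intro A hA
      rw [Finset.mem_filter] at hA
      obtain ⟨K0, hK0, g, rfl⟩ := mem_J.mp hA.1
      have h1 : (1 : G) ∈ rc K0 g := hA.2 (self_mem_rc K 1)
      have : rc K0 1 = rc K0 g := rc_eq_of_mem h1
      refine ⟨K0, Finset.mem_filter.mpr ⟨mem_sylIFfin.mpr hK0, ?_⟩, this⟩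
      exact rc_subset_rc.mp (this ▸ hA.2)
    · intro K' _
      rw [cntK]
  have hrg : ∑ A ∈ ((UFfin p G).image (fun (T : Finset (Set G)) =>
              ⋂₀ (↑T : Set (Set G)))).filter (fun A => rc K 1 ⊆ A),
            ∑ T ∈ (UFfin p G).filter (fun (T : Finset (Set G)) => ⋂₀ (↑T : Set (Set G)) = A),
              (-1 : ℤ) ^ (T.card + 1)
        = ∑ T ∈ (UFfin p G).filter
            (fun (T : Finset (Set G)) => rc K 1 ⊆ ⋂₀ (↑T : Set (Set G))),
              (-1 : ℤ) ^ (T.card + 1) := by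
    convert regroup (UFfin p G) (fun (T : Finset (Set G)) => ⋂₀ (↑T : Set (Set G)))
      (fun A => rc K 1 ⊆ A) (fun T => (-1 : ℤ) ^ (T.card + 1))
  rw [step1, hrg]
  set Mf : Finset (Set G) := (Mfin p G).filter (fun D => rc K 1 ⊆ D) with hMf
  have hset : (UFfin p G).filter
        (fun (T : Finset (Set G)) => rc K 1 ⊆ ⋂₀ (↑T : Set (Set G)))
      = Mf.powerset.filter (fun T => T.Nonempty) := by
    ext T
    rw [Finset.mem_filter, mem_UFfin, Finset.mem_filter, Finset.mem_powerset]
    constructor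
    · rintro ⟨⟨h1, h2, h3⟩, h4⟩
      refine ⟨fun D hD => Finset.mem_filter.mpr ⟨mem_Mfin.mpr (h1 D hD), ?_⟩, h2⟩
      exact h4.trans (Set.sInter_subset_of_mem hD)
    · rintro ⟨h1, h2⟩
      have hsub : rc K 1 ⊆ ⋂₀ (↑T : Set (Set G)) :=
        Set.subset_sInter fun D hD => (Finset.mem_filter.mp (h1 hD)).2
      refine ⟨⟨fun D hD => mem_Mfin.mp (Finset.mem_filter.mp (h1 hD)).1, h2, ?_⟩, hsub⟩
      exact ⟨1, hsub (self_mem_rc K 1)⟩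
  rw [hset, Finset.sum_filter]
  apply alt_powerset_sum
  obtain ⟨P, hP⟩ := sylI_le_sylow hK
  exact ⟨rc ↑P 1, Finset.mem_filter.mpr ⟨mem_Mfin.mpr ⟨P, 1, rfl⟩, rc_subset_rc.mpr hP⟩⟩

lemma main2 [Fintype G] :
    ∑ T ∈ UFfin p G, (-1 : ℤ) ^ (T.card + 1)
      = ∑ K ∈ sylIFfin p G, (K.index : ℤ) * cntK p G K := by
  classical
  set J := (UFfin p G).image (fun (T : Finset (Set G)) => ⋂₀ (↑T : Set (Set G))) with hJdef
  have step1 : ∑ T ∈ UFfin p G, (-1 : ℤ) ^ (T.card + 1)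
      = ∑ A ∈ J, ∑ T ∈ (UFfin p G).filter
          (fun (T : Finset (Set G)) => ⋂₀ (↑T : Set (Set G)) = A),
          (-1 : ℤ) ^ (T.card + 1) :=
    (Finset.sum_fiberwise_of_maps_to (fun T hT => Finset.mem_image_of_mem _ hT) _).symm
  have hJ : J = (sylIFfin p G).biUnion
      (fun K => (Finset.univ : Finset G).image (fun g => rc K g)) := by
    ext A
    rw [Finset.mem_biUnion, hJdef, mem_J]
    constructor
    · rintro ⟨K, hK, g, rfl⟩
      exact ⟨K, mem_sylIFfin.mpr hK, Finset.mem_image.mpr ⟨g, Finset.mem_univ g, rfl⟩⟩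
    · rintro ⟨K, hK, hA⟩
      obtain ⟨g, _, rfl⟩ := Finset.mem_image.mp hA
      exact ⟨K, mem_sylIFfin.mp hK, g, rfl⟩
  have hdisj : ∀ K1 ∈ sylIFfin p G, ∀ K2 ∈ sylIFfin p G, K1 ≠ K2 →
      Disjoint ((Finset.univ : Finset G).image (fun g => rc K1 g))
        ((Finset.univ : Finset G).image (fun g => rc K2 g)) := by
    intro K1 _ K2 _ hne
    rw [Finset.disjoint_left]
    rintro A hA1 hA2
    obtain ⟨g1, _, rfl⟩ := Finset.mem_image.mp hA1
    obtain ⟨g2, _, h⟩ := Finset.mem_image.mp hA2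
    have hg : g1 ∈ rc K2 g2 := h ▸ self_mem_rc K1 g1
    have : rc K2 g1 = rc K2 g2 := rc_eq_of_mem hg
    exact hne (rc_inj_subgroup (h.symm.trans this.symm))
  rw [step1, hJ, Finset.sum_biUnion hdisj]
  refine Finset.sum_congr rfl fun K hK => ?_
  have hconst : ∀ A ∈ (Finset.univ : Finset G).image (fun g => rc K g),
      (∑ T ∈ (UFfin p G).filter (fun (T : Finset (Set G)) => ⋂₀ (↑T : Set (Set G)) = A),
        (-1 : ℤ) ^ (T.card + 1)) = cntK p G K := by
    intro A hA
    obtain ⟨g, _, rfl⟩ := Finset.mem_image.mp hA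
    exact cnt_translate K g
  rw [Finset.sum_congr rfl hconst, Finset.sum_const, card_rc_image, nsmul_eq_mul]

end BrownAux

/-- If `G` is not a `p`-group, then `χ(C_p(G)) = -Σ_{H ∈ I_p(G)} μ(H,G)·[G:H]`, where `μ` is
the Möbius function of the poset `I_p(G) ∪ {G}` ordered by inclusion. -/
theorem euler_char_pCosets_eq_neg_sum_mobius_sylowIntersections {G : Type*} [Group G]
    [Fintype G] {p : ℕ} (hp : p.Prime) (hG : ¬ IsPGroup p G)
    (μ : {H : Subgroup G // H ∈ sylowIntersections p G ∨ H = ⊤} →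
         {H : Subgroup G // H ∈ sylowIntersections p G ∨ H = ⊤} → ℤ)
    (hμ : IsMobiusOf μ) :
    posetEulerChar ↥(pCosets p G) =
      -∑ᶠ (H : {H : Subgroup G // H ∈ sylowIntersections p G ∨ H = ⊤})
          (_ : H.val ∈ sylowIntersections p G),
        μ H ⟨⊤, Or.inr rfl⟩ * (H.val.index : ℤ) := by
  classical
  haveI : Finite (Subgroup G) := Finite.of_injective (fun H : Subgroup G => (H : Set G))
    SetLike.coe_injective
  haveI : Fintype {H : Subgroup G // H ∈ sylowIntersections p G ∨ H = ⊤} := Fintype.ofFinite _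
  set topQ : {H : Subgroup G // H ∈ sylowIntersections p G ∨ H = ⊤} := ⟨⊤, Or.inr rfl⟩ with htopQ
  have htopI : (⊤ : Subgroup G) ∉ sylowIntersections p G := by
    intro h
    exact hG ((BrownAux.sylI_isPGroup h).of_equiv Subgroup.topEquiv)
  set m : {H : Subgroup G // H ∈ sylowIntersections p G ∨ H = ⊤} → ℤ :=
    fun z => if z.val ∈ sylowIntersections p G then BrownAux.cntK p G z.val else -1 with hmdef
  have hval_mem : ∀ z : {H : Subgroup G // H ∈ sylowIntersections p G ∨ H = ⊤},
      z ≠ topQ → z.val ∈ sylowIntersections p G := by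
    intro z hz
    rcases z.2 with h | h
    · exact h
    · exact absurd (Subtype.ext h) hz
  have hm : ∀ z, ∑ z' ∈ Finset.univ.filter (fun z' => z ≤ z'), m z'
      = if z = topQ then -1 else 0 := by
    intro z
    by_cases hz : z = topQ
    · subst hz
      have hfil : Finset.univ.filter (fun z' => topQ ≤ z') = {topQ} := by
        ext z'
        simp only [Finset.mem_filter, Finset.mem_univ, true_and, Finset.mem_singleton]
        constructor
        · intro h
          exact (Subtype.ext (le_antisymm le_top (Subtype.coe_le_coe.mpr h))).symm.symm
        · rintro rfl; exact le_refl _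
      rw [hfil, Finset.sum_singleton, if_pos rfl, hmdef]
      simp only
      rw [if_neg htopI]
    · rw [if_neg hz]
      have hzI : z.val ∈ sylowIntersections p G := hval_mem z hz
      have hsplit : Finset.univ.filter (fun z' => z ≤ z')
          = insert topQ (Finset.univ.filter
              (fun z' => z ≤ z' ∧ z' ≠ topQ)) := by
        ext z'
        simp only [Finset.mem_filter, Finset.mem_univ, true_and, Finset.mem_insert]
        constructor
        · intro h
          by_cases hz' : z' = topQ
          · exact Or.inl hz'
          · exact Or.inr ⟨h, hz'⟩
        · rintro (rfl | ⟨h, _⟩)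
          · exact Subtype.coe_le_coe.mp (le_top : z.val ≤ (topQ).val)
          · exact h
      have htopnot : topQ ∉ Finset.univ.filter
          (fun z' => z ≤ z' ∧ z' ≠ topQ) := by
        simp
      rw [hsplit, Finset.sum_insert htopnot]
      have hmt : m topQ = -1 := by rw [hmdef]; simp only; rw [if_neg htopI]
      have hrest : ∑ z' ∈ Finset.univ.filter (fun z' => z ≤ z' ∧ z' ≠ topQ), m z'
          = ∑ K' ∈ (BrownAux.sylIFfin p G).filter (fun K' => z.val ≤ K'),
              BrownAux.cntK p G K' := by
        refine Finset.sum_bij (fun z' _ => z'.val) ?_ ?_ ?_ ?_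
        · intro z' hz'
          rw [Finset.mem_filter] at hz'
          exact Finset.mem_filter.mpr ⟨BrownAux.mem_sylIFfin.mpr (hval_mem z' hz'.2.2),
            Subtype.coe_le_coe.mpr hz'.2.1⟩
        · intro z1 _ z2 _ h
          exact Subtype.ext h
        · intro K' hK'
          rw [Finset.mem_filter] at hK'
          have hK'I := BrownAux.mem_sylIFfin.mp hK'.1
          refine ⟨⟨K', Or.inl hK'I⟩, Finset.mem_filter.mpr
            ⟨Finset.mem_univ _, Subtype.coe_le_coe.mp hK'.2, ?_⟩, rfl⟩
          intro h
          have h2 : K' = ⊤ := congrArg Subtype.val h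
          exact htopI (h2 ▸ hK'I)
        · intro z' hz'
          rw [Finset.mem_filter] at hz'
          rw [hmdef]
          simp only
          rw [if_pos (hval_mem z' hz'.2.2)]
      rw [hrest, BrownAux.main3 hzI, hmt]
      ring
  have hmob := BrownAux.mobius_inversion μ hμ topQ
    (fun z => Subtype.coe_le_coe.mp (le_top : z.val ≤ (topQ).val)) m
    (by have := hm topQ; rwa [if_pos rfl] at this)
    (fun z hz => by have := hm z; rwa [if_neg hz] at this)
  -- LHS
  have hLHS : posetEulerChar ↥(pCosets p G)
      = ∑ K ∈ BrownAux.sylIFfin p G, (K.index : ℤ) * BrownAux.cntK p G K := by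
    rw [BrownAux.posetEulerChar_subtype (pCosets p G) (BrownAux.Cfin p G)
      (fun a => Set.Finite.mem_toFinset _), BrownAux.main1, BrownAux.main2]
  -- convert LHS sum to sum over the subtype
  have hconv : ∑ K ∈ BrownAux.sylIFfin p G, (K.index : ℤ) * BrownAux.cntK p G K
      = ∑ z ∈ Finset.univ.filter
          (fun z : {H : Subgroup G // H ∈ sylowIntersections p G ∨ H = ⊤} =>
            z.val ∈ sylowIntersections p G),
          (z.val.index : ℤ) * BrownAux.cntK p G z.val := by
    refine (Finset.sum_bij (fun z _ => z.val) ?_ ?_ ?_ ?_).symm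
    · intro z hz
      exact BrownAux.mem_sylIFfin.mpr (Finset.mem_filter.mp hz).2
    · intro z1 _ z2 _ h
      exact Subtype.ext h
    · intro K hK
      have hKI := BrownAux.mem_sylIFfin.mp hK
      exact ⟨⟨K, Or.inl hKI⟩, Finset.mem_filter.mpr ⟨Finset.mem_univ _, hKI⟩, rfl⟩
    · intro z _
      rfl
  -- compute RHS
  have hRHS : (∑ᶠ (H : {H : Subgroup G // H ∈ sylowIntersections p G ∨ H = ⊤})
        (_ : H.val ∈ sylowIntersections p G), μ H topQ * (H.val.index : ℤ))
      = ∑ z ∈ Finset.univ.filter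
          (fun z : {H : Subgroup G // H ∈ sylowIntersections p G ∨ H = ⊤} =>
            z.val ∈ sylowIntersections p G),
          μ z topQ * (z.val.index : ℤ) := by
    have h1 : ∀ H : {H : Subgroup G // H ∈ sylowIntersections p G ∨ H = ⊤},
        (∑ᶠ (_ : H.val ∈ sylowIntersections p G), μ H topQ * (H.val.index : ℤ))
        = if H.val ∈ sylowIntersections p G then μ H topQ * (H.val.index : ℤ) else 0 :=
      fun H => finsum_eq_if
    rw [finsum_congr h1, finsum_eq_sum_of_fintype, Finset.sum_filter]
  rw [hLHS, hconv, hRHS]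
  rw [← Finset.sum_neg_distrib]
  refine Finset.sum_congr rfl fun z hz => ?_
  have hzI := (Finset.mem_filter.mp hz).2
  have hcnt : BrownAux.cntK p G z.val = -μ z topQ := by
    have h3 := hmob z
    simp only [hmdef, hzI, if_true] at h3
    exact h3
  rw [hcnt]
  ring
end

section
/- Let C and D be finite posets, and equip the cartesian product C × D with the product order ((x₁,y₁) ≤ (x₂,y₂) iff x₁ ≤ x₂ and y₁ ≤ y₂). Then χ(C × D) = χ(C)·χ(D). -/
section Aux
open Finset Matrix
open scoped Kronecker Classical

variable {P : Type*} [PartialOrder P] [Fintype P] [DecidableEq P]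

noncomputable def nmat (P : Type*) [PartialOrder P] [Fintype P] [DecidableEq P] : Matrix P P ℤ :=
  Matrix.of fun x y => if x < y then 1 else 0

noncomputable def pchains (p : P → Prop) (k : ℕ) : Finset (Finset P) :=
  (Finset.univ.powerset).filter
    (fun s => IsChain (· ≤ ·) (s : Set P) ∧ s.card = k ∧ ∀ y ∈ s, p y)

lemma mem_pchains (p : P → Prop) (k : ℕ) (s : Finset P) :
    s ∈ pchains p k ↔ IsChain (· ≤ ·) (s : Set P) ∧ s.card = k ∧ ∀ y ∈ s, p y := by
  simp [pchains]

omit [Fintype P] [DecidableEq P] in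
lemma chain_exists_least {s : Finset P} (hne : s.Nonempty)
    (hc : IsChain (· ≤ ·) (s : Set P)) : ∃ m ∈ s, ∀ y ∈ s, m ≤ y := by
  obtain ⟨m, hm, hmin⟩ := s.exists_minimal hne
  refine ⟨m, hm, fun y hy => ?_⟩
  rcases eq_or_ne y m with rfl | hne'
  · exact le_refl _
  · rcases hc hm hy (Ne.symm hne') with h | h
    · exact h
    · exact absurd (hmin hy h) (not_le_of_gt (lt_of_le_of_ne h hne'))

lemma card_pchains_succ (k : ℕ) (p : P → Prop)
    (hp : ∀ ⦃a b : P⦄, p a → a < b → p b) :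
    (pchains p (k + 1)).card
      = ∑ z ∈ Finset.univ.filter p, (pchains (fun y => z < y) k).card := by
  classical
  cases isEmpty_or_nonempty P with
  | inl h =>
    have h1 : pchains p (k+1) = ∅ := by
      ext s
      simp only [mem_pchains, Finset.notMem_empty, iff_false]
      rintro ⟨-, hcard, -⟩
      rw [Finset.eq_empty_of_isEmpty s] at hcard
      simp at hcard
    have h2 : (Finset.univ : Finset P).filter p = ∅ := Subsingleton.elim _ _
    simp [h1, h2]
  | inr hne =>
  have hLF : ∀ s ∈ pchains p (k+1), ∃ m ∈ s, ∀ y ∈ s, m ≤ y := by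
    intro s hs
    rw [mem_pchains] at hs
    exact chain_exists_least (Finset.card_pos.mp (by omega)) hs.1
  set f : Finset P → P := fun s =>
    if h : ∃ m ∈ s, ∀ y ∈ s, m ≤ y then h.choose else Classical.ofNonempty with hf
  have hfs : ∀ s (h : ∃ m ∈ s, ∀ y ∈ s, m ≤ y), f s ∈ s ∧ ∀ y ∈ s, f s ≤ y := by
    intro s h
    simp only [hf, dif_pos h]
    exact ⟨h.choose_spec.1, h.choose_spec.2⟩
  have hmaps : ∀ s ∈ pchains p (k+1), f s ∈ Finset.univ.filter p := by
    intro s hs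
    obtain ⟨hm, -⟩ := hfs s (hLF s hs)
    rw [mem_pchains] at hs
    simp [hs.2.2 _ hm]
  rw [Finset.card_eq_sum_card_fiberwise hmaps]
  refine Finset.sum_congr rfl fun z hz => ?_
  have hpz : p z := (Finset.mem_filter.mp hz).2
  refine Finset.card_bij' (fun s _ => s.erase z) (fun t _ => insert z t) ?_ ?_ ?_ ?_
  · -- maps to
    intro s hs0
    obtain ⟨hs1, hfz⟩ := Finset.mem_filter.mp hs0
    obtain ⟨hchain, hcard, -⟩ := (mem_pchains _ _ _).mp hs1
    obtain ⟨hm, hleast⟩ := hfs s (hLF s hs1)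
    rw [hfz] at hm hleast
    rw [mem_pchains]
    refine ⟨hchain.mono (by simp [Finset.erase_subset]), ?_, ?_⟩
    · rw [Finset.card_erase_of_mem hm, hcard]; omega
    · intro y hy
      rw [Finset.mem_erase] at hy
      exact lt_of_le_of_ne (hleast y hy.2) (Ne.symm hy.1)
  · -- maps back
    intro t ht
    obtain ⟨hc, hcard, hgt⟩ := (mem_pchains _ _ _).mp ht
    have hznot : z ∉ t := fun h => lt_irrefl z (hgt z h)
    have hins : IsChain (· ≤ ·) ((insert z t : Finset P) : Set P) := by
      rw [Finset.coe_insert]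
      exact hc.insert (fun y hy _ => Or.inl (le_of_lt (hgt y hy)))
    have hleastins : ∀ y ∈ insert z t, z ≤ y := by
      intro y hy
      rcases Finset.mem_insert.mp hy with rfl | hy
      · exact le_refl _
      · exact le_of_lt (hgt y hy)
    refine Finset.mem_filter.mpr ⟨?_, ?_⟩
    · rw [mem_pchains]
      refine ⟨hins, by rw [Finset.card_insert_of_notMem hznot, hcard], ?_⟩
      intro y hy
      rcases Finset.mem_insert.mp hy with rfl | hy
      · exact hpz
      · exact hp hpz (hgt y hy)
    · -- f (insert z t) = z
      have hex : ∃ m ∈ insert z t, ∀ y ∈ insert z t, m ≤ y :=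
        ⟨z, Finset.mem_insert_self _ _, hleastins⟩
      obtain ⟨hm, hleast⟩ := hfs _ hex
      exact le_antisymm (hleast z (Finset.mem_insert_self _ _)) (hleastins _ hm)
  · -- left inverse
    intro s hs0
    obtain ⟨hs1, hfz⟩ := Finset.mem_filter.mp hs0
    obtain ⟨hm, -⟩ := hfs s (hLF s hs1)
    rw [hfz] at hm
    exact Finset.insert_erase hm
  · -- right inverse
    intro t ht
    have hznot : z ∉ t := fun h => lt_irrefl z (((mem_pchains _ _ _).mp ht).2.2 z h)
    exact Finset.erase_insert hznot

lemma nmat_pow_row_sum : ∀ (i : ℕ) (x : P),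
    ∑ y, (nmat P ^ i) x y = ((pchains (fun y => x < y) i).card : ℤ) := by
  intro i
  induction i with
  | zero =>
    intro x
    have : pchains (fun y => x < y) 0 = {∅} := by
      ext s
      simp only [mem_pchains, Finset.mem_singleton, Finset.card_eq_zero]
      constructor
      · rintro ⟨-, rfl, -⟩; rfl
      · rintro rfl; simp [IsChain]
    simp [this, Matrix.one_apply]
  | succ i ih =>
    intro x
    have key := card_pchains_succ (P := P) i (fun y => x < y)
      (fun a b ha hab => lt_trans ha hab)
    calc ∑ y, (nmat P ^ (i+1)) x y
        = ∑ y, ∑ z, nmat P x z * (nmat P ^ i) z y := by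
          simp [pow_succ', Matrix.mul_apply]
      _ = ∑ z, nmat P x z * ∑ y, (nmat P ^ i) z y := by
          rw [Finset.sum_comm]; simp [Finset.mul_sum]
      _ = ∑ z, nmat P x z * ((pchains (fun y => z < y) i).card : ℤ) :=
          Finset.sum_congr rfl fun z _ => by rw [ih z]
      _ = ∑ z, (if x < z then (1:ℤ) else 0) * ((pchains (fun y => z < y) i).card : ℤ) := by
          simp only [nmat, Matrix.of_apply]
      _ = ∑ z ∈ Finset.univ.filter (fun z => x < z),
            ((pchains (fun y => z < y) i).card : ℤ) := by
          rw [Finset.sum_filter]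
          exact Finset.sum_congr rfl fun z _ => by split <;> simp
      _ = ((pchains (fun y => x < y) (i+1)).card : ℤ) := by
          rw [key]; push_cast; ring

lemma nmat_pow_total_sum (i : ℕ) :
    ∑ x : P, ∑ y : P, (nmat P ^ i) x y
      = ((pchains (fun _ : P => True) (i+1)).card : ℤ) := by
  have key := card_pchains_succ (P := P) i (fun _ : P => True) (fun a b _ _ => trivial)
  simp only [Finset.filter_true] at key
  rw [key]
  push_cast
  exact Finset.sum_congr rfl fun x _ => nmat_pow_row_sum i x

lemma nmat_pow_nonneg : ∀ (i : ℕ) (x y : P), 0 ≤ (nmat P ^ i) x y := by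
  intro i
  induction i with
  | zero => intro x y; rw [pow_zero, Matrix.one_apply]; split <;> norm_num
  | succ i ih =>
    intro x y
    rw [pow_succ', Matrix.mul_apply]
    refine Finset.sum_nonneg fun z _ => mul_nonneg ?_ (ih z y)
    simp only [nmat, Matrix.of_apply]
    split <;> norm_num

lemma nmat_pow_card : nmat P ^ (Fintype.card P) = 0 := by
  have hempty : pchains (fun _ : P => True) (Fintype.card P + 1) = ∅ := by
    ext s
    simp only [mem_pchains, Finset.notMem_empty, iff_false]
    rintro ⟨-, hcard, -⟩
    have := Finset.card_le_univ s
    omega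
  have hsum : ∑ x : P, ∑ y : P, (nmat P ^ (Fintype.card P)) x y = 0 := by
    rw [nmat_pow_total_sum, hempty]; simp
  have h1 : ∀ x ∈ (Finset.univ : Finset P), 0 ≤ ∑ y, (nmat P ^ (Fintype.card P)) x y :=
    fun x _ => Finset.sum_nonneg fun y _ => nmat_pow_nonneg _ x y
  ext x y
  have h2 := (Finset.sum_eq_zero_iff_of_nonneg h1).mp hsum x (Finset.mem_univ x)
  have h3 := (Finset.sum_eq_zero_iff_of_nonneg
    (fun y _ => nmat_pow_nonneg (Fintype.card P) x y)).mp h2 y (Finset.mem_univ y)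
  simpa using h3

noncomputable def zmat (P : Type*) [PartialOrder P] [Fintype P] [DecidableEq P] : Matrix P P ℤ :=
  1 + nmat P

noncomputable def wmat (P : Type*) [PartialOrder P] [Fintype P] [DecidableEq P] : Matrix P P ℤ :=
  ∑ i ∈ Finset.range (Fintype.card P), (-(nmat P)) ^ i

lemma zmat_apply (x y : P) : zmat P x y = if x ≤ y then 1 else 0 := by
  rcases eq_or_ne x y with rfl | hne
  · simp [zmat, nmat, Matrix.add_apply, Matrix.one_apply]
  · simp only [zmat, nmat, Matrix.add_apply, Matrix.one_apply_ne hne, Matrix.of_apply, zero_add]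
    congr 1
    simp only [eq_iff_iff]
    exact ⟨le_of_lt, fun h => lt_of_le_of_ne h hne⟩

lemma wmat_mul_zmat : wmat P * zmat P = 1 := by
  have h := geom_sum_mul (-(nmat P)) (Fintype.card P)
  have hpow : (-(nmat P)) ^ (Fintype.card P) = (-1 : ℤ) ^ (Fintype.card P) • (nmat P ^ Fintype.card P) := by
    rcases Nat.even_or_odd (Fintype.card P) with h' | h'
    · rw [h'.neg_pow, h'.neg_one_pow, one_smul]
    · rw [h'.neg_pow, h'.neg_one_pow, neg_smul, one_smul]
  rw [hpow, nmat_pow_card, smul_zero, zero_sub] at h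
  have h' : wmat P * (-(nmat P) - 1) = -1 := h
  have hz : zmat P = -((-(nmat P)) - 1) := by rw [zmat, neg_sub, sub_neg_eq_add]
  rw [hz, mul_neg, h', neg_neg]

lemma zmat_mul_wmat : zmat P * wmat P = 1 := by
  have hc : Commute (zmat P) (wmat P) := by
    unfold wmat zmat
    refine Commute.sum_right _ _ _ fun i _ => Commute.pow_right ?_ i
    exact Commute.add_left (Commute.one_left _) ((Commute.refl (nmat P)).neg_right)
  rw [hc.eq, wmat_mul_zmat]

lemma posetEulerChar_eq (P : Type*) [PartialOrder P] [inst : Fintype P] :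
    posetEulerChar P = ∑ s ∈ (Finset.univ : Finset P).powerset,
      if s.Nonempty ∧ IsChain (· ≤ ·) (s : Set P) then (-1 : ℤ) ^ (s.card + 1) else 0 := by
  rw [posetEulerChar]
  congr!

lemma neg_nmat_pow_apply (i : ℕ) (x y : P) :
    ((-(nmat P)) ^ i) x y = (-1 : ℤ) ^ i * (nmat P ^ i) x y := by
  rcases Nat.even_or_odd i with h | h
  · rw [h.neg_pow, h.neg_one_pow, one_mul]
  · rw [h.neg_pow, h.neg_one_pow, Matrix.neg_apply, neg_one_mul]

lemma char_eq_wmat (P : Type*) [PartialOrder P] [Fintype P] [DecidableEq P] :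
    posetEulerChar P = ∑ x : P, ∑ y : P, wmat P x y := by
  classical
  rw [posetEulerChar_eq]
  set n := Fintype.card P with hn
  have hmaps : ∀ s ∈ (Finset.univ : Finset P).powerset,
      s.card ∈ Finset.range (n + 1) := fun s _ =>
    Finset.mem_range.mpr (by have := Finset.card_le_univ s; omega)
  rw [← Finset.sum_fiberwise_of_maps_to hmaps
    (fun s => if s.Nonempty ∧ IsChain (· ≤ ·) (s : Set P) then (-1 : ℤ) ^ (s.card + 1) else 0)]
  rw [Finset.sum_range_succ']
  have h0 : ∑ s ∈ (Finset.univ : Finset P).powerset.filter (fun s => s.card = 0),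
      (if s.Nonempty ∧ IsChain (· ≤ ·) (s : Set P) then (-1 : ℤ) ^ (s.card + 1) else 0) = 0 := by
    refine Finset.sum_eq_zero fun s hs => ?_
    obtain ⟨-, hcard⟩ := Finset.mem_filter.mp hs
    rw [if_neg]
    rintro ⟨hne, -⟩
    rw [Finset.card_eq_zero] at hcard
    exact Finset.not_nonempty_empty (hcard ▸ hne)
  rw [h0, add_zero]
  have hstep : ∀ i : ℕ,
      ∑ s ∈ (Finset.univ : Finset P).powerset.filter (fun s => s.card = i + 1),
        (if s.Nonempty ∧ IsChain (· ≤ ·) (s : Set P) then (-1 : ℤ) ^ (s.card + 1) else 0)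
      = (-1 : ℤ) ^ i * ((pchains (fun _ : P => True) (i + 1)).card : ℤ) := by
    intro i
    have hset : ((Finset.univ : Finset P).powerset.filter (fun s => s.card = i + 1)).filter
        (fun s : Finset P => s.Nonempty ∧ IsChain (· ≤ ·) (s : Set P))
        = pchains (fun _ : P => True) (i + 1) := by
      ext s
      simp only [Finset.mem_filter, mem_pchains, Finset.mem_powerset]
      constructor
      · rintro ⟨⟨-, hcard⟩, -, hchain⟩
        exact ⟨hchain, hcard, fun _ _ => trivial⟩
      · rintro ⟨hchain, hcard, -⟩
        exact ⟨⟨Finset.subset_univ s, hcard⟩, Finset.card_pos.mp (by omega), hchain⟩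
    rw [← Finset.sum_filter, hset]
    have : ∀ s ∈ pchains (fun _ : P => True) (i + 1),
        (-1 : ℤ) ^ (s.card + 1) = (-1 : ℤ) ^ i := by
      intro s hs
      rw [((mem_pchains _ _ _).mp hs).2.1]
      have : (-1 : ℤ) ^ (i + 1 + 1) = (-1 : ℤ) ^ i * (-1) ^ 2 := by ring
      rw [this]; norm_num
    rw [Finset.sum_congr rfl this, Finset.sum_const, nsmul_eq_mul, mul_comm]
  calc ∑ i ∈ Finset.range n,
        ∑ s ∈ (Finset.univ : Finset P).powerset.filter (fun s => s.card = i + 1),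
          (if s.Nonempty ∧ IsChain (· ≤ ·) (s : Set P) then (-1 : ℤ) ^ (s.card + 1) else 0)
      = ∑ i ∈ Finset.range n, (-1 : ℤ) ^ i * ((pchains (fun _ : P => True) (i + 1)).card : ℤ) :=
        Finset.sum_congr rfl fun i _ => hstep i
    _ = ∑ i ∈ Finset.range n, ∑ x : P, ∑ y : P, ((-(nmat P)) ^ i) x y := by
        refine Finset.sum_congr rfl fun i _ => ?_
        rw [← nmat_pow_total_sum, Finset.mul_sum]
        refine Finset.sum_congr rfl fun x _ => ?_
        rw [Finset.mul_sum]
        exact Finset.sum_congr rfl fun y _ => (neg_nmat_pow_apply i x y).symm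
    _ = ∑ x : P, ∑ y : P, wmat P x y := by
        rw [Finset.sum_comm]
        refine Finset.sum_congr rfl fun x _ => ?_
        rw [Finset.sum_comm]
        refine Finset.sum_congr rfl fun y _ => ?_
        rw [wmat, Matrix.sum_apply]

open scoped Kronecker in
lemma zmat_prod (C D : Type*) [PartialOrder C] [PartialOrder D] [Fintype C] [Fintype D] [DecidableEq C] [DecidableEq D] :
    zmat (C × D) = zmat C ⊗ₖ zmat D := by
  ext ⟨c, d⟩ ⟨c', d'⟩
  rw [zmat_apply, Matrix.kroneckerMap_apply, zmat_apply, zmat_apply, Prod.mk_le_mk]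
  by_cases h1 : c ≤ c' <;> by_cases h2 : d ≤ d' <;> simp [h1, h2]

lemma matrix_inv_unique {n : Type*} [Fintype n] [DecidableEq n]
    (A B C : Matrix n n ℤ) (h1 : B * A = 1) (h2 : A * C = 1) : B = C := by
  calc B = B * (A * C) := by rw [h2, Matrix.mul_one]
    _ = (B * A) * C := by rw [Matrix.mul_assoc]
    _ = C := by rw [h1, Matrix.one_mul]

open scoped Kronecker in
lemma wmat_prod (C D : Type*) [PartialOrder C] [PartialOrder D] [Fintype C] [Fintype D] [DecidableEq C] [DecidableEq D] :
    wmat (C × D) = wmat C ⊗ₖ wmat D := by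
  have h1 : zmat (C × D) * (wmat C ⊗ₖ wmat D) = 1 := by
    rw [zmat_prod, ← Matrix.mul_kronecker_mul, zmat_mul_wmat, zmat_mul_wmat,
      Matrix.one_kronecker_one]
  exact matrix_inv_unique (zmat (C × D)) _ _ wmat_mul_zmat h1

open scoped Kronecker in
lemma sum_kron {C D : Type*} [Fintype C] [Fintype D] (A : Matrix C C ℤ) (B : Matrix D D ℤ) :
    ∑ x : C × D, ∑ y : C × D, (A ⊗ₖ B) x y
      = (∑ x : C, ∑ y : C, A x y) * (∑ x : D, ∑ y : D, B x y) := by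
  simp only [Fintype.sum_prod_type, Matrix.kroneckerMap_apply]
  rw [Finset.sum_mul_sum]
  refine Finset.sum_congr rfl fun c _ => ?_
  refine Finset.sum_congr rfl fun d _ => ?_
  rw [Finset.sum_mul_sum]

end Aux

/-- For finite posets `C` and `D` with the product order on `C × D`,
`χ(C × D) = χ(C) · χ(D)`. -/
theorem euler_char_prod {C D : Type*} [PartialOrder C] [PartialOrder D]
    [Finite C] [Finite D] :
    posetEulerChar (C × D) = posetEulerChar C * posetEulerChar D := by
  letI : Fintype C := Fintype.ofFinite C
  letI : Fintype D := Fintype.ofFinite D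
  letI : DecidableEq C := Classical.decEq C
  letI : DecidableEq D := Classical.decEq D
  rw [char_eq_wmat (C × D), wmat_prod, sum_kron, ← char_eq_wmat, ← char_eq_wmat]
end

section
/- Let G be a finite p-TI-group for a prime p, and let s be the number of Sylow p-subgroups of G. Then χ(C_p(G)) = s·|G|_{p'} - (s-1)·|G|. -/
/-- `G` is a `p`-TI-group: for every Sylow `p`-subgroup `P` of `G` and every `g : G`,
either `P ∩ P^g = 1` or `P^g = P` (where `P^g` is the conjugate of `P` by `g`). -/
def IsPTIGroup (p : ℕ) (G : Type*) [Group G] : Prop :=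
  ∀ (P : Sylow p G) (g : G),
    (P : Subgroup G) ⊓ (P : Subgroup G).map (MulAut.conj g).toMonoidHom = ⊥ ∨
      (P : Subgroup G).map (MulAut.conj g).toMonoidHom = (P : Subgroup G)

open scoped Classical

/-! ### coset lemmas -/
section RC
variable {G : Type*} [Group G]

abbrev rcoset (H : Subgroup G) (x : G) : Set G := (fun h => h * x) '' (H : Set G)

lemma rcoset_nonempty (H : Subgroup G) (x : G) : (rcoset H x).Nonempty :=
  ⟨x, ⟨1, H.one_mem, one_mul x⟩⟩

lemma mem_rcoset_iff {H : Subgroup G} {x a : G} : a ∈ rcoset H x ↔ a * x⁻¹ ∈ H := by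
  constructor
  · rintro ⟨h, hh, rfl⟩; simpa using hh
  · intro h; exact ⟨a * x⁻¹, h, by group⟩

lemma rcoset_eq_of_mem {H : Subgroup G} {x a : G} (ha : a ∈ rcoset H x) :
    rcoset H x = rcoset H a := by
  rw [mem_rcoset_iff] at ha
  ext b
  rw [mem_rcoset_iff, mem_rcoset_iff]
  constructor
  · intro hb; have := H.mul_mem hb (H.inv_mem ha); simpa [mul_assoc] using this
  · intro hb; have := H.mul_mem hb ha; simpa [mul_assoc] using this

lemma subgroup_le_of_rcoset_subset {H K : Subgroup G} {x y : G}
    (hsub : rcoset H x ⊆ rcoset K y) : H ≤ K := by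
  intro h hh
  have hx : x ∈ rcoset K y := hsub ⟨1, H.one_mem, one_mul x⟩
  have hhx : h * x ∈ rcoset K y := hsub ⟨h, hh, rfl⟩
  rw [rcoset_eq_of_mem hx, mem_rcoset_iff] at hhx
  simpa [mul_assoc] using hhx

lemma rcoset_inj {H K : Subgroup G} {x y : G} (h : rcoset H x = rcoset K y) : H = K :=
  le_antisymm (subgroup_le_of_rcoset_subset h.le) (subgroup_le_of_rcoset_subset h.ge)

lemma rcoset_ncard (H : Subgroup G) (x : G) : (rcoset H x).ncard = Nat.card H := by
  rw [← Nat.card_coe_set_eq]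
  have : Nat.card (rcoset H x) = Nat.card (H : Set G) :=
    Nat.card_congr (Equiv.Set.image _ _ (mul_left_injective x)).symm
  rw [this]; rfl

lemma rcoset_mono {H K : Subgroup G} (h : H ≤ K) (x : G) : rcoset H x ⊆ rcoset K x :=
  Set.image_mono h

lemma rcoset_eq_of_inter {H : Subgroup G} {x y : G}
    (h : (rcoset H x ∩ rcoset H y).Nonempty) : rcoset H x = rcoset H y := by
  obtain ⟨a, ha1, ha2⟩ := h
  rw [rcoset_eq_of_mem ha1, rcoset_eq_of_mem ha2]

end RC

/-! ### TI lemma -/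
section TI
variable {G : Type*} [Group G] {p : ℕ}

lemma sylow_unique_of_TI [Fact p.Prime] [Fintype G] (hTI : IsPTIGroup p G) {H : Subgroup G}
    (hH : H ≠ ⊥) (P Q : Sylow p G) (hP : H ≤ P) (hQ : H ≤ Q) : P = Q := by
  obtain ⟨g, hg⟩ := MulAction.exists_smul_eq G P Q
  have hgQ : (Q : Subgroup G) = (P : Subgroup G).map (MulAut.conj g).toMonoidHom := by
    rw [← hg]; rfl
  rcases hTI P g with h | h
  · exact absurd (eq_bot_iff.2 (le_trans (le_inf hP (hgQ ▸ hQ)) h.le)) hH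
  · exact (Sylow.ext (hgQ.trans h)).symm

end TI

/-! ### cone lemmas -/
section Cone
variable {α : Type*} [PartialOrder α] [DecidableEq α]

lemma sum_sign_chains_top (D : Finset α) (t : α) (ht : t ∈ D) (htop : ∀ b ∈ D, b ≤ t) :
    ∑ σ ∈ D.powerset.filter (fun (σ : Finset α) => IsChain (· ≤ ·) (σ : Set α)),
      (-1 : ℤ) ^ σ.card = 0 := by
  refine Finset.sum_involution (fun σ _ => if t ∈ σ then σ.erase t else insert t σ)
    ?_ ?_ ?mem ?_
  case mem =>
    intro σ hσ
    simp only [Finset.mem_filter, Finset.mem_powerset] at hσ ⊢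
    by_cases h : t ∈ σ
    · simp only [h, if_true]
      exact ⟨(Finset.erase_subset _ _).trans hσ.1, hσ.2.mono (by simp [Finset.erase_subset])⟩
    · simp only [h, if_false]
      refine ⟨Finset.insert_subset ht hσ.1, ?_⟩
      rw [Finset.coe_insert]
      exact hσ.2.insert (fun b hb _ => Or.inr (htop b (hσ.1 hb)))
  · intro σ hσ
    by_cases h : t ∈ σ
    · simp only [h, if_true]
      have : σ.card = (σ.erase t).card + 1 := (Finset.card_erase_add_one h).symm
      rw [this, pow_succ]; ring
    · simp only [h, if_false]
      rw [Finset.card_insert_of_notMem h, pow_succ]; ring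
  · intro σ hσ _
    by_cases h : t ∈ σ
    · simp only [h, if_true]
      intro heq; exact (heq ▸ Finset.notMem_erase t σ) h
    · simp only [h, if_false]
      intro heq; exact h (heq ▸ Finset.mem_insert_self t σ)
  · intro σ hσ
    by_cases h : t ∈ σ
    · simp only [h, if_true, Finset.notMem_erase, if_false, Finset.insert_erase h]
    · simp only [h, if_false, Finset.mem_insert_self, if_true, Finset.erase_insert h]

lemma sum_sign_chains_min (D : Finset α) (F : α → α) (a : α) (ha : a ∈ D)
    (hle : ∀ b ∈ D, b ≤ F b) (hFD : ∀ b ∈ D, F b ∈ D)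
    (hF : ∀ b ∈ D, ∀ c ∈ D, b ≤ c → F b = F c) :
    ∑ σ ∈ D.powerset.filter (fun (σ : Finset α) => σ.Nonempty ∧ IsChain (· ≤ ·) (σ : Set α)),
      (if a ∈ σ ∧ (∀ b ∈ σ, a ≤ b) then (-1 : ℤ) ^ (σ.card + 1) else 0)
    = if F a = a then 1 else 0 := by
  rw [← Finset.sum_filter]
  set U : Finset α := D.filter (fun b => a < b) with hU
  have hbij : ∑ σ ∈ (D.powerset.filter (fun (σ : Finset α) => σ.Nonempty ∧
        IsChain (· ≤ ·) (σ : Set α))).filter (fun σ => a ∈ σ ∧ ∀ b ∈ σ, a ≤ b),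
        (-1 : ℤ) ^ (σ.card + 1)
      = ∑ τ ∈ U.powerset.filter (fun (τ : Finset α) => IsChain (· ≤ ·) (τ : Set α)),
        (-1 : ℤ) ^ τ.card := by
    refine Finset.sum_bij' (fun σ _ => σ.erase a) (fun τ _ => insert a τ) ?_ ?_ ?_ ?_ ?_
    · intro σ hσ
      simp only [Finset.mem_filter, Finset.mem_powerset] at hσ ⊢
      obtain ⟨⟨hsub, _, hchain⟩, hmem, hmin⟩ := hσ
      refine ⟨fun b hb => ?_, hchain.mono (by simp [Finset.erase_subset])⟩
      rw [Finset.mem_erase] at hb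
      rw [hU, Finset.mem_filter]
      exact ⟨hsub hb.2, lt_of_le_of_ne (hmin b hb.2) (Ne.symm hb.1)⟩
    · intro τ hτ
      simp only [Finset.mem_filter, Finset.mem_powerset, hU] at hτ ⊢
      obtain ⟨hsub, hchain⟩ := hτ
      have hup : ∀ b ∈ τ, a < b := fun b hb => (Finset.mem_filter.1 (hsub hb)).2
      refine ⟨⟨Finset.insert_subset ha (fun b hb => (Finset.mem_filter.1 (hsub hb)).1),
        ⟨a, Finset.mem_insert_self a τ⟩, ?_⟩, Finset.mem_insert_self a τ, ?_⟩
      · rw [Finset.coe_insert]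
        exact hchain.insert (fun b hb _ => Or.inl (hup b hb).le)
      · intro b hb
        rcases Finset.mem_insert.1 hb with rfl | hb
        · exact le_rfl
        · exact (hup b hb).le
    · intro σ hσ
      simp only [Finset.mem_filter] at hσ
      exact Finset.insert_erase hσ.2.1
    · intro τ hτ
      simp only [Finset.mem_filter, Finset.mem_powerset, hU] at hτ
      have : a ∉ τ := fun h => lt_irrefl a (Finset.mem_filter.1 (hτ.1 h)).2
      exact Finset.erase_insert this
    · intro σ hσ
      simp only [Finset.mem_filter] at hσ
      rw [Finset.card_erase_of_mem hσ.2.1]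
      obtain ⟨k, hk⟩ := Nat.exists_eq_add_of_le (Finset.card_pos.2 ⟨a, hσ.2.1⟩)
      rw [hk]
      have h2 : 1 + k - 1 = k := by omega
      have h3 : 1 + k + 1 = k + 2 := by omega
      rw [h2, h3, pow_add]
      norm_num
  rw [hbij]
  by_cases hfix : F a = a
  · have hUe : U = ∅ := by
      rw [hU, Finset.filter_eq_empty_iff]
      intro b hb hab
      have h1 : F a = F b := hF a ha b hb hab.le
      have h2 : b ≤ a := by rw [← hfix, h1]; exact hle b hb
      exact absurd (lt_of_lt_of_le hab h2) (lt_irrefl a)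
    rw [if_pos hfix, hUe, Finset.powerset_empty, Finset.filter_singleton]
    simp [Set.Subsingleton.isChain (by simp : (↑(∅ : Finset α) : Set α).Subsingleton)]
  · rw [if_neg hfix]
    have haF : a < F a := lt_of_le_of_ne (hle a ha) (Ne.symm hfix)
    have htop : F a ∈ U := by
      rw [hU, Finset.mem_filter]
      exact ⟨hFD a ha, haF⟩
    refine sum_sign_chains_top U (F a) htop ?_
    intro b hb
    rw [hU, Finset.mem_filter] at hb
    calc b ≤ F b := hle b hb.1
    _ = F a := (hF a ha b hb.1 hb.2.le).symm

lemma cone_sum (D : Finset α) (F : α → α) (g : α → ℤ)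
    (hle : ∀ b ∈ D, b ≤ F b) (hFD : ∀ b ∈ D, F b ∈ D)
    (hF : ∀ b ∈ D, ∀ c ∈ D, b ≤ c → F b = F c) :
    ∑ σ ∈ D.powerset.filter (fun (σ : Finset α) => σ.Nonempty ∧ IsChain (· ≤ ·) (σ : Set α)),
      (∑ a ∈ σ.filter (fun a => ∀ b ∈ σ, a ≤ b), g a) * (-1 : ℤ) ^ (σ.card + 1)
    = ∑ t ∈ D.filter (fun t => F t = t), g t := by
  set C := D.powerset.filter (fun (σ : Finset α) => σ.Nonempty ∧ IsChain (· ≤ ·) (σ : Set α))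
    with hC
  have key : ∀ σ ∈ C, (∑ a ∈ σ.filter (fun a => ∀ b ∈ σ, a ≤ b), g a) * (-1 : ℤ) ^ (σ.card + 1)
      = ∑ a ∈ D, (if a ∈ σ ∧ (∀ b ∈ σ, a ≤ b) then g a * (-1 : ℤ) ^ (σ.card + 1) else 0) := by
    intro σ hσ
    rw [hC, Finset.mem_filter, Finset.mem_powerset] at hσ
    rw [← Finset.sum_filter, Finset.sum_mul]
    apply Finset.sum_congr
    · ext a
      simp only [Finset.mem_filter]
      constructor
      · rintro ⟨h2, h3⟩; exact ⟨hσ.1 h2, h2, h3⟩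
      · rintro ⟨_, h2, h3⟩; exact ⟨h2, h3⟩
    · intros; rfl
  rw [Finset.sum_congr rfl key, Finset.sum_comm]
  have key2 : ∀ a ∈ D, (∑ σ ∈ C, if a ∈ σ ∧ (∀ b ∈ σ, a ≤ b)
      then g a * (-1 : ℤ) ^ (σ.card + 1) else 0) = if F a = a then g a else 0 := by
    intro a ha
    have : ∀ σ ∈ C, (if a ∈ σ ∧ (∀ b ∈ σ, a ≤ b) then g a * (-1 : ℤ) ^ (σ.card + 1) else 0)
        = g a * (if a ∈ σ ∧ (∀ b ∈ σ, a ≤ b) then (-1 : ℤ) ^ (σ.card + 1) else 0) := by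
      intro σ _
      by_cases h : a ∈ σ ∧ (∀ b ∈ σ, a ≤ b) <;> simp [h]
    rw [Finset.sum_congr rfl this, ← Finset.mul_sum, hC,
      sum_sign_chains_min D F a ha hle hFD hF]
    by_cases h : F a = a <;> simp [h]
  rw [Finset.sum_congr rfl key2, ← Finset.sum_filter]

end Cone

/-! ### the coset poset of G -/
section Poset
variable {G : Type*} [Group G] {p : ℕ}

lemma pCosets_nonempty (c : ↥(pCosets p G)) : (c : Set G).Nonempty := by
  obtain ⟨H, x, hH, hc⟩ := c.2
  rw [hc]
  exact rcoset_nonempty H x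

def mkP (p : ℕ) {G : Type*} [Group G] (g : G) : ↥(pCosets p G) :=
  ⟨{g}, ⊥, g, IsPGroup.of_bot, by ext a; simp [eq_comm]⟩

lemma le_iff_subset {c d : ↥(pCosets p G)} : c ≤ d ↔ (c : Set G) ⊆ (d : Set G) := Iff.rfl

def isSC (p : ℕ) {G : Type*} [Group G] (c : ↥(pCosets p G)) : Prop :=
  ∃ (Q : Sylow p G) (x : G), (c : Set G) = rcoset (Q : Subgroup G) x

lemma exists_sylow_ext (c : ↥(pCosets p G)) : ∃ d : ↥(pCosets p G), c ≤ d ∧ isSC p d := by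
  obtain ⟨H, x, hH, hc⟩ := c.2
  obtain ⟨Q, hQ⟩ := hH.exists_le_sylow
  refine ⟨⟨rcoset (Q : Subgroup G) x, (Q : Subgroup G), x, Q.isPGroup', rfl⟩, ?_, Q, x, rfl⟩
  rw [le_iff_subset]
  show (c : Set G) ⊆ rcoset (Q : Subgroup G) x
  rw [hc]
  exact rcoset_mono hQ x

noncomputable def Fmap (p : ℕ) {G : Type*} [Group G] (c : ↥(pCosets p G)) : ↥(pCosets p G) :=
  (exists_sylow_ext c).choose

lemma le_Fmap (c : ↥(pCosets p G)) : c ≤ Fmap p c := (exists_sylow_ext c).choose_spec.1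

lemma isSC_Fmap (c : ↥(pCosets p G)) : isSC p (Fmap p c) := (exists_sylow_ext c).choose_spec.2

end Poset

/-! ### finite layer -/
section Fin
variable {G : Type*} [Group G] [Fintype G] {p : ℕ}

lemma small_eq_singleton {c : ↥(pCosets p G)} (h : ¬ 1 < (c : Set G).ncard) :
    ∃ g : G, (c : Set G) = {g} := by
  have h1 : 0 < (c : Set G).ncard := (Set.ncard_pos (Set.toFinite _)).2 (pCosets_nonempty c)
  have : (c : Set G).ncard = 1 := by omega
  exact Set.ncard_eq_one.1 this

lemma big_rep {c : ↥(pCosets p G)} (h : 1 < (c : Set G).ncard) :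
    ∃ (H : Subgroup G) (x : G), IsPGroup p H ∧ (c : Set G) = rcoset H x ∧ H ≠ ⊥ := by
  obtain ⟨H, x, hH, hc⟩ := c.2
  refine ⟨H, x, hH, hc, ?_⟩
  rintro rfl
  rw [hc, rcoset_ncard] at h
  simp at h

lemma Fmap_eq [Fact p.Prime] (hTI : IsPTIGroup p G) {a b : ↥(pCosets p G)}
    (ha : 1 < (a : Set G).ncard) (hb : 1 < (b : Set G).ncard) (hab : a ≤ b) :
    Fmap p a = Fmap p b := by
  obtain ⟨H, x, hH, hca, hHbot⟩ := big_rep ha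
  obtain ⟨K, y, hK, hcb, hKbot⟩ := big_rep hb
  obtain ⟨Q, u, hFa⟩ := isSC_Fmap a
  obtain ⟨Q', v, hFb⟩ := isSC_Fmap b
  have hHQ : H ≤ (Q : Subgroup G) := by
    apply subgroup_le_of_rcoset_subset (x := x) (y := u)
    rw [← hca, ← hFa]
    exact le_Fmap a
  have hHK : H ≤ K := by
    apply subgroup_le_of_rcoset_subset (x := x) (y := y)
    rw [← hca, ← hcb]
    exact hab
  have hKQ' : K ≤ (Q' : Subgroup G) := by
    apply subgroup_le_of_rcoset_subset (x := y) (y := v)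
    rw [← hcb, ← hFb]
    exact le_Fmap b
  have hQQ : Q = Q' := sylow_unique_of_TI hTI hHbot Q Q' hHQ (le_trans hHK hKQ')
  obtain ⟨z, hz⟩ := pCosets_nonempty a
  have hz1 : z ∈ rcoset (Q : Subgroup G) u := by
    rw [← hFa]; exact le_Fmap a hz
  have hz2 : z ∈ rcoset (Q : Subgroup G) v := by
    rw [hQQ, ← hFb]; exact le_Fmap b (hab hz)
  apply Subtype.ext
  rw [hFa, hFb, ← hQQ, rcoset_eq_of_mem hz1, rcoset_eq_of_mem hz2]

lemma ncard_SC [Fact p.Prime] {c : ↥(pCosets p G)} (h : isSC p c) :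
    (c : Set G).ncard = p ^ (Fintype.card G).factorization p := by
  obtain ⟨Q, x, hc⟩ := h
  rw [hc, rcoset_ncard, Sylow.card_eq_multiplicity, Nat.card_eq_fintype_card]

lemma Fmap_fix_iff [Fact p.Prime] (c : ↥(pCosets p G)) : Fmap p c = c ↔ isSC p c := by
  constructor
  · intro h; rw [← h]; exact isSC_Fmap c
  · intro h
    have h1 : (c : Set G) ⊆ (Fmap p c : Set G) := le_Fmap c
    have h2 : ((Fmap p c : ↥(pCosets p G)) : Set G).ncard ≤ (c : Set G).ncard := by
      rw [ncard_SC h, ncard_SC (isSC_Fmap c)]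
    exact Subtype.ext (Set.eq_of_subset_of_ncard_le h1 h2 (Set.toFinite _)).symm

lemma chain_exists_min {α : Type*} [PartialOrder α] {σ : Finset α} (hne : σ.Nonempty)
    (hch : IsChain (· ≤ ·) (σ : Set α)) : ∃ m ∈ σ, ∀ b ∈ σ, m ≤ b := by
  obtain ⟨m, hm, hmin⟩ := Finset.exists_minimal hne
  refine ⟨m, hm, fun b hb => ?_⟩
  rcases eq_or_ne b m with rfl | hbm
  · exact le_rfl
  · rcases hch hm hb (Ne.symm hbm) with h | h
    · exact h
    · exact absurd (le_antisymm h (hmin hb h)) hbm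

end Fin

/-! ### counting -/
section Count
set_option linter.unusedSectionVars false
variable {G : Type*} [Group G] [Fintype G] {p : ℕ} [Fintype ↥(pCosets p G)]

lemma card_small :
    (Finset.univ.filter (fun c : ↥(pCosets p G) => ¬ 1 < (c : Set G).ncard)).card
      = Fintype.card G := by
  symm
  rw [← Finset.card_univ]
  refine Finset.card_bij (fun g _ => mkP p g) ?_ ?_ ?_
  · intro g _
    rw [Finset.mem_filter]
    refine ⟨Finset.mem_univ _, ?_⟩
    have : ((mkP p g : ↥(pCosets p G)) : Set G) = {g} := rfl
    rw [this, Set.ncard_singleton]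
    omega
  · intro g _ g' _ h
    have := congrArg (fun c : ↥(pCosets p G) => (c : Set G)) h
    simpa [mkP] using this
  · intro c hc
    rw [Finset.mem_filter] at hc
    obtain ⟨g, hg⟩ := small_eq_singleton hc.2
    exact ⟨g, Finset.mem_univ _, (Subtype.ext hg.symm : mkP p g = c)⟩

lemma card_SC_mul [Fact p.Prime] :
    (Finset.univ.filter (fun c : ↥(pCosets p G) => isSC p c)).card
        * p ^ (Fintype.card G).factorization p
      = Nat.card (Sylow p G) * Fintype.card G := by
  classical
  have hmaps : ∀ qx : Sylow p G × G, qx ∈ (Finset.univ : Finset (Sylow p G × G)) →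
      (⟨rcoset (qx.1 : Subgroup G) qx.2, (qx.1 : Subgroup G), qx.2, qx.1.isPGroup', rfl⟩ :
        ↥(pCosets p G)) ∈ Finset.univ.filter (fun c : ↥(pCosets p G) => isSC p c) := by
    intro qx _
    rw [Finset.mem_filter]
    exact ⟨Finset.mem_univ _, qx.1, qx.2, rfl⟩
  have h1 := Finset.card_eq_sum_card_fiberwise hmaps
  rw [Finset.card_univ, Fintype.card_prod] at h1
  have h2 : ∀ c ∈ Finset.univ.filter (fun c : ↥(pCosets p G) => isSC p c),
      (Finset.univ.filter (fun qx : Sylow p G × G =>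
        (⟨rcoset (qx.1 : Subgroup G) qx.2, (qx.1 : Subgroup G), qx.2, qx.1.isPGroup', rfl⟩ :
          ↥(pCosets p G)) = c)).card = p ^ (Fintype.card G).factorization p := by
    intro c hc
    rw [Finset.mem_filter] at hc
    obtain ⟨Q₀, x₀, hc0⟩ := hc.2
    have : (Finset.univ.filter (fun qx : Sylow p G × G =>
        (⟨rcoset (qx.1 : Subgroup G) qx.2, (qx.1 : Subgroup G), qx.2, qx.1.isPGroup', rfl⟩ :
          ↥(pCosets p G)) = c)).card = (c : Set G).toFinset.card := by
      refine Finset.card_bij (fun qx _ => qx.2) ?_ ?_ ?_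
      · intro qx hqx
        rw [Finset.mem_filter] at hqx
        have : (c : Set G) = rcoset (qx.1 : Subgroup G) qx.2 := by
          rw [← hqx.2]
        rw [Set.mem_toFinset, this]
        exact ⟨1, Subgroup.one_mem _, one_mul _⟩
      · intro qx hqx qx' hqx' heq
        rw [Finset.mem_filter] at hqx hqx'
        have hc1 : rcoset (qx.1 : Subgroup G) qx.2 = rcoset (qx'.1 : Subgroup G) qx'.2 := by
          have := hqx.2.trans hqx'.2.symm
          exact congrArg (fun d : ↥(pCosets p G) => (d : Set G)) this
        have hQ : qx.1 = qx'.1 := Sylow.ext (rcoset_inj hc1)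
        exact Prod.ext hQ heq
      · intro x hx
        rw [Set.mem_toFinset, hc0] at hx
        refine ⟨(Q₀, x), ?_, rfl⟩
        rw [Finset.mem_filter]
        refine ⟨Finset.mem_univ _, Subtype.ext ?_⟩
        show rcoset (Q₀ : Subgroup G) x = (c : Set G)
        rw [hc0, ← rcoset_eq_of_mem hx]
    rw [this, ← Set.ncard_eq_toFinset_card', ncard_SC hc.2]
  rw [Finset.sum_congr rfl h2, Finset.sum_const, smul_eq_mul] at h1
  rw [← h1, Nat.card_eq_fintype_card]

end Count

/-- If `G` is a finite `p`-TI-group with `s` Sylow `p`-subgroups, then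
`χ(C_p(G)) = s·|G|_{p'} - (s - 1)·|G|`. -/
theorem euler_char_pCosets_of_pTI {G : Type*} [Group G] [Fintype G] {p : ℕ}
    (hp : p.Prime) (hTI : IsPTIGroup p G) :
    posetEulerChar ↥(pCosets p G) =
      (Nat.card (Sylow p G) : ℤ) * ((ordCompl[p] (Fintype.card G) : ℕ) : ℤ) -
        ((Nat.card (Sylow p G) : ℤ) - 1) * (Fintype.card G : ℤ) := by
  haveI : Fact p.Prime := ⟨hp⟩
  classical
  letI instF : Fintype ↥(pCosets p G) := Fintype.ofFinite _
  have hchar : posetEulerChar ↥(pCosets p G) =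
      ∑ s ∈ (Finset.univ : Finset ↥(pCosets p G)).powerset,
        if s.Nonempty ∧ IsChain (· ≤ ·) (s : Set ↥(pCosets p G)) then (-1 : ℤ) ^ (s.card + 1)
        else 0 := rfl
  set bigp : ↥(pCosets p G) → Prop := fun c => 1 < (c : Set G).ncard with hbigp
  set Big : Finset ↥(pCosets p G) := Finset.univ.filter bigp with hBig
  set C : Finset (Finset ↥(pCosets p G)) := (Finset.univ : Finset ↥(pCosets p G)).powerset.filter
      (fun σ => σ.Nonempty ∧ IsChain (· ≤ ·) (σ : Set ↥(pCosets p G))) with hC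
  set BigC : Finset (Finset ↥(pCosets p G)) := Big.powerset.filter
      (fun σ => σ.Nonempty ∧ IsChain (· ≤ ·) (σ : Set ↥(pCosets p G))) with hBigC
  have h0 : posetEulerChar ↥(pCosets p G) = ∑ σ ∈ C, (-1 : ℤ) ^ (σ.card + 1) := by
    rw [hchar, hC, Finset.sum_filter]
  -- fiber decomposition over the big part
  have h1 : ∑ σ ∈ C, (-1 : ℤ) ^ (σ.card + 1)
      = ∑ τ ∈ (Finset.univ : Finset ↥(pCosets p G)).powerset,
          ∑ σ ∈ C.filter (fun σ => σ.filter bigp = τ), (-1 : ℤ) ^ (σ.card + 1) :=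
    (Finset.sum_fiberwise_of_maps_to
      (fun σ _ => Finset.mem_powerset.2 (Finset.subset_univ _)) _).symm
  -- the empty fiber: singleton chains of small cosets
  have hfib_empty : (∑ σ ∈ C.filter (fun σ => σ.filter bigp = ∅), (-1 : ℤ) ^ (σ.card + 1))
      = (Fintype.card G : ℤ) := by
    have hset : C.filter (fun σ => σ.filter bigp = ∅)
        = (Finset.univ.filter (fun c : ↥(pCosets p G) => ¬ bigp c)).image
            (fun c => ({c} : Finset ↥(pCosets p G))) := by
      ext σ
      rw [Finset.mem_filter, Finset.mem_image, hC, Finset.mem_filter, Finset.mem_powerset]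
      constructor
      · rintro ⟨⟨-, hne, hch⟩, hemp⟩
        rw [Finset.filter_eq_empty_iff] at hemp
        obtain ⟨c, hc⟩ := hne
        refine ⟨c, Finset.mem_filter.2 ⟨Finset.mem_univ _, hemp hc⟩, ?_⟩
        symm
        rw [Finset.eq_singleton_iff_unique_mem]
        refine ⟨hc, fun b hb => ?_⟩
        rcases eq_or_ne b c with rfl | hbc
        · rfl
        · obtain ⟨g, hg⟩ := small_eq_singleton (hemp hb)
          obtain ⟨g', hg'⟩ := small_eq_singleton (hemp hc)
          rcases hch hb hc hbc with h | h
          · apply Subtype.ext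
            rw [hg, hg']
            have : ({g} : Set G) ⊆ {g'} := by rw [← hg, ← hg']; exact h
            simpa using this
          · apply Subtype.ext
            rw [hg, hg']
            have : ({g'} : Set G) ⊆ {g} := by rw [← hg, ← hg']; exact h
            have := Set.singleton_subset_singleton.1 this
            simp [this]
      · rintro ⟨c, hc, rfl⟩
        rw [Finset.mem_filter] at hc
        refine ⟨⟨Finset.subset_univ _, Finset.singleton_nonempty c, ?_⟩, ?_⟩
        · rw [Finset.coe_singleton]
          exact Set.Subsingleton.isChain (Set.subsingleton_singleton)
        · rw [Finset.filter_singleton, if_neg hc.2]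
    rw [hset, Finset.sum_image ?inj]
    case inj =>
      intro c _ c' _ h
      exact Finset.singleton_injective h
    have hones : ∀ c ∈ Finset.univ.filter (fun c : ↥(pCosets p G) => ¬ bigp c),
        (-1 : ℤ) ^ (({c} : Finset ↥(pCosets p G)).card + 1) = 1 := by
      intro c _
      rw [Finset.card_singleton]
      norm_num
    rw [Finset.sum_congr rfl hones, Finset.sum_const]
    have : Finset.univ.filter (fun c : ↥(pCosets p G) => ¬ bigp c)
        = Finset.univ.filter (fun c : ↥(pCosets p G) => ¬ 1 < (c : Set G).ncard) := rfl
    rw [this, card_small (p := p) (G := G)]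
    simp
  -- nonzero fibers have τ ∈ BigC or τ = ∅
  have hfib_zero : ∀ τ, τ ≠ ∅ → τ ∉ BigC →
      (∑ σ ∈ C.filter (fun σ => σ.filter bigp = τ), (-1 : ℤ) ^ (σ.card + 1)) = 0 := by
    intro τ hne hnot
    rw [Finset.filter_eq_empty_iff.2, Finset.sum_empty]
    intro σ hσ
    rw [hC, Finset.mem_filter, Finset.mem_powerset] at hσ
    intro heq
    apply hnot
    rw [hBigC, Finset.mem_filter, Finset.mem_powerset]
    refine ⟨?_, ?_, ?_⟩
    · intro c hc
      rw [← heq, Finset.mem_filter] at hc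
      rw [hBig, Finset.mem_filter]
      exact ⟨Finset.mem_univ _, hc.2⟩
    · exact Finset.nonempty_iff_ne_empty.2 hne
    · refine hσ.2.2.mono ?_
      rw [← heq]
      exact fun x hx => (Finset.mem_filter.1 hx).1
  -- the big fibers
  have hfib_big : ∀ τ ∈ BigC,
      (∑ σ ∈ C.filter (fun σ => σ.filter bigp = τ), (-1 : ℤ) ^ (σ.card + 1))
      = (∑ a ∈ τ.filter (fun a => ∀ b ∈ τ, a ≤ b), (1 - ((a : Set G).ncard : ℤ)))
          * (-1 : ℤ) ^ (τ.card + 1) := by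
    intro τ hτ
    rw [hBigC, Finset.mem_filter, Finset.mem_powerset] at hτ
    obtain ⟨hτBig, hτne, hτch⟩ := hτ
    have hτbig : ∀ c ∈ τ, bigp c := fun c hc => (Finset.mem_filter.1 (hτBig hc)).2
    set E : Finset ↥(pCosets p G) :=
      Finset.univ.filter (fun e => ¬ bigp e ∧ ∀ c ∈ τ, e ≤ c) with hE
    -- the fiber is {τ} ∪ {insert e τ | e ∈ E}
    have hset : C.filter (fun σ => σ.filter bigp = τ)
        = insert τ (E.image (fun e => insert e τ)) := by
      ext σ
      rw [Finset.mem_filter, Finset.mem_insert, Finset.mem_image, hC,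
        Finset.mem_filter, Finset.mem_powerset]
      constructor
      · rintro ⟨⟨-, hne, hch⟩, heq⟩
        have hsplit : σ = τ ∪ σ.filter (fun c => ¬ bigp c) := by
          rw [← heq, Finset.filter_union_filter_not_eq]
        by_cases hx : σ.filter (fun c => ¬ bigp c) = ∅
        · left; rw [hsplit, hx, Finset.union_empty]
        · right
          obtain ⟨e, he⟩ := Finset.nonempty_iff_ne_empty.2 hx
          have he' := Finset.mem_filter.1 he
          refine ⟨e, ?_, ?_⟩
          · rw [hE, Finset.mem_filter]
            refine ⟨Finset.mem_univ _, he'.2, fun c hc => ?_⟩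
            have hcσ : c ∈ σ := by rw [← heq] at hc; exact (Finset.mem_filter.1 hc).1
            have hcbig : bigp c := hτbig c hc
            rcases eq_or_ne e c with rfl | hec
            · exact le_rfl
            · rcases hch he'.1 hcσ hec with h | h
              · exact h
              · exfalso
                obtain ⟨g, hg⟩ := small_eq_singleton he'.2
                have : (c : Set G).ncard ≤ (e : Set G).ncard :=
                  Set.ncard_le_ncard h (Set.toFinite _)
                rw [hg, Set.ncard_singleton] at this
                rw [hbigp] at hcbig
                omega
          · -- σ = insert e τ : the small part is exactly {e}
            have hsing : σ.filter (fun c => ¬ bigp c) = {e} := by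
              rw [Finset.eq_singleton_iff_unique_mem]
              refine ⟨he, fun b hb => ?_⟩
              have hb' := Finset.mem_filter.1 hb
              rcases eq_or_ne b e with rfl | hbe
              · rfl
              · obtain ⟨g, hg⟩ := small_eq_singleton hb'.2
                obtain ⟨g', hg'⟩ := small_eq_singleton he'.2
                rcases hch hb'.1 he'.1 hbe with h | h
                · apply Subtype.ext
                  rw [hg, hg']
                  have : ({g} : Set G) ⊆ {g'} := by rw [← hg, ← hg']; exact h
                  simpa using this
                · apply Subtype.ext
                  rw [hg, hg']
                  have : ({g'} : Set G) ⊆ {g} := by rw [← hg, ← hg']; exact h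
                  have := Set.singleton_subset_singleton.1 this
                  simp [this]
            rw [hsplit, hsing, Finset.union_comm]
            rfl
      · have hins : ∀ e ∈ E, insert e τ ∈ C ∧ (insert e τ).filter bigp = τ := by
          intro e he
          rw [hE, Finset.mem_filter] at he
          obtain ⟨-, hesmall, hele⟩ := he
          have heτ : e ∉ τ := fun h => hesmall (hτbig e h)
          constructor
          · rw [hC, Finset.mem_filter, Finset.mem_powerset]
            refine ⟨Finset.subset_univ _, Finset.insert_nonempty _ _, ?_⟩
            rw [Finset.coe_insert]
            exact hτch.insert (fun c hc _ => Or.inl (hele c hc))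
          · rw [Finset.filter_insert, if_neg hesmall, Finset.filter_true_of_mem hτbig]
        rintro (rfl | ⟨e, he, rfl⟩)
        · refine ⟨⟨Finset.subset_univ _, hτne, hτch⟩, Finset.filter_true_of_mem hτbig⟩
        · obtain ⟨h1, h2⟩ := hins e he
          rw [hC, Finset.mem_filter, Finset.mem_powerset] at h1
          exact ⟨h1, h2⟩
    rw [hset]
    have hτE : τ ∉ E.image (fun e => insert e τ) := by
      rw [Finset.mem_image]
      rintro ⟨e, he, heq⟩
      rw [hE, Finset.mem_filter] at he
      have heτ : e ∉ τ := fun h => he.2.1 (hτbig e h)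
      have : e ∈ τ := by rw [← heq]; exact Finset.mem_insert_self e τ
      exact heτ this
    rw [Finset.sum_insert hτE, Finset.sum_image ?inj2]
    case inj2 =>
      intro e he e' he' h
      rw [Finset.mem_coe, hE, Finset.mem_filter] at he he'
      have heτ : e ∉ τ := fun hh => he.2.1 (hτbig e hh)
      have heτ' : e' ∉ τ := fun hh => he'.2.1 (hτbig e' hh)
      have : e ∈ insert e' τ := by rw [← show insert e τ = insert e' τ from h]; exact Finset.mem_insert_self e τ
      rcases Finset.mem_insert.1 this with h1 | h1
      · exact h1
      · exact absurd h1 heτ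
    -- compute the sums
    obtain ⟨m, hm, hmin⟩ := chain_exists_min hτne hτch
    have hminset : τ.filter (fun a => ∀ b ∈ τ, a ≤ b) = {m} := by
      rw [Finset.eq_singleton_iff_unique_mem, Finset.mem_filter]
      refine ⟨⟨hm, hmin⟩, fun b hb => ?_⟩
      rw [Finset.mem_filter] at hb
      exact le_antisymm (hb.2 m hm) (hmin b hb.1)
    have hcard : ∀ e ∈ E, (insert e τ).card = τ.card + 1 := by
      intro e he
      rw [hE, Finset.mem_filter] at he
      exact Finset.card_insert_of_notMem (fun h => he.2.1 (hτbig e h))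
    have hEcard : (E.card : ℤ) = ((m : Set G).ncard : ℤ) := by
      have : E.card = (m : Set G).toFinset.card := by
        symm
        refine Finset.card_bij (fun g _ => mkP p g) ?_ ?_ ?_
        · intro g hg
          rw [Set.mem_toFinset] at hg
          rw [hE, Finset.mem_filter]
          refine ⟨Finset.mem_univ _, ?_, fun c hc => ?_⟩
          · show ¬ 1 < ((mkP p g : ↥(pCosets p G)) : Set G).ncard
            have : ((mkP p g : ↥(pCosets p G)) : Set G) = {g} := rfl
            rw [this, Set.ncard_singleton]
            omega
          · show ((mkP p g : ↥(pCosets p G)) : Set G) ⊆ (c : Set G)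
            have : ((mkP p g : ↥(pCosets p G)) : Set G) = {g} := rfl
            rw [this, Set.singleton_subset_iff]
            exact hmin c hc hg
        · intro g _ g' _ h
          have := congrArg (fun c : ↥(pCosets p G) => (c : Set G)) h
          simpa [mkP] using this
        · intro e he
          rw [hE, Finset.mem_filter] at he
          obtain ⟨g, hg⟩ := small_eq_singleton he.2.1
          refine ⟨g, ?_, Subtype.ext hg.symm⟩
          rw [Set.mem_toFinset]
          have := he.2.2 m hm
          rw [le_iff_subset, hg, Set.singleton_subset_iff] at this
          exact this
      rw [this, ← Set.ncard_eq_toFinset_card']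
    rw [hminset, Finset.sum_singleton]
    have hrw : ∀ e ∈ E, (-1 : ℤ) ^ ((insert e τ).card + 1) = -(-1 : ℤ) ^ (τ.card + 1) := by
      intro e he
      rw [hcard e he, pow_succ, pow_succ]
      ring_nf
    rw [Finset.sum_congr rfl hrw, Finset.sum_const, nsmul_eq_mul, hEcard]
    ring
  -- assemble
  have hle : ∀ b ∈ Big, b ≤ Fmap p b := fun b _ => le_Fmap b
  have hFD : ∀ b ∈ Big, Fmap p b ∈ Big := by
    intro b hb
    rw [hBig, Finset.mem_filter] at hb ⊢
    refine ⟨Finset.mem_univ _, ?_⟩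
    have h1 : (b : Set G).ncard ≤ ((Fmap p b : ↥(pCosets p G)) : Set G).ncard :=
      Set.ncard_le_ncard (le_Fmap b) (Set.toFinite _)
    have h2 : 1 < (b : Set G).ncard := hb.2
    show 1 < ((Fmap p b : ↥(pCosets p G)) : Set G).ncard
    omega
  have hFeq : ∀ a ∈ Big, ∀ b ∈ Big, a ≤ b → Fmap p a = Fmap p b := by
    intro a ha b hb hab
    rw [hBig, Finset.mem_filter] at ha hb
    exact Fmap_eq hTI ha.2 hb.2 hab
  have hcone := cone_sum Big (Fmap p) (fun a => 1 - ((a : Set G).ncard : ℤ)) hle hFD hFeq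
  rw [← hBigC] at hcone
  have hmain : posetEulerChar ↥(pCosets p G)
      = (Fintype.card G : ℤ)
        + ∑ t ∈ Big.filter (fun t => Fmap p t = t), (1 - ((t : Set G).ncard : ℤ)) := by
    rw [h0, h1]
    have hmem0 : (∅ : Finset ↥(pCosets p G)) ∈ (Finset.univ : Finset ↥(pCosets p G)).powerset :=
      Finset.mem_powerset.2 (Finset.empty_subset _)
    rw [← Finset.add_sum_erase _ _ hmem0, hfib_empty]
    congr 1
    have hsub : BigC ⊆ ((Finset.univ : Finset ↥(pCosets p G)).powerset).erase ∅ := by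
      intro τ hτ
      rw [Finset.mem_erase]
      rw [hBigC, Finset.mem_filter] at hτ
      exact ⟨Finset.nonempty_iff_ne_empty.1 hτ.2.1, Finset.mem_powerset.2 (Finset.subset_univ _)⟩
    rw [← Finset.sum_subset hsub (fun τ hτ hnot =>
      hfib_zero τ (Finset.mem_erase.1 hτ).1 hnot)]
    rw [Finset.sum_congr rfl hfib_big]
    convert hcone using 2 with τ hτ
    congr!
  rw [hmain]
  by_cases hdvd : p ∣ Fintype.card G
  · have hcard0 : Fintype.card G ≠ 0 := Fintype.card_ne_zero
    have hn : (Fintype.card G).factorization p ≠ 0 :=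
      (Nat.Prime.factorization_pos_of_dvd hp hcard0 hdvd).ne'
    have hSCbig : ∀ c : ↥(pCosets p G), isSC p c → bigp c := by
      intro c hc
      show 1 < (c : Set G).ncard
      rw [ncard_SC hc]
      exact Nat.one_lt_pow hn hp.one_lt
    have hset2 : Big.filter (fun t => Fmap p t = t)
        = Finset.univ.filter (fun c : ↥(pCosets p G) => isSC p c) := by
      ext c
      rw [Finset.mem_filter, hBig, Finset.mem_filter, Finset.mem_filter]
      constructor
      · rintro ⟨⟨-, _⟩, hfix⟩
        exact ⟨Finset.mem_univ _, (Fmap_fix_iff c).1 hfix⟩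
      · rintro ⟨-, hsc⟩
        exact ⟨⟨Finset.mem_univ _, hSCbig c hsc⟩, (Fmap_fix_iff c).2 hsc⟩
    rw [hset2]
    have hval : ∀ c ∈ Finset.univ.filter (fun c : ↥(pCosets p G) => isSC p c),
        (1 - ((c : Set G).ncard : ℤ))
          = 1 - ((p ^ (Fintype.card G).factorization p : ℕ) : ℤ) := by
      intro c hc
      rw [ncard_SC (Finset.mem_filter.1 hc).2]
    rw [Finset.sum_congr rfl hval, Finset.sum_const, nsmul_eq_mul]
    have hA : ((Finset.univ.filter (fun c : ↥(pCosets p G) => isSC p c)).card : ℤ)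
        * ((p ^ (Fintype.card G).factorization p : ℕ) : ℤ)
        = (Nat.card (Sylow p G) : ℤ) * (Fintype.card G : ℤ) := by
      exact_mod_cast card_SC_mul (p := p) (G := G)
    have hB : ((p ^ (Fintype.card G).factorization p : ℕ) : ℤ)
        * ((ordCompl[p] (Fintype.card G) : ℕ) : ℤ) = (Fintype.card G : ℤ) := by
      exact_mod_cast Nat.ordProj_mul_ordCompl_eq_self (Fintype.card G) p
    have hn0 : ((p ^ (Fintype.card G).factorization p : ℕ) : ℤ) ≠ 0 := by
      have : 0 < p ^ (Fintype.card G).factorization p := pow_pos hp.pos _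
      exact_mod_cast this.ne'
    have hNZ : ((Finset.univ.filter (fun c : ↥(pCosets p G) => isSC p c)).card : ℤ)
        = (Nat.card (Sylow p G) : ℤ) * ((ordCompl[p] (Fintype.card G) : ℕ) : ℤ) := by
      apply mul_right_cancel₀ hn0
      rw [hA, ← hB]
      ring
    rw [hNZ]
    linear_combination (-(Nat.card (Sylow p G) : ℤ)) * hB
  · have hBige : Big = ∅ := by
      rw [hBig, Finset.filter_eq_empty_iff]
      intro c _
      show ¬ 1 < (c : Set G).ncard
      intro hbig
      obtain ⟨H, x, hH, hc, hbot⟩ := big_rep hbig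
      obtain ⟨k, hk⟩ := IsPGroup.iff_card.1 hH
      have hk0 : k ≠ 0 := by
        rintro rfl
        rw [pow_zero] at hk
        exact hbot (Subgroup.card_eq_one.1 hk)
      apply hdvd
      rw [← Nat.card_eq_fintype_card]
      calc p ∣ p ^ k := dvd_pow_self p hk0
      _ = Nat.card H := hk.symm
      _ ∣ Nat.card G := Subgroup.card_subgroup_dvd_card H
    rw [hBige]
    rw [Finset.filter_empty, Finset.sum_empty, add_zero]
    have hfz : (Fintype.card G).factorization p = 0 :=
      Nat.factorization_eq_zero_of_not_dvd hdvd
    have hs1 : Nat.card (Sylow p G) = 1 := by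
      rw [Nat.card_eq_one_iff_unique]
      refine ⟨⟨fun Q R => ?_⟩, inferInstance⟩
      have hbotS : ∀ S : Sylow p G, (S : Subgroup G) = ⊥ := by
        intro S
        have h1 := Sylow.card_eq_multiplicity S
        have hfz' : (Nat.card G).factorization p = 0 := by
          rw [Nat.card_eq_fintype_card]; exact hfz
        rw [hfz', pow_zero] at h1
        exact Subgroup.card_eq_one.1 h1
      apply Sylow.ext
      rw [hbotS Q, hbotS R]
    have hord : ordCompl[p] (Fintype.card G) = Fintype.card G := by
      rw [hfz, pow_zero, Nat.div_one]
    rw [hs1, hord]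
    push_cast
    ring
end

section
/- Let G be a finite group and P a Sylow 2-subgroup of G. Suppose |P| = 2 and the index of the normalizer N_G(P) in G is 3. Then G is isomorphic to S_3 × A for some finite group A of odd order, where S_3 is the symmetric group on 3 letters. -/
/-- If `P` is a Sylow `2`-subgroup of the finite group `G` with `|P| = 2` and
`|G : N_G(P)| = 3`, then `G ≅ S₃ × A` for some finite group `A` of odd order. -/
theorem isoS3ProdOdd_of_sylow_two_card_two_index_normalizer_three {G : Type*} [Group G]
    [Fintype G] (P : Sylow 2 G) (hP : Nat.card ↥(P : Subgroup G) = 2)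
    (hN : (Subgroup.normalizer ((P : Subgroup G) : Set G)).index = 3) :
    ∃ (A : Type) (_ : Group A) (_ : Fintype A), Odd (Fintype.card A) ∧
      Nonempty (G ≃* Equiv.Perm (Fin 3) × A) := by
  classical
  haveI : Fact (Nat.Prime 2) := ⟨Nat.prime_two⟩
  -- the involution t
  obtain ⟨t, htP, ht1⟩ : ∃ t ∈ (P : Subgroup G), t ≠ 1 := by
    have hnt : Nontrivial ↥(P : Subgroup G) := by
      rw [← Finite.one_lt_card_iff_nontrivial, hP]; norm_num
    obtain ⟨a, ha⟩ := exists_ne (1 : ↥(P : Subgroup G))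
    exact ⟨a, a.2, fun h => ha (Subtype.ext h)⟩
  have hPset : ((P : Subgroup G) : Set G) = {1, t} := by
    refine (Set.eq_of_subset_of_ncard_le ?_ ?_ (Set.toFinite _)).symm
    · rintro g (rfl | rfl)
      · exact one_mem _
      · exact htP
    · rw [Set.ncard_pair ht1.symm, ← Nat.card_coe_set_eq]
      exact hP.le
  have hmemP : ∀ g ∈ (P : Subgroup G), g = 1 ∨ g = t := by
    intro g hg
    have : g ∈ ({1, t} : Set G) := hPset ▸ hg
    simpa using this
  have ht2 : t * t = 1 := by
    rcases hmemP _ (mul_mem htP htP) with h | h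
    · exact h
    · exact absurd (mul_eq_right.mp h) ht1
  have htinv : t⁻¹ = t := inv_eq_of_mul_eq_one_right ht2
  have hcomm : ∀ g ∈ Subgroup.normalizer ((P : Subgroup G) : Set G), g * t = t * g := by
    intro g hg
    rw [Subgroup.mem_normalizer_iff] at hg
    have h1 : g * t * g⁻¹ ∈ (P : Subgroup G) := (hg t).mp htP
    rcases hmemP _ h1 with h | h
    · exfalso; apply ht1
      have := congrArg (fun y => g⁻¹ * y * g) h
      simpa [mul_assoc] using this
    · have := congrArg (fun y => y * g) h
      simpa [mul_assoc] using this
  have hmemN : ∀ g, g ∈ Subgroup.normalizer ((P : Subgroup G) : Set G) ↔ g * t = t * g := by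
    intro g
    refine ⟨hcomm g, fun hg => ?_⟩
    rw [Subgroup.mem_normalizer_iff]
    intro u
    constructor
    · intro hu
      rcases hmemP _ hu with h1 | h1
      · rw [h1]; simpa using one_mem _
      · rw [h1]
        have : g * t * g⁻¹ = t := by
          rw [hg]; group
        rw [this]; exact htP
    · intro hu
      rcases hmemP _ hu with h1 | h1
      · have : u = 1 := by
          have := congrArg (fun y => g⁻¹ * y * g) h1
          simpa [mul_assoc] using this
        rw [this]; exact one_mem _
      · have : u = t := by
          have h2 : g * u * g⁻¹ = g * t * g⁻¹ := by rw [h1, hg]; group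
          have := mul_left_cancel (mul_right_cancel h2)
          exact this
        rw [this]; exact htP
  have htN : t ∈ Subgroup.normalizer ((P : Subgroup G) : Set G) := (hmemN t).mpr rfl
  -- normalizer ≤ centralizer
  have hPle : Subgroup.normalizer ((P : Subgroup G) : Set G) ≤ Subgroup.centralizer (P : Subgroup G) := by
    intro g hg
    rw [Subgroup.mem_centralizer_iff]
    intro h hh
    rcases hmemP _ hh with rfl | rfl
    · simp
    · exact (hcomm g hg).symm
  -- Burnside normal complement
  set K : Subgroup G := (MonoidHom.transferSylow P hPle).ker with hKdef
  have hKP : Subgroup.IsComplement' K (P : Subgroup G) :=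
    MonoidHom.ker_transferSylow_isComplement' P hPle
  haveI hKnormal : K.Normal := MonoidHom.normal_ker _
  have hK2 : ¬ (2 ∣ Nat.card K) := MonoidHom.not_dvd_card_ker_transferSylow P hPle
  have hKodd : Odd (Nat.card K) := by
    rcases Nat.even_or_odd (Nat.card K) with h | h
    · exact absurd h.two_dvd hK2
    · exact h
  have hKcard : Nat.card K * 2 = Nat.card G := by
    have := hKP.card_mul
    rwa [hP] at this
  have htK : t ∉ K := by
    intro htK
    exact ht1 (Subgroup.mem_bot.mp (hKP.disjoint.le_bot ⟨htK, htP⟩))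
  have hoddK : ∀ g ∈ K, Odd (orderOf g) := by
    intro g hg
    have hdvd := Subgroup.orderOf_dvd_natCard K hg
    rcases Nat.even_or_odd (orderOf g) with h | h
    · exact absurd (h.two_dvd.trans hdvd) hK2
    · exact h
  -- cardinality of C := K ⊓ N
  set N : Subgroup G := Subgroup.normalizer ((P : Subgroup G) : Set G) with hNdef
  set C : Subgroup G := K ⊓ N with hCdef
  have hKindex : K.index = 2 := by
    have h1 := Subgroup.card_mul_index K
    rw [← hKcard] at h1
    exact Nat.eq_of_mul_eq_mul_left Nat.card_pos h1
  have hrel : K.relIndex N = 2 := by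
    have hdvd : K.relIndex N ∣ 2 := hKindex ▸ Subgroup.relIndex_dvd_index_of_normal K N
    have hne1 : K.relIndex N ≠ 1 := by
      intro h
      exact htK (Subgroup.relIndex_eq_one.mp h htN)
    have hne0 : K.relIndex N ≠ 0 := by
      have : (K.subgroupOf N).index ≠ 0 := Subgroup.index_ne_zero_of_finite
      exact this
    rcases (Nat.dvd_prime Nat.prime_two).mp hdvd with h | h
    · exact absurd h hne1
    · exact h
  have hCN : Nat.card C * 2 = Nat.card N := by
    have h1 : Nat.card (C.subgroupOf N) * (C.subgroupOf N).index = Nat.card N :=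
      Subgroup.card_mul_index _
    have h2 : Nat.card (C.subgroupOf N) = Nat.card C := by
      have hle : C ≤ N := inf_le_right
      exact Nat.card_congr (Subgroup.subgroupOfEquivOfLe hle).toEquiv
    have h3 : (C.subgroupOf N).index = K.relIndex N := by
      have : (C.subgroupOf N).index = C.relIndex N := rfl
      rw [this, hCdef, Subgroup.inf_relIndex_right]
    rw [h2, h3, hrel] at h1
    exact h1
  have hG6 : Nat.card G = 6 * Nat.card C := by
    have h1 : Nat.card N * N.index = Nat.card G := Subgroup.card_mul_index N
    rw [hN, ← hCN] at h1
    omega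
  have hK3C : Nat.card K = 3 * Nat.card C := by omega
  -- square roots of odd-order elements
  have key : ∀ a : G, t * (t * a) = a := by
    intro a; rw [← mul_assoc, ht2, one_mul]
  set sq : G → G := fun g => g ^ ((orderOf g + 1) / 2) with hsqdef
  have hsq : ∀ g : G, Odd (orderOf g) → sq g * sq g = g := by
    intro g hg
    obtain ⟨j, hj⟩ := hg
    have h2 : (orderOf g + 1) / 2 + (orderOf g + 1) / 2 = orderOf g + 1 := by omega
    show g ^ ((orderOf g + 1) / 2) * g ^ ((orderOf g + 1) / 2) = g
    rw [← pow_add, h2, pow_succ, pow_orderOf_eq_one, one_mul]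
  -- the set of elements of K inverted by t
  set S : Set G := {g | g ∈ K ∧ t * g * t = g⁻¹} with hSdef
  have h1S : (1 : G) ∈ S := ⟨one_mem K, by simp [ht2]⟩
  have hSpow : ∀ s ∈ S, ∀ n : ℕ, s ^ n ∈ S := by
    rintro s ⟨hsK, hs⟩ n
    refine ⟨pow_mem hsK n, ?_⟩
    have h0 : t * s ^ n * t = (t * s * t) ^ n := by
      have h1 : t * s * t = t * s * t⁻¹ := by rw [htinv]
      have h2 : t * s ^ n * t = t * s ^ n * t⁻¹ := by rw [htinv]
      rw [h1, h2, conj_pow]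
    rw [h0, hs, inv_pow]
  have hSinv : ∀ s ∈ S, s⁻¹ ∈ S := by
    rintro s ⟨hsK, hs⟩
    refine ⟨inv_mem hsK, ?_⟩
    have h0 : t * s⁻¹ * t = (t * s * t)⁻¹ := by
      simp [mul_inv_rev, htinv, mul_assoc]
    rw [h0, hs, inv_inv]
  set F : G → G := fun g => g⁻¹ * (t * g * t) with hFdef
  have hFS : ∀ k ∈ K, F k ∈ S := by
    intro k hk
    constructor
    · refine mul_mem (inv_mem hk) ?_
      have := hKnormal.conj_mem k hk t
      rwa [htinv] at this
    · show t * (k⁻¹ * (t * k * t)) * t = (k⁻¹ * (t * k * t))⁻¹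
      simp only [mul_inv_rev, htinv, mul_assoc, key, ht2, mul_one, inv_inv]
  have hFcoset : ∀ c k : G, c * t = t * c → F (c * k) = F k := by
    intro c k hc
    show (c * k)⁻¹ * (t * (c * k) * t) = k⁻¹ * (t * k * t)
    have h1 : t * (c * (k * t)) = c * (t * (k * t)) := by
      rw [← mul_assoc, ← hc, mul_assoc]
    simp only [mul_inv_rev, mul_assoc, h1, inv_mul_cancel_left]
  have hFsq : ∀ s ∈ S, F (sq s)⁻¹ = s := by
    intro s hs
    have hodd : Odd (orderOf s) := hoddK s hs.1
    have hr : sq s ∈ S := hSpow s hs _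
    have hri : (sq s)⁻¹ ∈ S := hSinv _ hr
    show ((sq s)⁻¹)⁻¹ * (t * (sq s)⁻¹ * t) = s
    rw [hri.2, inv_inv]
    exact hsq s hodd
  have hkt : ∀ k ∈ K, t * k * t = k * F k := by
    intro k hk
    show t * k * t = k * (k⁻¹ * (t * k * t))
    rw [mul_inv_cancel_left]
  have hdec : ∀ k ∈ K, k * sq (F k) ∈ C := by
    intro k hk
    have hsK : F k ∈ S := hFS k hk
    have hodd : Odd (orderOf (F k)) := hoddK _ hsK.1
    have hrS : sq (F k) ∈ S := hSpow _ hsK _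
    have hrK : sq (F k) ∈ K := hrS.1
    have h1 : t * (k * sq (F k)) * t = k * sq (F k) := by
      calc t * (k * sq (F k)) * t = (t * k * t) * (t * sq (F k) * t) := by
            simp only [mul_assoc, key]
        _ = (k * F k) * (sq (F k))⁻¹ := by rw [hkt k hk, hrS.2]
        _ = k * (sq (F k) * sq (F k)) * (sq (F k))⁻¹ := by rw [hsq _ hodd]
        _ = k * sq (F k) := by group
    refine Subgroup.mem_inf.mpr ⟨mul_mem hk hrK, (hmemN _).mpr ?_⟩
    have h2 := congrArg (fun y => y * t) h1
    simp only [mul_assoc, ht2, mul_one] at h2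
    simp only [mul_assoc]
    exact h2.symm
  -- the bijection K ≃ C × S
  have hCmemt : ∀ c ∈ C, c * t = t * c := fun c hc => hcomm c hc.2
  have e : ↥K ≃ ↥C × ↥S :=
    { toFun := fun k => (⟨(k : G) * sq (F (k : G)), hdec k k.2⟩, ⟨F (k : G), hFS k k.2⟩)
      invFun := fun cs => ⟨(cs.1 : G) * (sq (cs.2 : G))⁻¹,
        mul_mem cs.1.2.1 (inv_mem (hSpow _ cs.2.2 _).1)⟩
      left_inv := by
        intro k
        apply Subtype.ext
        show (k : G) * sq (F (k : G)) * (sq (F (k : G)))⁻¹ = k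
        rw [mul_inv_cancel_right]
      right_inv := by
        rintro ⟨c, s⟩
        have hFk : F ((c : G) * (sq (s : G))⁻¹) = s := by
          rw [hFcoset c _ (hCmemt c c.2), hFsq s s.2]
        apply Prod.ext
        · apply Subtype.ext
          show (c : G) * (sq (s : G))⁻¹ * sq (F ((c : G) * (sq (s : G))⁻¹)) = c
          rw [hFk, inv_mul_cancel_right]
        · apply Subtype.ext
          show F ((c : G) * (sq (s : G))⁻¹) = s
          exact hFk }
  have hScard : Nat.card ↥S = 3 := by
    have h1 : Nat.card ↥K = Nat.card ↥C * Nat.card ↥S := by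
      rw [Nat.card_congr e, Nat.card_prod]
    rw [hK3C, mul_comm 3 (Nat.card ↥C)] at h1
    exact (Nat.eq_of_mul_eq_mul_left Nat.card_pos h1).symm
  -- choose the element x of order 3
  obtain ⟨xs, hxs⟩ : ∃ xs : ↥S, xs ≠ (⟨1, h1S⟩ : ↥S) := by
    have hnt : Nontrivial ↥S := by
      rw [← Finite.one_lt_card_iff_nontrivial, hScard]; norm_num
    exact exists_ne _
  obtain ⟨x, hxS⟩ := xs
  have hx1 : x ≠ 1 := fun h => hxs (Subtype.ext h)
  have hxK : x ∈ K := hxS.1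
  have hxinv : t * x * t = x⁻¹ := hxS.2
  have hzp : ((Subgroup.zpowers x : Subgroup G) : Set G) ⊆ S := by
    intro g hg
    rw [SetLike.mem_coe, Subgroup.mem_zpowers_iff] at hg
    obtain ⟨k, rfl⟩ := hg
    cases k with
    | ofNat n => rw [Int.ofNat_eq_coe, zpow_natCast]; exact hSpow x hxS n
    | negSucc n => rw [zpow_negSucc]; exact hSinv _ (hSpow x hxS (n + 1))
  have hx3 : orderOf x = 3 := by
    have hle : orderOf x ≤ 3 := by
      rw [← Nat.card_zpowers]
      calc Nat.card (Subgroup.zpowers x)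
          = ((Subgroup.zpowers x : Subgroup G) : Set G).ncard := by
            rw [← Nat.card_coe_set_eq]; rfl
        _ ≤ S.ncard := Set.ncard_le_ncard hzp (Set.toFinite S)
        _ = 3 := by rw [← Nat.card_coe_set_eq, hScard]
    have hne1 : orderOf x ≠ 1 := fun h => hx1 (orderOf_eq_one_iff.mp h)
    obtain ⟨j, hj⟩ := hoddK x hxK
    omega
  have hx3inv : x⁻¹ ≠ x := by
    intro h
    have h2 : x ^ 2 = 1 := by
      rw [pow_two]
      nth_rewrite 1 [← h]
      rw [inv_mul_cancel]
    have := orderOf_dvd_of_pow_eq_one h2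
    rw [hx3] at this
    norm_num at this
  have hSet : S = {1, x, x⁻¹} := by
    have h3 : ({1, x, x⁻¹} : Set G).ncard = 3 := by
      have h1notin : (1 : G) ∉ ({x, x⁻¹} : Set G) := by
        intro h
        simp only [Set.mem_insert_iff, Set.mem_singleton_iff] at h
        rcases h with h | h
        · exact hx1 h.symm
        · exact hx1 (inv_eq_one.mp h.symm)
      rw [Set.ncard_insert_of_notMem h1notin (Set.toFinite _),
        Set.ncard_pair (Ne.symm hx3inv)]
    refine (Set.eq_of_subset_of_ncard_le ?_ ?_ (Set.toFinite _)).symm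
    · rintro g (rfl | rfl | rfl)
      · exact h1S
      · exact hxS
      · exact hSinv x hxS
    · rw [h3, ← Nat.card_coe_set_eq, hScard]
  have hmemS : ∀ g ∈ S, g = 1 ∨ g = x ∨ g = x⁻¹ := by
    intro g hg
    rw [hSet] at hg
    simpa using hg
  -- the subgroup T = <x> and the subgroup N₀ = T * P
  set T : Subgroup G := Subgroup.zpowers x with hTdef
  have hxT : x ∈ T := Subgroup.mem_zpowers x
  have hxiT : x⁻¹ ∈ T := inv_mem hxT
  have hmemT : ∀ g ∈ T, g = 1 ∨ g = x ∨ g = x⁻¹ := fun g hg => hmemS g (hzp hg)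
  have hTK : ∀ g ∈ T, g ∈ K := fun g hg => (hzp hg).1
  have hST : S ⊆ (T : Set G) := by
    rw [hSet]
    rintro g (rfl | rfl | rfl)
    · exact one_mem T
    · exact hxT
    · exact hxiT
  have hconjtT : ∀ τ ∈ T, t * τ * t ∈ T := by
    intro τ hτ
    rcases hmemT τ hτ with rfl | rfl | rfl
    · rw [mul_one, ht2]; exact one_mem T
    · rw [hxinv]; exact hxiT
    · rw [(hSinv x hxS).2, inv_inv]; exact hxT
  have hconjP : ∀ p ∈ (P : Subgroup G), ∀ τ ∈ T, p * τ * p⁻¹ ∈ T := by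
    intro p hp τ hτ
    rcases hmemP p hp with rfl | rfl
    · simpa using hτ
    · rw [htinv]; exact hconjtT τ hτ
  set N₀ : Subgroup G :=
    { carrier := {g | ∃ τ ∈ T, ∃ p ∈ (P : Subgroup G), τ * p = g}
      one_mem' := ⟨1, one_mem T, 1, one_mem _, one_mul 1⟩
      mul_mem' := by
        rintro a b ⟨τ₁, hτ₁, p₁, hp₁, rfl⟩ ⟨τ₂, hτ₂, p₂, hp₂, rfl⟩
        exact ⟨τ₁ * (p₁ * τ₂ * p₁⁻¹), mul_mem hτ₁ (hconjP p₁ hp₁ τ₂ hτ₂),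
          p₁ * p₂, mul_mem hp₁ hp₂, by group⟩
      inv_mem' := by
        rintro a ⟨τ, hτ, p, hp, rfl⟩
        exact ⟨p⁻¹ * τ⁻¹ * (p⁻¹)⁻¹, hconjP p⁻¹ (inv_mem hp) τ⁻¹ (inv_mem hτ),
          p⁻¹, inv_mem hp, by group⟩ } with hN₀def
  have hmemN₀ : ∀ g, g ∈ N₀ ↔ ∃ τ ∈ T, ∃ p ∈ (P : Subgroup G), τ * p = g := fun g => Iff.rfl
  have hxN₀ : x ∈ N₀ := ⟨x, hxT, 1, one_mem _, mul_one x⟩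
  have htN₀ : t ∈ N₀ := ⟨1, one_mem T, t, htP, one_mul t⟩
  have hPN₀ : (P : Subgroup G) ≤ N₀ := fun p hp => ⟨1, one_mem T, p, hp, one_mul p⟩
  -- C centralizes x
  have hCconj : ∀ c ∈ C, c * x * c⁻¹ ∈ S := by
    intro c hc
    have hcK : c ∈ K := hc.1
    have hct : c * t = t * c := hcomm c hc.2
    have hct' : t * c⁻¹ = c⁻¹ * t := by
      have := congrArg (fun y => c⁻¹ * y * c⁻¹) hct
      simpa [mul_assoc] using this
    refine ⟨mul_mem (mul_mem hcK hxK) (inv_mem hcK), ?_⟩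
    calc t * (c * x * c⁻¹) * t = (t * c) * x * (c⁻¹ * t) := by group
      _ = (c * t) * x * (t * c⁻¹) := by rw [← hct, hct']
      _ = c * (t * x * t) * c⁻¹ := by group
      _ = c * x⁻¹ * c⁻¹ := by rw [hxinv]
      _ = (c * x * c⁻¹)⁻¹ := by group
  have hCx : ∀ c ∈ C, c * x = x * c := by
    intro c hc
    rcases hmemS _ (hCconj c hc) with h | h | h
    · exfalso
      apply hx1
      have := congrArg (fun y => c⁻¹ * y * c) h
      simpa [mul_assoc] using this
    · have := congrArg (fun y => y * c) h
      simpa [mul_assoc] using this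
    · exfalso
      have hc2 : Commute x (c * c) := by
        have h1 : c * (c * x * c⁻¹) * c⁻¹ = x := by
          rw [h]
          have : c * x⁻¹ * c⁻¹ = (c * x * c⁻¹)⁻¹ := by group
          rw [this, h, inv_inv]
        show x * (c * c) = (c * c) * x
        have := congrArg (fun y => c * c * y * c * c) h1.symm
        simp only [mul_assoc] at this ⊢
        simpa [mul_assoc] using this
      obtain ⟨j, hj⟩ := hoddK c hc.1
      have hcc : c = (c * c) ^ (j + 1) := by
        have h2 : (c * c) ^ (j + 1) = c ^ (2 * (j + 1)) := by
          rw [← pow_two, ← pow_mul]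
        rw [h2, show 2 * (j + 1) = orderOf c + 1 by omega, pow_succ,
          pow_orderOf_eq_one, one_mul]
      have hcx : Commute x c := by
        have := hc2.pow_right (j + 1)
        rwa [← hcc] at this
      have hfix : c * x * c⁻¹ = x := by
        rw [← hcx.eq, mul_inv_cancel_right]
      rw [hfix] at h
      exact hx3inv h.symm
  have hxC : x ∉ C := by
    intro hxC
    apply hx3inv
    have h1 := hcomm x hxC.2
    rw [← hxinv]
    calc t * x * t = x * t * t := by rw [← h1]
      _ = x := by rw [mul_assoc, ht2, mul_one]
  have hxiC : x⁻¹ ∉ C := fun h => hxC (by simpa using inv_mem h)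
  -- C commutes with N₀ elementwise
  have hCT : ∀ c ∈ C, ∀ τ ∈ T, c * τ = τ * c := by
    intro c hc τ hτ
    rcases hmemT τ hτ with rfl | rfl | rfl
    · rw [one_mul, mul_one]
    · exact hCx c hc
    · have h := hCx c hc
      have h0 := congrArg (fun y => x⁻¹ * y * x⁻¹) h
      have h2 : x⁻¹ * c = c * x⁻¹ := by simpa [mul_assoc] using h0
      exact h2.symm
  have hCP : ∀ c ∈ C, ∀ p ∈ (P : Subgroup G), c * p = p * c := by
    intro c hc p hp
    rcases hmemP p hp with rfl | rfl
    · rw [one_mul, mul_one]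
    · exact hcomm c hc.2
  have hCcommN₀ : ∀ c ∈ C, ∀ n ∈ N₀, c * n = n * c := by
    intro c hc n hn
    obtain ⟨τ, hτ, p, hp, rfl⟩ := hn
    rw [← mul_assoc, hCT c hc τ hτ, mul_assoc, hCP c hc p hp, ← mul_assoc]
  -- N₀ and C intersect trivially
  have hdisj : ∀ g ∈ N₀, g ∈ C → g = 1 := by
    intro g hg hgC
    obtain ⟨τ, hτ, p, hp, rfl⟩ := hg
    rcases hmemP p hp with h | h
    · rw [h, mul_one] at hgC ⊢
      rcases hmemT τ hτ with h2 | h2 | h2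
      · exact h2
      · exact absurd (h2 ▸ hgC) hxC
      · exact absurd (h2 ▸ hgC) hxiC
    · exfalso
      apply htK
      have h1 : τ * t ∈ K := by rw [← h]; exact hgC.1
      have h2 : τ⁻¹ * (τ * t) ∈ K := mul_mem (inv_mem (hTK τ hτ)) h1
      rwa [inv_mul_cancel_left] at h2
  -- N₀ is a complement of C
  have hcompl : Subgroup.IsComplement' N₀ C := by
    constructor
    · rintro ⟨⟨n₁, hn₁⟩, ⟨c₁, hc₁⟩⟩ ⟨⟨n₂, hn₂⟩, ⟨c₂, hc₂⟩⟩ h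
      simp only [Prod.mk.injEq, Subtype.mk.injEq]
      have h' : n₁ * c₁ = n₂ * c₂ := h
      have hg1 : n₂⁻¹ * n₁ = c₂ * c₁⁻¹ := by
        have h'' : n₂⁻¹ * (n₁ * c₁) * c₁⁻¹ = n₂⁻¹ * (n₂ * c₂) * c₁⁻¹ := by rw [h']
        simpa [mul_assoc] using h''
      have hgN : n₂⁻¹ * n₁ ∈ N₀ := mul_mem (inv_mem hn₂) hn₁
      have hgC : n₂⁻¹ * n₁ ∈ C := by rw [hg1]; exact mul_mem hc₂ (inv_mem hc₁)
      have h1 : n₂⁻¹ * n₁ = 1 := hdisj _ hgN hgC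
      have hn : n₁ = n₂ := by
        have := congrArg (fun y => n₂ * y) h1
        simpa [mul_assoc] using this
      refine ⟨hn, ?_⟩
      rw [hn] at h'
      exact mul_left_cancel h'
    · intro g
      obtain ⟨⟨k, p⟩, hkp⟩ := hKP.2 g
      have hkK : (k : G) ∈ K := k.2
      have hcC : (k : G) * sq (F (k : G)) ∈ C := hdec k hkK
      have hsqT : sq (F (k : G)) ∈ T := by
        have hFT : F (k : G) ∈ T := hST (hFS k hkK)
        exact pow_mem hFT _
      have hnN : (sq (F (k : G)))⁻¹ * p ∈ N₀ := ⟨(sq (F (k : G)))⁻¹, inv_mem hsqT, p, p.2, rfl⟩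
      refine ⟨(⟨(sq (F (k : G)))⁻¹ * p, hnN⟩, ⟨(k : G) * sq (F (k : G)), hcC⟩), ?_⟩
      show ((sq (F (k : G)))⁻¹ * p) * ((k : G) * sq (F (k : G))) = g
      rw [← hCcommN₀ _ hcC _ hnN]
      calc (k : G) * sq (F (k : G)) * ((sq (F (k : G)))⁻¹ * p)
          = (k : G) * p := by simp [mul_assoc]
        _ = g := hkp
  have hN₀card : Nat.card ↥N₀ = 6 := by
    have h1 : Nat.card ↥N₀ * Nat.card ↥C = Nat.card G := hcompl.card_mul
    rw [hG6] at h1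
    exact Nat.eq_of_mul_eq_mul_right Nat.card_pos h1
  -- N₀ is isomorphic to S₃ via its action on the cosets of P
  set P' : Subgroup ↥N₀ := (P : Subgroup G).subgroupOf N₀ with hP'def
  have hP'card : Nat.card ↥P' = 2 := by
    rw [← hP]
    exact Nat.card_congr (Subgroup.subgroupOfEquivOfLe hPN₀).toEquiv
  have hQcard : Nat.card (↥N₀ ⧸ P') = 3 := by
    have h1 : Nat.card ↥N₀ = Nat.card (↥N₀ ⧸ P') * Nat.card ↥P' :=
      Subgroup.card_eq_card_quotient_mul_card_subgroup P'
    rw [hN₀card, hP'card] at h1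
    omega
  set π : ↥N₀ →* Equiv.Perm (↥N₀ ⧸ P') := MulAction.toPermHom ↥N₀ (↥N₀ ⧸ P') with hπdef
  have hπinj : Function.Injective π := by
    rw [injective_iff_map_eq_one]
    intro n hn
    have hfix : ∀ a : ↥N₀, ((n * a : ↥N₀) : ↥N₀ ⧸ P') = (a : ↥N₀ ⧸ P') := by
      intro a
      have h1 : (π n) (a : ↥N₀ ⧸ P') = (a : ↥N₀ ⧸ P') := by rw [hn]; rfl
      have h2 : (π n) (a : ↥N₀ ⧸ P') = ((n * a : ↥N₀) : ↥N₀ ⧸ P') := by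
        show n • ((a : ↥N₀) : ↥N₀ ⧸ P') = _
        rw [MulAction.Quotient.smul_mk]
        rfl
      rw [← h2, h1]
    have hnP' : n ∈ P' := by
      have h1 := hfix 1
      rw [mul_one] at h1
      have h2 := QuotientGroup.eq.mp h1
      simpa using inv_mem h2
    have hnP : (n : G) ∈ (P : Subgroup G) := Subgroup.mem_subgroupOf.mp hnP'
    rcases hmemP _ hnP with h | h
    · exact Subtype.ext h
    · exfalso
      set x' : ↥N₀ := ⟨x, hxN₀⟩ with hx'def
      have h1 := hfix x'
      have h2 := QuotientGroup.eq.mp h1.symm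
      have h3 : x⁻¹ * ((n : G) * x) ∈ (P : Subgroup G) := by
        have := Subgroup.mem_subgroupOf.mp h2
        simpa [mul_assoc] using this
      rw [h] at h3
      rcases hmemP _ h3 with h4 | h4
      · apply ht1
        have := congrArg (fun y => x * y) h4
        simp only [mul_one] at this
        rw [← mul_assoc] at this
        have h5 : t * x = x := by
          have h6 := congrArg (fun y => y * x⁻¹) this
          simpa [mul_assoc] using h6
        have := congrArg (fun y => y * x⁻¹) h5
        simpa [mul_assoc] using this
      · apply hx3inv
        -- x⁻¹ * (t * x) = t means t * x = x * t, hence x⁻¹ = t*x*t = x*t*t = x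
        have h5 : t * x = x * t := by
          have := congrArg (fun y => x * y) h4
          simpa [mul_assoc] using this
        rw [← hxinv]
        calc t * x * t = x * t * t := by rw [h5]
          _ = x := by rw [mul_assoc, ht2, mul_one]
  have hπbij : Function.Bijective π := by
    rw [Nat.bijective_iff_injective_and_card]
    refine ⟨hπinj, ?_⟩
    rw [hN₀card, Nat.card_eq_fintype_card (α := Equiv.Perm (↥N₀ ⧸ P')), Fintype.card_perm,
      ← Nat.card_eq_fintype_card, hQcard]
    rfl
  have eq3 : (↥N₀ ⧸ P') ≃ Fin 3 := Finite.equivFinOfCardEq hQcard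
  have permIso : Equiv.Perm (↥N₀ ⧸ P') ≃* Equiv.Perm (Fin 3) :=
    { toEquiv := eq3.permCongr
      map_mul' := by
        intro a b
        ext i
        simp [Equiv.permCongr_apply, Equiv.Perm.mul_apply] }
  have iso1 : ↥N₀ ≃* Equiv.Perm (Fin 3) := (MulEquiv.ofBijective π hπbij).trans permIso
  -- assemble the final isomorphism
  have hcommNC : ∀ (n : ↥N₀) (c : ↥C), Commute (N₀.subtype n) (C.subtype c) :=
    fun n c => (hCcommN₀ c c.2 n n.2).symm
  set φ : ↥N₀ × ↥C →* G := MonoidHom.noncommCoprod N₀.subtype C.subtype hcommNC with hφdef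
  have hφbij : Function.Bijective φ := hcompl
  have isoG : G ≃* ↥N₀ × ↥C := (MulEquiv.ofBijective φ hφbij).symm
  have hCodd : Odd (Nat.card ↥C) := by
    rcases Nat.even_or_odd (Nat.card ↥C) with h | h
    · exfalso
      apply hK2
      rw [hK3C]
      exact Dvd.dvd.mul_left h.two_dvd 3
    · exact h
  haveI hsmall : Small.{0} ↥C := inferInstance
  haveI hfinA : Finite (Shrink.{0} ↥C) := Finite.of_equiv _ (equivShrink ↥C)
  letI instFT : Fintype (Shrink.{0} ↥C) := Fintype.ofFinite _
  refine ⟨Shrink.{0} ↥C, inferInstance, instFT, ?_, ?_⟩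
  · have hcard : Fintype.card (Shrink.{0} ↥C) = Nat.card ↥C := by
      rw [← Nat.card_eq_fintype_card]
      exact Nat.card_congr (equivShrink ↥C).symm
    rw [hcard]
    exact hCodd
  · exact ⟨isoG.trans (MulEquiv.prodCongr iso1 (Shrink.mulEquiv).symm)⟩
end

section
/- Let m be a positive even integer and let G = S_3 × S_3 × ⋯ × S_3 (m factors), where S_3 is the symmetric group on 3 letters. Then χ(C_2(G)) = 3^m = |G|_{2'}, and G is not 2-closed. -/
namespace CEAux

open Pointwise
open scoped Classical

set_option linter.unusedSectionVars false

def lst {G : Type*} (T : Finset (Set G)) : Set G := ⋂₀ (T : Set (Set G))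

noncomputable def idx {G : Type*} [Fintype G] (L : Set G) : ℕ := Fintype.card G / L.ncard

variable (p : ℕ) (G : Type*) [Group G] [Fintype G]

noncomputable def SQ : Finset (Set G) :=
  Set.toFinset {S : Set G | ∃ H : Subgroup G, IsPGroup p H ∧ S = (H : Set G)}

noncomputable def SG : Finset (Set G) := Set.toFinset (pCosets p G)

noncomputable def CC : Finset (Finset (Set G)) :=
  (SG p G).powerset.filter fun s => s.Nonempty ∧ IsChain (· ⊆ ·) (s : Set (Set G))

noncomputable def QC : Finset (Finset (Set G)) :=
  (SQ p G).powerset.filter fun s => s.Nonempty ∧ IsChain (· ⊆ ·) (s : Set (Set G))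


noncomputable def w (Hs : Set G) : ℤ :=
  ∑ T ∈ (QC p G).filter fun T => lst T = Hs, (-1 : ℤ) ^ (T.card + 1)

variable {p G}

theorem mem_SQ {Hs : Set G} :
    Hs ∈ SQ p G ↔ ∃ H : Subgroup G, IsPGroup p H ∧ Hs = (H : Set G) := by
  simp [SQ]

theorem mem_SG {S : Set G} : S ∈ SG p G ↔ S ∈ pCosets p G := Set.mem_toFinset

theorem pCosets_iff {S : Set G} :
    S ∈ pCosets p G ↔ ∃ (H : Subgroup G) (x : G), IsPGroup p H ∧ S = (H : Set G) * {x} := by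
  unfold pCosets
  simp only [Set.mem_setOf_eq, Set.mul_singleton]

theorem SQ_mem_pCosets {Hs : Set G} (h : Hs ∈ SQ p G) : Hs ∈ pCosets p G := by
  obtain ⟨H, hH, rfl⟩ := mem_SQ.mp h
  exact pCosets_iff.mpr ⟨H, 1, hH, by simp⟩

theorem one_mem_of_mem_SQ {Hs : Set G} (h : Hs ∈ SQ p G) : (1 : G) ∈ Hs := by
  obtain ⟨H, _, rfl⟩ := mem_SQ.mp h; exact H.one_mem

theorem coset_nonempty {S : Set G} (h : S ∈ pCosets p G) : S.Nonempty := by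
  obtain ⟨H, x, _, rfl⟩ := pCosets_iff.mp h
  exact ⟨1 * x, Set.mul_mem_mul H.one_mem rfl⟩

theorem sigma_coset {H : Subgroup G} {x : G} :
    ((H : Set G) * {x}) * ((H : Set G) * {x})⁻¹ = (H : Set G) := by
  rw [mul_inv_rev, Set.inv_singleton, inv_coe_set]
  calc (H : Set G) * {x} * ({x⁻¹} * (H : Set G))
      = (H : Set G) * ({x} * {x⁻¹}) * (H : Set G) := by
        rw [mul_assoc, mul_assoc, mul_assoc]
    _ = (H : Set G) := by
        rw [Set.singleton_mul_singleton, mul_inv_cancel, Set.singleton_one, mul_one, coe_mul_coe]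

theorem sigma_mem_SQ {S : Set G} (h : S ∈ pCosets p G) : S * S⁻¹ ∈ SQ p G := by
  obtain ⟨H, x, hH, rfl⟩ := pCosets_iff.mp h
  exact mem_SQ.mpr ⟨H, hH, sigma_coset⟩

theorem ncard_coset {S : Set G} (h : S ∈ pCosets p G) : S.ncard = (S * S⁻¹).ncard := by
  obtain ⟨H, x, hH, rfl⟩ := pCosets_iff.mp h
  rw [sigma_coset, Set.mul_singleton,
    Set.ncard_image_of_injective _ (fun a b hab => mul_right_cancel hab)]

theorem coset_eq_of_mem {S : Set G} (h : S ∈ pCosets p G) {g : G} (hg : g ∈ S) :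
    S = (S * S⁻¹) * {g} := by
  obtain ⟨H, x, hH, rfl⟩ := pCosets_iff.mp h
  rw [sigma_coset]
  rw [Set.mul_singleton] at hg
  obtain ⟨h0, hh0, rfl⟩ := hg
  rw [show ({h0 * x} : Set G) = {h0} * {x} from Set.singleton_mul_singleton.symm, ← mul_assoc,
    Subgroup.subgroup_mul_singleton hh0]

theorem sigma_mono {S S' : Set G} (h : S ⊆ S') : S * S⁻¹ ⊆ S' * S'⁻¹ :=
  Set.mul_subset_mul h (Set.inv_subset_inv.mpr h)

theorem exists_least {T : Finset (Set G)} (hne : T.Nonempty)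
    (hch : IsChain (· ⊆ ·) (T : Set (Set G))) :
    ∃ L ∈ T, ∀ S ∈ T, L ⊆ S := by
  obtain ⟨L, hL, hmin⟩ := T.exists_minimal hne
  refine ⟨L, hL, fun S hS => ?_⟩
  rcases eq_or_ne S L with rfl | hne'
  · exact subset_rfl
  · rcases hch hS hL hne' with h | h
    · exact absurd (subset_antisymm h (hmin hS h)) hne'
    · exact h

theorem lst_eq {T : Finset (Set G)} {L : Set G} (hL : L ∈ T) (hleast : ∀ S ∈ T, L ⊆ S) :
    lst T = L := by
  apply subset_antisymm
  · exact Set.sInter_subset_of_mem (by simpa using hL)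
  · exact Set.subset_sInter (by intro t ht; exact hleast t (by simpa using ht))

theorem mem_QC {T : Finset (Set G)} :
    T ∈ QC p G ↔ (∀ S ∈ T, S ∈ SQ p G) ∧ T.Nonempty ∧ IsChain (· ⊆ ·) (T : Set (Set G)) := by
  simp [QC, Finset.mem_filter, Finset.mem_powerset, Finset.subset_iff, and_assoc]

theorem mem_CC {s : Finset (Set G)} :
    s ∈ CC p G ↔ (∀ S ∈ s, S ∈ pCosets p G) ∧ s.Nonempty ∧ IsChain (· ⊆ ·) (s : Set (Set G)) := by
  simp [CC, Finset.mem_filter, Finset.mem_powerset, Finset.subset_iff, and_assoc, mem_SG]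

theorem lst_spec {T : Finset (Set G)} (hne : T.Nonempty)
    (hch : IsChain (· ⊆ ·) (T : Set (Set G))) :
    lst T ∈ T ∧ ∀ S ∈ T, lst T ⊆ S := by
  obtain ⟨L, hL, h⟩ := exists_least hne hch
  rw [lst_eq hL h]; exact ⟨hL, h⟩


theorem chain_card_eq {s : Finset (Set G)} (hs : s ∈ CC p G) :
    (s.image (fun S => S * S⁻¹)).card = s.card := by
  obtain ⟨hsub, hne, hch⟩ := mem_CC.mp hs
  apply Finset.card_image_of_injOn
  intro S hS S' hS' hσ
  rcases eq_or_ne S S' with h | h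
  · exact h
  · have hσ' : S * S⁻¹ = S' * S'⁻¹ := hσ
    have hcard : S.ncard = S'.ncard := by
      rw [ncard_coset (hsub S hS), ncard_coset (hsub S' hS'), hσ']
    rcases hch hS hS' h with hsub' | hsub'
    · refine Set.Finite.eq_of_subset_of_card_le (Set.toFinite _) hsub' ?_
      rw [Nat.card_coe_set_eq, Nat.card_coe_set_eq, hcard]
    · refine (Set.Finite.eq_of_subset_of_card_le (Set.toFinite _) hsub' ?_).symm
      rw [Nat.card_coe_set_eq, Nat.card_coe_set_eq, hcard]

theorem sigma_chain_mem_QC {s : Finset (Set G)} (hs : s ∈ CC p G) :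
    s.image (fun S => S * S⁻¹) ∈ QC p G := by
  obtain ⟨hsub, hne, hch⟩ := mem_CC.mp hs
  refine mem_QC.mpr ⟨?_, hne.image _, ?_⟩
  · intro S hS
    obtain ⟨S', hS', rfl⟩ := Finset.mem_image.mp hS
    exact sigma_mem_SQ (hsub S' hS')
  · rw [Finset.coe_image]
    exact IsChain.image_of_map_rel _ _ _ (fun x y h => sigma_mono h) hch

/-- The coset chain determined by a subgroup chain `T` and an element `g`. -/
noncomputable def cchain (T : Finset (Set G)) (g : G) : Finset (Set G) :=
  T.image fun Ks => Ks * {g}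

theorem cchain_mem_fiber {T : Finset (Set G)} (hT : T ∈ QC p G) (g : G) :
    cchain T g ∈ CC p G ∧ (cchain T g).image (fun S => S * S⁻¹) = T := by
  obtain ⟨hsub, hne, hch⟩ := mem_QC.mp hT
  have hco : ∀ S ∈ T, S * {g} ∈ pCosets p G := by
    intro S hS
    obtain ⟨H, hH, rfl⟩ := mem_SQ.mp (hsub S hS)
    exact pCosets_iff.mpr ⟨H, g, hH, rfl⟩
  constructor
  · refine mem_CC.mpr ⟨?_, hne.image _, ?_⟩
    · intro S hS
      obtain ⟨S', hS', rfl⟩ := Finset.mem_image.mp hS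
      exact hco S' hS'
    · rw [cchain, Finset.coe_image]
      exact IsChain.image_of_map_rel _ _ _ (fun x y h => Set.mul_subset_mul_right h) hch
  · rw [cchain, Finset.image_image]
    calc T.image ((fun S => S * S⁻¹) ∘ fun Ks => Ks * {g})
        = T.image id := by
          apply Finset.image_congr
          intro S hS
          obtain ⟨H, hH, rfl⟩ := mem_SQ.mp (hsub S (by simpa using hS))
          exact sigma_coset
      _ = T := Finset.image_id

theorem lst_cchain {T : Finset (Set G)} (hT : T ∈ QC p G) (g : G) :
    lst (cchain T g) = lst T * {g} ∧ g ∈ lst (cchain T g) := by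
  obtain ⟨hsub, hne, hch⟩ := mem_QC.mp hT
  obtain ⟨hTm, hTl⟩ := lst_spec hne hch
  have h1 : lst T * {g} ∈ cchain T g := Finset.mem_image_of_mem _ hTm
  have h2 : ∀ S ∈ cchain T g, lst T * {g} ⊆ S := by
    intro S hS
    obtain ⟨S', hS', rfl⟩ := Finset.mem_image.mp hS
    exact Set.mul_subset_mul_right (hTl S' hS')
  have := lst_eq h1 h2
  refine ⟨this, ?_⟩
  rw [this]
  exact ⟨1, one_mem_of_mem_SQ (hsub _ hTm), g, rfl, one_mul g⟩

theorem fiber_eq_iff {T s : Finset (Set G)} (hT : T ∈ QC p G) (hs : s ∈ CC p G)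
    (hσ : s.image (fun S => S * S⁻¹) = T) (g : G) :
    cchain T g = s ↔ g ∈ lst s := by
  obtain ⟨hsub, hne, hch⟩ := mem_CC.mp hs
  obtain ⟨hsm, hsl⟩ := lst_spec hne hch
  constructor
  · rintro rfl
    exact (lst_cchain hT g).2
  · intro hg
    rw [cchain, ← hσ, Finset.image_image]
    calc s.image ((fun Ks => Ks * {g}) ∘ fun S => S * S⁻¹)
        = s.image id := by
          apply Finset.image_congr
          intro S hS
          have hS' : S ∈ s := by simpa using hS
          exact (coset_eq_of_mem (hsub S hS') (hsl S hS' hg)).symm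
      _ = s := Finset.image_id

theorem lst_mem_SQ {T : Finset (Set G)} (hT : T ∈ QC p G) : lst T ∈ SQ p G := by
  obtain ⟨hsub, hne, hch⟩ := mem_QC.mp hT
  exact hsub _ (lst_spec hne hch).1

theorem ncard_lst_fiber {T s : Finset (Set G)} (hT : T ∈ QC p G) (hs : s ∈ CC p G)
    (hσ : s.image (fun S => S * S⁻¹) = T) : (lst s).ncard = (lst T).ncard := by
  obtain ⟨hsub, hne, hch⟩ := mem_CC.mp hs
  obtain ⟨hsm, hsl⟩ := lst_spec hne hch
  obtain ⟨hsubT, hneT, hchT⟩ := mem_QC.mp hT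
  obtain ⟨hTm, hTl⟩ := lst_spec hneT hchT
  have h1 : lst s * (lst s)⁻¹ ∈ T := hσ ▸ Finset.mem_image_of_mem _ hsm
  have h2 : ∀ K ∈ T, lst s * (lst s)⁻¹ ⊆ K := by
    intro K hK
    rw [← hσ] at hK
    obtain ⟨S', hS', rfl⟩ := Finset.mem_image.mp hK
    exact sigma_mono (hsl S' hS')
  have : lst T = lst s * (lst s)⁻¹ := lst_eq h1 h2
  rw [this, ← ncard_coset (hsub _ hsm)]

theorem fiber_card {T : Finset (Set G)} (hT : T ∈ QC p G) :
    ((CC p G).filter fun s => s.image (fun S => S * S⁻¹) = T).card = idx (lst T) := by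
  classical
  set fib := (CC p G).filter fun s => s.image (fun S => S * S⁻¹) = T with hfib
  have hmaps : ∀ g ∈ (Finset.univ : Finset G), cchain T g ∈ fib := by
    intro g _
    obtain ⟨h1, h2⟩ := cchain_mem_fiber hT g
    exact Finset.mem_filter.mpr ⟨h1, h2⟩
  have hcount := Finset.card_eq_sum_card_fiberwise hmaps
  have hinner : ∀ s ∈ fib,
      ((Finset.univ : Finset G).filter fun g => cchain T g = s).card = (lst T).ncard := by
    intro s hsfib
    obtain ⟨hs, hσ⟩ := Finset.mem_filter.mp hsfib
    have : ((Finset.univ : Finset G).filter fun g => cchain T g = s)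
        = ((Finset.univ : Finset G).filter fun g => g ∈ lst s) := by
      apply Finset.filter_congr
      intro g _
      exact fiber_eq_iff hT hs hσ g
    rw [this, ← ncard_lst_fiber hT hs hσ]
    rw [Set.ncard_eq_toFinset_card']
    congr 1
    ext g
    simp [Set.mem_toFinset]
  rw [Finset.sum_congr rfl hinner, Finset.sum_const, Finset.card_univ, smul_eq_mul] at hcount
  have hpos : 0 < (lst T).ncard :=
    (Set.ncard_pos (Set.toFinite _)).mpr ⟨1, one_mem_of_mem_SQ (lst_mem_SQ hT)⟩
  simp only [idx]
  exact (Nat.div_eq_of_eq_mul_left hpos hcount).symm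


theorem chi_eq_CC :
    posetEulerChar ↥(pCosets p G) = ∑ s ∈ CC p G, (-1 : ℤ) ^ (s.card + 1) := by
  classical
  unfold posetEulerChar
  rw [Subsingleton.elim (Fintype.ofFinite ↥(pCosets p G)) (Subtype.fintype _)]
  rw [Finset.powerset_univ, Finset.sum_ite, Finset.sum_const_zero, add_zero]
  refine Finset.sum_nbij' (i := fun s => s.map (Function.Embedding.subtype _))
    (j := fun t => t.subtype _) ?_ ?_ ?_ ?_ ?_
  · intro a ha
    obtain ⟨hne, hch⟩ := Finset.mem_filter.mp ha |>.2
    refine mem_CC.mpr ⟨?_, ?_, ?_⟩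
    · intro S hS
      obtain ⟨b, _, rfl⟩ := Finset.mem_map.mp hS
      exact b.2
    · exact hne.map
    · rw [Finset.coe_map, Function.Embedding.coe_subtype]
      exact IsChain.image_of_map_rel (· ≤ ·) (· ⊆ ·) (fun x : ↥(pCosets p G) => (x : Set G)) (fun x y h => h) hch
  · intro t ht
    obtain ⟨hsub, hne, hch⟩ := mem_CC.mp ht
    refine Finset.mem_filter.mpr ⟨Finset.mem_univ _, ?_, ?_⟩
    · obtain ⟨S, hS⟩ := hne
      exact ⟨⟨S, hsub S hS⟩, Finset.mem_subtype.mpr hS⟩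
    · intro x hx y hy hne'
      have hx' : (x : Set G) ∈ t := Finset.mem_subtype.mp hx
      have hy' : (y : Set G) ∈ t := Finset.mem_subtype.mp hy
      have : (x : Set G) ≠ (y : Set G) := fun h => hne' (Subtype.ext h)
      exact hch hx' hy' this
  · intro a ha
    ext x
    simp only [Finset.mem_subtype, Finset.mem_map, Function.Embedding.coe_subtype]
    constructor
    · rintro ⟨b, hb, hbe⟩
      rwa [show b = x from Subtype.ext hbe] at hb
    · intro hx
      exact ⟨x, hx, rfl⟩
  · intro t ht
    rw [Finset.subtype_map]
    exact Finset.filter_true_of_mem (mem_CC.mp ht).1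
  · intro a ha
    rw [Finset.card_map]

theorem chi_eq_w :
    posetEulerChar ↥(pCosets p G) = ∑ Hs ∈ SQ p G, (idx Hs : ℤ) * w p G Hs := by
  classical
  rw [chi_eq_CC]
  have hmaps : ∀ s ∈ CC p G, s.image (fun S => S * S⁻¹) ∈ QC p G :=
    fun s hs => sigma_chain_mem_QC hs
  rw [← Finset.sum_fiberwise_of_maps_to hmaps (fun s => (-1 : ℤ) ^ (s.card + 1))]
  have step1 : ∀ T ∈ QC p G,
      (∑ s ∈ (CC p G).filter (fun s => s.image (fun S => S * S⁻¹) = T),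
        (-1 : ℤ) ^ (s.card + 1)) = (-1 : ℤ) ^ (T.card + 1) * (idx (lst T) : ℤ) := by
    intro T hT
    have hval : ∀ s ∈ (CC p G).filter (fun s => s.image (fun S => S * S⁻¹) = T),
        (-1 : ℤ) ^ (s.card + 1) = (-1 : ℤ) ^ (T.card + 1) := by
      intro s hs
      obtain ⟨hs, hσ⟩ := Finset.mem_filter.mp hs
      rw [← hσ, chain_card_eq hs]
    rw [Finset.sum_congr rfl hval, Finset.sum_const, fiber_card hT, nsmul_eq_mul, mul_comm]
  rw [Finset.sum_congr rfl step1]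
  have hmaps2 : ∀ T ∈ QC p G, lst T ∈ SQ p G := fun T hT => lst_mem_SQ hT
  rw [← Finset.sum_fiberwise_of_maps_to hmaps2
    (fun T => (-1 : ℤ) ^ (T.card + 1) * (idx (lst T) : ℤ))]
  refine Finset.sum_congr rfl fun Hs hHs => ?_
  rw [w, Finset.mul_sum]
  refine Finset.sum_congr rfl fun T hT => ?_
  obtain ⟨hT', hl⟩ := Finset.mem_filter.mp hT
  rw [hl, mul_comm]

theorem w_rec {Hs : Set G} (hHs : Hs ∈ SQ p G) :
    w p G Hs = 1 - ∑ Ks ∈ (SQ p G).filter (fun Ks => Hs ⊂ Ks), w p G Ks := by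
  classical
  have hsingle : ({Hs} : Finset (Set G)) ∈ (QC p G).filter (fun T => lst T = Hs) := by
    refine Finset.mem_filter.mpr ⟨mem_QC.mpr ⟨?_, ⟨Hs, Finset.mem_singleton_self Hs⟩, ?_⟩, ?_⟩
    · intro S hS
      rw [Finset.mem_singleton.mp hS]
      exact hHs
    · rw [Finset.coe_singleton]
      exact Set.subsingleton_singleton.isChain
    · simp [lst]
  rw [w, ← Finset.add_sum_erase _ _ hsingle]
  have h1 : (-1 : ℤ) ^ (({Hs} : Finset (Set G)).card + 1) = 1 := by norm_num
  rw [h1]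
  have claim1 : (∑ T ∈ ((QC p G).filter (fun T => lst T = Hs)).erase {Hs},
      (-1 : ℤ) ^ (T.card + 1))
      = ∑ T' ∈ (QC p G).filter (fun T' => ∀ S ∈ T', Hs ⊂ S),
          -((-1 : ℤ) ^ (T'.card + 1)) := by
    refine Finset.sum_nbij' (i := fun T => T.erase Hs) (j := fun T' => insert Hs T')
      ?_ ?_ ?_ ?_ ?_
    · intro T hT
      obtain ⟨hne0, hT0⟩ := Finset.mem_erase.mp hT
      obtain ⟨hTQ, hlst⟩ := Finset.mem_filter.mp hT0
      obtain ⟨hsub, hne, hch⟩ := mem_QC.mp hTQ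
      obtain ⟨hmem, hleast⟩ := lst_spec hne hch
      rw [hlst] at hmem hleast
      refine Finset.mem_filter.mpr ⟨mem_QC.mpr ⟨?_, ?_, ?_⟩, ?_⟩
      · intro S hS
        exact hsub S (Finset.mem_of_mem_erase hS)
      · rw [Finset.nonempty_iff_ne_empty]
        intro h
        rcases (Finset.erase_eq_empty_iff _ _).mp h with h' | h'
        · exact hne.ne_empty h'
        · exact hne0 h'
      · exact hch.mono (Finset.coe_subset.mpr (Finset.erase_subset _ _))
      · intro S hS
        obtain ⟨hSne, hSm⟩ := Finset.mem_erase.mp hS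
        exact (Set.ssubset_iff_subset_ne).mpr ⟨hleast S hSm, (Ne.symm hSne)⟩
    · intro T' hT'
      obtain ⟨hTQ, hall⟩ := Finset.mem_filter.mp hT'
      obtain ⟨hsub, hne, hch⟩ := mem_QC.mp hTQ
      have hins : insert Hs T' ∈ QC p G := by
        refine mem_QC.mpr ⟨?_, ⟨Hs, Finset.mem_insert_self _ _⟩, ?_⟩
        · intro S hS
          rcases Finset.mem_insert.mp hS with rfl | hS'
          · exact hHs
          · exact hsub S hS'
        · rw [Finset.coe_insert]
          refine hch.insert ?_
          intro b hb _
          exact Or.inl (hall b hb).subset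
      have hlst : lst (insert Hs T') = Hs := by
        refine lst_eq (Finset.mem_insert_self _ _) ?_
        intro S hS
        rcases Finset.mem_insert.mp hS with rfl | hS'
        · exact subset_rfl
        · exact (hall S hS').subset
      refine Finset.mem_erase.mpr ⟨?_, Finset.mem_filter.mpr ⟨hins, hlst⟩⟩
      intro h
      obtain ⟨S, hS⟩ := hne
      have hSm : S ∈ ({Hs} : Finset (Set G)) := h ▸ Finset.mem_insert_of_mem hS
      exact (hall S hS).ne (Finset.mem_singleton.mp hSm).symm
    · intro T hT
      obtain ⟨hne0, hT0⟩ := Finset.mem_erase.mp hT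
      obtain ⟨hTQ, hlst⟩ := Finset.mem_filter.mp hT0
      obtain ⟨hsub, hne, hch⟩ := mem_QC.mp hTQ
      obtain ⟨hmem, _⟩ := lst_spec hne hch
      rw [hlst] at hmem
      exact Finset.insert_erase hmem
    · intro T' hT'
      obtain ⟨hTQ, hall⟩ := Finset.mem_filter.mp hT'
      refine Finset.erase_insert ?_
      intro h
      exact (hall Hs h).ne rfl
    · intro T hT
      obtain ⟨hne0, hT0⟩ := Finset.mem_erase.mp hT
      obtain ⟨hTQ, hlst⟩ := Finset.mem_filter.mp hT0
      obtain ⟨hsub, hne, hch⟩ := mem_QC.mp hTQ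
      obtain ⟨hmem, _⟩ := lst_spec hne hch
      rw [hlst] at hmem
      rw [show T.card = (T.erase Hs).card + 1 from (Finset.card_erase_add_one hmem).symm]
      ring
  rw [claim1, Finset.sum_neg_distrib]
  have claim2 : (∑ T' ∈ (QC p G).filter (fun T' => ∀ S ∈ T', Hs ⊂ S),
      (-1 : ℤ) ^ (T'.card + 1))
      = ∑ Ks ∈ (SQ p G).filter (fun Ks => Hs ⊂ Ks), w p G Ks := by
    have hmaps : ∀ T' ∈ (QC p G).filter (fun T' => ∀ S ∈ T', Hs ⊂ S),
        lst T' ∈ (SQ p G).filter (fun Ks => Hs ⊂ Ks) := by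
      intro T' hT'
      obtain ⟨hTQ, hall⟩ := Finset.mem_filter.mp hT'
      obtain ⟨hsub, hne, hch⟩ := mem_QC.mp hTQ
      obtain ⟨hmem, _⟩ := lst_spec hne hch
      exact Finset.mem_filter.mpr ⟨lst_mem_SQ hTQ, hall _ hmem⟩
    rw [← Finset.sum_fiberwise_of_maps_to hmaps (fun T => (-1 : ℤ) ^ (T.card + 1))]
    refine Finset.sum_congr rfl fun Ks hKs => ?_
    rw [w]
    congr 1
    ext T'
    simp only [Finset.mem_filter]
    constructor
    · rintro ⟨⟨hTQ, _⟩, hl⟩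
      exact ⟨hTQ, hl⟩
    · rintro ⟨hTQ, hl⟩
      obtain ⟨hKsQ, hKss⟩ := Finset.mem_filter.mp hKs
      obtain ⟨hsub, hne, hch⟩ := mem_QC.mp hTQ
      obtain ⟨hmem, hleast⟩ := lst_spec hne hch
      refine ⟨⟨hTQ, fun S hS => ?_⟩, hl⟩
      calc Hs ⊂ Ks := hKss
        _ ⊆ S := hl ▸ hleast S hS
  rw [claim2, sub_eq_add_neg]


abbrev S3 : Type := Equiv.Perm (Fin 3)

def pairSubgroup (σ : S3) (h : σ * σ = 1) : Subgroup S3 where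
  carrier := {1, σ}
  one_mem' := by left; rfl
  mul_mem' := by
    intro a b ha hb
    simp only [Set.mem_insert_iff, Set.mem_singleton_iff] at ha hb ⊢
    rcases ha with rfl | rfl <;> rcases hb with rfl | rfl <;> simp [h]
  inv_mem' := by
    intro a ha
    simp only [Set.mem_insert_iff, Set.mem_singleton_iff] at ha ⊢
    rcases ha with rfl | rfl
    · left; simp
    · right; exact inv_eq_of_mul_eq_one_right h

theorem isPGroup_pair {σ : S3} (h : σ * σ = 1) : IsPGroup 2 (pairSubgroup σ h) := by
  intro g
  refine ⟨1, Subtype.ext ?_⟩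
  have hg : (g : S3) ∈ ({1, σ} : Set S3) := g.2
  simp only [Set.mem_insert_iff, Set.mem_singleton_iff] at hg
  rw [pow_one]
  push_cast
  rcases hg with hg | hg <;> rw [pow_two, hg] <;> simp [h]

theorem mem_SQ3_pair {σ : S3} (h : σ * σ = 1) : ({1, σ} : Set S3) ∈ SQ 2 S3 :=
  mem_SQ.mpr ⟨pairSubgroup σ h, isPGroup_pair h, rfl⟩

theorem one_set_mem_SQ3 : ({1} : Set S3) ∈ SQ 2 S3 := by
  have := mem_SQ3_pair (σ := 1) (by simp)
  simpa [Set.pair_eq_singleton] using this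

theorem SQ3_classify {b : Set S3} (hb : b ∈ SQ 2 S3) :
    b = {1} ∨ ∃ σ : S3, σ * σ = 1 ∧ σ ≠ 1 ∧ b = {1, σ} := by
  haveI : Fact (Nat.Prime 2) := ⟨Nat.prime_two⟩
  obtain ⟨H, hH, rfl⟩ := mem_SQ.mp hb
  obtain ⟨n, hn⟩ := IsPGroup.iff_card.mp hH
  have hcard6 : Nat.card S3 = 6 := by
    rw [Nat.card_eq_fintype_card, Fintype.card_perm, Fintype.card_fin]
    decide
  have hdvd : Nat.card H ∣ 6 := hcard6 ▸ Subgroup.card_subgroup_dvd_card H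
  have hn1 : n ≤ 1 := by
    by_contra hgt
    push_neg at hgt
    have h4 : (2 : ℕ) ^ 2 ∣ 2 ^ n := pow_dvd_pow 2 hgt
    rw [← hn] at h4
    have : (4 : ℕ) ∣ 6 := by
      calc (4 : ℕ) = 2 ^ 2 := by norm_num
        _ ∣ Nat.card H := h4
        _ ∣ 6 := hdvd
    norm_num at this
  interval_cases n
  · left
    have : H = ⊥ := Subgroup.card_eq_one.mp (by rw [hn, pow_zero])
    rw [this, Subgroup.coe_bot]
  · right
    have hcard2 : Nat.card H = 2 := by rw [hn, pow_one]
    have hne : H ≠ ⊥ := by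
      intro h
      rw [h, Subgroup.card_bot] at hcard2
      norm_num at hcard2
    obtain ⟨σ, hσH, hσ1⟩ : ∃ σ ∈ H, σ ≠ 1 := by
      by_contra hall
      push_neg at hall
      exact hne ((Subgroup.eq_bot_iff_forall H).mpr hall)
    have hfin : Fintype.card H = 2 := by rw [← Nat.card_eq_fintype_card, hcard2]
    have hσσ : σ * σ = 1 := by
      have h2 : (⟨σ, hσH⟩ : H) ^ 2 = 1 := by
        rw [← hfin]
        exact pow_card_eq_one
      have := congrArg (Subtype.val) h2
      push_cast at this
      rwa [pow_two] at this
    refine ⟨σ, hσσ, hσ1, ?_⟩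
    have hsub : ({1, σ} : Set S3) ⊆ (H : Set S3) := by
      intro x hx
      simp only [Set.mem_insert_iff, Set.mem_singleton_iff] at hx
      rcases hx with rfl | rfl
      · exact H.one_mem
      · exact hσH
    refine (Set.Finite.eq_of_subset_of_card_le (Set.toFinite _) hsub ?_).symm
    rw [Nat.card_coe_set_eq, Nat.card_coe_set_eq,
      Set.ncard_pair (Ne.symm hσ1)]
    have : ((H : Set S3)).ncard = 2 := by
      rw [← Nat.card_coe_set_eq]
      exact hcard2
    rw [this]

theorem invol_classify : ∀ σ : S3, σ ≠ 1 → σ * σ = 1 →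
    σ = Equiv.swap 0 1 ∨ σ = Equiv.swap 0 2 ∨ σ = Equiv.swap 1 2 := by decide

theorem SQ3_eq : SQ 2 S3 =
    ({({1} : Set S3), {1, Equiv.swap 0 1}, {1, Equiv.swap 0 2}, {1, Equiv.swap 1 2}} :
      Finset (Set S3)) := by
  ext b
  simp only [Finset.mem_insert, Finset.mem_singleton]
  constructor
  · intro hb
    rcases SQ3_classify hb with rfl | ⟨σ, hσσ, hσ1, rfl⟩
    · tauto
    · rcases invol_classify σ hσ1 hσσ with rfl | rfl | rfl <;> tauto
  · rintro (rfl | rfl | rfl | rfl)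
    · exact one_set_mem_SQ3
    · exact mem_SQ3_pair (Equiv.swap_mul_self _ _)
    · exact mem_SQ3_pair (Equiv.swap_mul_self _ _)
    · exact mem_SQ3_pair (Equiv.swap_mul_self _ _)

theorem sq_one_of_mem_SQ3 {b : Set S3} (hb : b ∈ SQ 2 S3) {x : S3} (hx : x ∈ b) :
    x * x = 1 := by
  rcases SQ3_classify hb with rfl | ⟨σ, hσσ, hσ1, rfl⟩
  · rw [Set.mem_singleton_iff] at hx
    rw [hx, one_mul]
  · simp only [Set.mem_insert_iff, Set.mem_singleton_iff] at hx
    rcases hx with rfl | rfl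
    · rw [one_mul]
    · exact hσσ

theorem pair_ne_one {a : S3} (ha1 : a ≠ 1) : ({1, a} : Set S3) ≠ {1} := by
  intro h
  have : a ∈ ({1} : Set S3) := h ▸ (by simp)
  exact ha1 (by simpa using this)

theorem pair_ne_pair {a b : S3} (ha1 : a ≠ 1) (hab : a ≠ b) :
    ({1, a} : Set S3) ≠ {1, b} := by
  intro h
  have : a ∈ ({1, b} : Set S3) := h ▸ (by simp)
  simp only [Set.mem_insert_iff, Set.mem_singleton_iff] at this
  tauto

theorem ncard_SQ3 {b : Set S3} (hb : b ∈ SQ 2 S3) :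
    b.ncard = if b = {1} then 1 else 2 := by
  rcases SQ3_classify hb with rfl | ⟨σ, hσσ, hσ1, rfl⟩
  · simp
  · rw [if_neg (pair_ne_one hσ1), Set.ncard_pair (Ne.symm hσ1)]

theorem SQ3_rigid {b c : Set S3} (hb : b ∈ SQ 2 S3) (hc : c ∈ SQ 2 S3) (hbc : b ⊆ c)
    (hb1 : b ≠ {1}) : c = b := by
  have h2 : b.ncard = 2 := by rw [ncard_SQ3 hb, if_neg hb1]
  have hle : b.ncard ≤ c.ncard := Set.ncard_le_ncard hbc (Set.toFinite c)
  have hc2 : c.ncard = 2 := by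
    rw [ncard_SQ3 hc]
    rw [ncard_SQ3 hc] at hle
    split_ifs with h
    · rw [if_pos h, h2] at hle
      norm_num at hle
    · rfl
  refine (Set.Finite.eq_of_subset_of_card_le (Set.toFinite c) hbc ?_).symm
  rw [Nat.card_coe_set_eq, Nat.card_coe_set_eq, h2, hc2]

theorem SQ3_sum_ite :
    (∑ b ∈ SQ 2 S3, (if b = ({1} : Set S3) then (-2 : ℤ) else 1)) = 1 := by
  classical
  have d1 : (Equiv.swap (0 : Fin 3) 1) ≠ 1 := by decide
  have d2 : (Equiv.swap (0 : Fin 3) 2) ≠ 1 := by decide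
  have d3 : (Equiv.swap (1 : Fin 3) 2) ≠ 1 := by decide
  have d12 : (Equiv.swap (0 : Fin 3) 1) ≠ Equiv.swap 0 2 := by decide
  have d13 : (Equiv.swap (0 : Fin 3) 1) ≠ Equiv.swap 1 2 := by decide
  have d23 : (Equiv.swap (0 : Fin 3) 2) ≠ Equiv.swap 1 2 := by decide
  rw [SQ3_eq]
  rw [Finset.sum_insert (by
    simp only [Finset.mem_insert, Finset.mem_singleton]
    push_neg
    exact ⟨Ne.symm (pair_ne_one d1), Ne.symm (pair_ne_one d2), Ne.symm (pair_ne_one d3)⟩)]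
  rw [Finset.sum_insert (by
    simp only [Finset.mem_insert, Finset.mem_singleton]
    push_neg
    exact ⟨pair_ne_pair d1 d12, pair_ne_pair d1 d13⟩)]
  rw [Finset.sum_insert (by
    simp only [Finset.mem_singleton]
    exact pair_ne_pair d2 d23)]
  rw [Finset.sum_singleton]
  rw [if_pos rfl, if_neg (pair_ne_one d1), if_neg (pair_ne_one d2), if_neg (pair_ne_one d3)]
  norm_num

theorem SQ3_sum_factor :
    (∑ b ∈ SQ 2 S3, (if b = ({1} : Set S3) then (-12 : ℤ) else 3)) = -3 := by
  classical
  have d1 : (Equiv.swap (0 : Fin 3) 1) ≠ 1 := by decide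
  have d2 : (Equiv.swap (0 : Fin 3) 2) ≠ 1 := by decide
  have d3 : (Equiv.swap (1 : Fin 3) 2) ≠ 1 := by decide
  have d12 : (Equiv.swap (0 : Fin 3) 1) ≠ Equiv.swap 0 2 := by decide
  have d13 : (Equiv.swap (0 : Fin 3) 1) ≠ Equiv.swap 1 2 := by decide
  have d23 : (Equiv.swap (0 : Fin 3) 2) ≠ Equiv.swap 1 2 := by decide
  rw [SQ3_eq]
  rw [Finset.sum_insert (by
    simp only [Finset.mem_insert, Finset.mem_singleton]
    push_neg
    exact ⟨Ne.symm (pair_ne_one d1), Ne.symm (pair_ne_one d2), Ne.symm (pair_ne_one d3)⟩)]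
  rw [Finset.sum_insert (by
    simp only [Finset.mem_insert, Finset.mem_singleton]
    push_neg
    exact ⟨pair_ne_pair d1 d12, pair_ne_pair d1 d13⟩)]
  rw [Finset.sum_insert (by
    simp only [Finset.mem_singleton]
    exact pair_ne_pair d2 d23)]
  rw [Finset.sum_singleton]
  rw [if_pos rfl, if_neg (pair_ne_one d1), if_neg (pair_ne_one d2), if_neg (pair_ne_one d3)]
  norm_num

theorem SQ3_filter_one :
    (SQ 2 S3).filter (fun b => ({1} : Set S3) ⊆ b) = SQ 2 S3 := by
  apply Finset.filter_true_of_mem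
  intro b hb
  intro x hx
  rw [Set.mem_singleton_iff] at hx
  rw [hx]
  exact one_mem_of_mem_SQ hb

theorem SQ3_filter_rigid {c : Set S3} (hc : c ∈ SQ 2 S3) (hc1 : c ≠ {1}) :
    (SQ 2 S3).filter (fun b => c ⊆ b) = {c} := by
  ext b
  simp only [Finset.mem_filter, Finset.mem_singleton]
  constructor
  · rintro ⟨hb, hcb⟩
    exact SQ3_rigid hc hb hcb hc1
  · rintro rfl
    exact ⟨hc, subset_rfl⟩

theorem SQ3_sum_subset {c : Set S3} (hc : c ∈ SQ 2 S3) :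
    (∑ b ∈ (SQ 2 S3).filter (fun b => c ⊆ b),
      (if b = ({1} : Set S3) then (-2 : ℤ) else 1)) = 1 := by
  rcases eq_or_ne c {1} with rfl | hne
  · rw [SQ3_filter_one]
    exact SQ3_sum_ite
  · rw [SQ3_filter_rigid hc hne, Finset.sum_singleton, if_neg hne]


variable {m : ℕ}

noncomputable def proj (i : Fin m) (Hs : Set (Fin m → S3)) : Set S3 := (fun f => f i) '' Hs

noncomputable def rect (Hs : Set (Fin m → S3)) : Set (Fin m → S3) :=
  Set.pi Set.univ (fun i => proj i Hs)

noncomputable def zc (Hs : Set (Fin m → S3)) : ℕ :=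
  (Finset.univ.filter (fun i : Fin m => proj i Hs = ({1} : Set S3))).card

noncomputable def rho (Hs : Set (Fin m → S3)) : ℤ :=
  if rect Hs = Hs then (-2) ^ (zc Hs) else 0

theorem proj_mem {Hs : Set (Fin m → S3)} (hHs : Hs ∈ SQ 2 (Fin m → S3)) (i : Fin m) :
    proj i Hs ∈ SQ 2 S3 := by
  obtain ⟨H, hH, rfl⟩ := mem_SQ.mp hHs
  refine mem_SQ.mpr ⟨H.map (Pi.evalMonoidHom (fun _ => S3) i), IsPGroup.map hH _, ?_⟩
  rw [Subgroup.coe_map]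
  rfl

theorem proj_mono {Hs Ks : Set (Fin m → S3)} (h : Hs ⊆ Ks) (i : Fin m) :
    proj i Hs ⊆ proj i Ks := Set.image_mono h

theorem subset_pi_iff {Hs : Set (Fin m → S3)} {B : Fin m → Set S3} :
    Hs ⊆ Set.pi Set.univ B ↔ ∀ i, proj i Hs ⊆ B i := by
  constructor
  · rintro h i b ⟨f, hf, rfl⟩
    exact h hf i (Set.mem_univ i)
  · intro h f hf i _
    exact h i ⟨f, hf, rfl⟩

theorem one_mem_pi {B : Fin m → Set S3} (hB : ∀ i, B i ∈ SQ 2 S3) :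
    (1 : Fin m → S3) ∈ Set.pi Set.univ B :=
  fun i _ => one_mem_of_mem_SQ (hB i)

theorem proj_pi {B : Fin m → Set S3} (hB : ∀ i, B i ∈ SQ 2 S3) (i : Fin m) :
    proj i (Set.pi Set.univ B) = B i :=
  Set.eval_image_pi (Set.mem_univ i) ⟨1, one_mem_pi hB⟩

theorem rect_pi {B : Fin m → Set S3} (hB : ∀ i, B i ∈ SQ 2 S3) :
    rect (Set.pi Set.univ B) = Set.pi Set.univ B := by
  rw [rect]
  exact congrArg (Set.pi Set.univ) (funext (fun i => proj_pi hB i))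

theorem pi_mem_SQ {B : Fin m → Set S3} (hB : ∀ i, B i ∈ SQ 2 S3) :
    Set.pi Set.univ B ∈ SQ 2 (Fin m → S3) := by
  choose K hK hKe using fun i => mem_SQ.mp (hB i)
  refine mem_SQ.mpr ⟨Subgroup.pi Set.univ K, ?_, ?_⟩
  · intro g
    refine ⟨1, Subtype.ext ?_⟩
    rw [pow_one]
    push_cast
    funext i
    have hgi : (g : Fin m → S3) i ∈ K i := g.2 i (Set.mem_univ i)
    have hgi' : (g : Fin m → S3) i ∈ B i := by rw [hKe i]; exact hgi
    have := sq_one_of_mem_SQ3 (hB i) hgi'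
    simpa [pow_two] using this
  · rw [Subgroup.coe_pi]
    exact congrArg (Set.pi Set.univ) (funext (fun i => hKe i))

theorem pi_ncard {B : Fin m → Set S3} :
    (Set.pi Set.univ B).ncard = ∏ i, (B i).ncard := by
  have e : (Set.pi Set.univ B) ≃ ∀ i, (B i) :=
    ⟨fun x => fun i => ⟨x.1 i, x.2 i (Set.mem_univ i)⟩,
     fun y => ⟨fun i => (y i).1, fun i _ => (y i).2⟩,
     fun x => rfl, fun y => rfl⟩
  rw [← Nat.card_coe_set_eq, Nat.card_congr e, Nat.card_pi]
  exact Finset.prod_congr rfl fun i _ => Nat.card_coe_set_eq _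

theorem key_sum {Hs : Set (Fin m → S3)} (hHs : Hs ∈ SQ 2 (Fin m → S3)) :
    (∑ Ks ∈ (SQ 2 (Fin m → S3)).filter (fun Ks => Hs ⊆ Ks ∧ rect Ks = Ks),
      (-2 : ℤ) ^ (zc Ks)) = 1 := by
  classical
  have step : (∑ Ks ∈ (SQ 2 (Fin m → S3)).filter (fun Ks => Hs ⊆ Ks ∧ rect Ks = Ks),
      (-2 : ℤ) ^ (zc Ks))
      = ∑ B ∈ Fintype.piFinset (fun i => (SQ 2 S3).filter (fun b => proj i Hs ⊆ b)),
          ∏ i, (if B i = ({1} : Set S3) then (-2 : ℤ) else 1) := by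
    refine Finset.sum_nbij' (i := fun Ks => fun i => proj i Ks)
      (j := fun B => Set.pi Set.univ B) ?_ ?_ ?_ ?_ ?_
    · intro Ks hKs
      obtain ⟨hKs', hsub, _⟩ := Finset.mem_filter.mp hKs
      exact Fintype.mem_piFinset.mpr fun i =>
        Finset.mem_filter.mpr ⟨proj_mem hKs' i, proj_mono hsub i⟩
    · intro B hB
      have hB' : ∀ i, B i ∈ (SQ 2 S3) ∧ proj i Hs ⊆ B i := by
        intro i
        exact Finset.mem_filter.mp (Fintype.mem_piFinset.mp hB i)
      refine Finset.mem_filter.mpr ⟨pi_mem_SQ (fun i => (hB' i).1), ?_, rect_pi (fun i => (hB' i).1)⟩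
      exact subset_pi_iff.mpr fun i => (hB' i).2
    · intro Ks hKs
      exact (Finset.mem_filter.mp hKs).2.2
    · intro B hB
      funext i
      have hB' : ∀ j, B j ∈ SQ 2 S3 := fun j =>
        (Finset.mem_filter.mp (Fintype.mem_piFinset.mp hB j)).1
      exact proj_pi hB' i
    · intro Ks hKs
      rw [Finset.prod_ite _ _, Finset.prod_const, Finset.prod_const_one, mul_one]
      rfl
  rw [step, ← Finset.prod_univ_sum (fun i => (SQ 2 S3).filter (fun b => proj i Hs ⊆ b))
    (fun _ b => if b = ({1} : Set S3) then (-2 : ℤ) else 1)]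
  calc (∏ i : Fin m, ∑ b ∈ (SQ 2 S3).filter (fun b => proj i Hs ⊆ b),
        (if b = ({1} : Set S3) then (-2 : ℤ) else 1))
      = ∏ i : Fin m, 1 := by
        refine Finset.prod_congr rfl fun i _ => SQ3_sum_subset (proj_mem hHs i)
    _ = 1 := Finset.prod_const_one

theorem w_eq : ∀ Hs ∈ SQ 2 (Fin m → S3), w 2 (Fin m → S3) Hs = rho Hs := by
  classical
  suffices h : ∀ n : ℕ, ∀ Hs ∈ SQ 2 (Fin m → S3),
      ((SQ 2 (Fin m → S3)).filter (fun Ks => Hs ⊂ Ks)).card = n →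
      w 2 (Fin m → S3) Hs = rho Hs by
    intro Hs hHs
    exact h _ Hs hHs rfl
  intro n
  induction n using Nat.strong_induction_on with
  | _ n IH =>
    intro Hs hHs hcard
    have hIH : ∀ Ks ∈ (SQ 2 (Fin m → S3)).filter (fun Ks => Hs ⊂ Ks),
        w 2 (Fin m → S3) Ks = rho Ks := by
      intro Ks hKs
      obtain ⟨hKs', hss⟩ := Finset.mem_filter.mp hKs
      refine IH _ ?_ Ks hKs' rfl
      rw [← hcard]
      apply Finset.card_lt_card
      constructor
      · intro X hX
        obtain ⟨hX', hKX⟩ := Finset.mem_filter.mp hX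
        exact Finset.mem_filter.mpr ⟨hX', hss.trans hKX⟩
      · intro hsub
        have h2 : Ks ∈ (SQ 2 (Fin m → S3)).filter (fun X => Ks ⊂ X) :=
          hsub (Finset.mem_filter.mpr ⟨hKs', hss⟩)
        exact (ssubset_irrefl Ks) (Finset.mem_filter.mp h2).2
    rw [w_rec hHs, Finset.sum_congr rfl hIH]
    have hmemsub : Hs ∈ (SQ 2 (Fin m → S3)).filter (fun Ks => Hs ⊆ Ks) :=
      Finset.mem_filter.mpr ⟨hHs, subset_rfl⟩
    have herase : ((SQ 2 (Fin m → S3)).filter (fun Ks => Hs ⊆ Ks)).erase Hs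
        = (SQ 2 (Fin m → S3)).filter (fun Ks => Hs ⊂ Ks) := by
      ext Ks
      simp only [Finset.mem_erase, Finset.mem_filter]
      constructor
      · rintro ⟨hne, hKs, hsub⟩
        exact ⟨hKs, Set.ssubset_iff_subset_ne.mpr ⟨hsub, Ne.symm hne⟩⟩
      · rintro ⟨hKs, hss⟩
        exact ⟨fun h => hss.ne' h, hKs, hss.subset⟩
    have hsum : (∑ Ks ∈ (SQ 2 (Fin m → S3)).filter (fun Ks => Hs ⊆ Ks), rho Ks)
        = rho Hs + ∑ Ks ∈ (SQ 2 (Fin m → S3)).filter (fun Ks => Hs ⊂ Ks), rho Ks := by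
      rw [← Finset.add_sum_erase _ _ hmemsub, herase]
    have hall : (∑ Ks ∈ (SQ 2 (Fin m → S3)).filter (fun Ks => Hs ⊆ Ks), rho Ks) = 1 := by
      have hr : ∀ Ks ∈ (SQ 2 (Fin m → S3)).filter (fun Ks => Hs ⊆ Ks),
          rho Ks = if rect Ks = Ks then (-2 : ℤ) ^ (zc Ks) else 0 := fun Ks _ => rfl
      rw [Finset.sum_congr rfl hr, ← Finset.sum_filter, Finset.filter_filter]
      exact key_sum hHs
    have hfinal : (∑ Ks ∈ (SQ 2 (Fin m → S3)).filter (fun Ks => Hs ⊂ Ks), rho Ks)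
        = 1 - rho Hs := by
      rw [hall] at hsum
      linarith
    rw [hfinal]
    ring


theorem card_S3 : Fintype.card S3 = 6 := by
  rw [Fintype.card_perm, Fintype.card_fin]
  decide

theorem idx_pi {B : Fin m → Set S3} (hB : ∀ i, B i ∈ SQ 2 S3) :
    idx (Set.pi Set.univ B) = ∏ i, (if B i = ({1} : Set S3) then (6 : ℕ) else 3) := by
  have hprod : (∏ i, (if B i = ({1} : Set S3) then (6 : ℕ) else 3)) * (∏ i, (B i).ncard)
      = Fintype.card (Fin m → S3) := by
    rw [← Finset.prod_mul_distrib, Fintype.card_pi]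
    refine Finset.prod_congr rfl fun i _ => ?_
    rw [ncard_SQ3 (hB i), card_S3]
    split_ifs <;> norm_num
  have hpos : 0 < ∏ i, (B i).ncard := by
    apply Finset.prod_pos
    intro i _
    exact (Set.ncard_pos (Set.toFinite _)).mpr ⟨1, one_mem_of_mem_SQ (hB i)⟩
  simp only [idx, pi_ncard]
  exact Nat.div_eq_of_eq_mul_left hpos hprod.symm

theorem chi_final (hEven : Even m) :
    posetEulerChar ↥(pCosets 2 (Fin m → S3)) = 3 ^ m := by
  classical
  rw [chi_eq_w]
  have h1 : ∀ Hs ∈ SQ 2 (Fin m → S3), (idx Hs : ℤ) * w 2 (Fin m → S3) Hs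
      = if rect Hs = Hs then (idx Hs : ℤ) * (-2 : ℤ) ^ (zc Hs) else 0 := by
    intro Hs hHs
    rw [w_eq Hs hHs, rho]
    split_ifs <;> ring
  rw [Finset.sum_congr rfl h1, ← Finset.sum_filter]
  have hbij : (∑ Hs ∈ (SQ 2 (Fin m → S3)).filter (fun Hs => rect Hs = Hs),
        (idx Hs : ℤ) * (-2 : ℤ) ^ (zc Hs))
      = ∑ B ∈ Fintype.piFinset (fun _ : Fin m => SQ 2 S3),
          ∏ i, (if B i = ({1} : Set S3) then (-12 : ℤ) else 3) := by
    refine Finset.sum_nbij' (i := fun Ks => fun i => proj i Ks)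
      (j := fun B => Set.pi Set.univ B) ?_ ?_ ?_ ?_ ?_
    · intro Ks hKs
      obtain ⟨hKs', _⟩ := Finset.mem_filter.mp hKs
      exact Fintype.mem_piFinset.mpr fun i => proj_mem hKs' i
    · intro B hB
      have hB' : ∀ i, B i ∈ SQ 2 S3 := fun i => Fintype.mem_piFinset.mp hB i
      exact Finset.mem_filter.mpr ⟨pi_mem_SQ hB', rect_pi hB'⟩
    · intro Ks hKs
      exact (Finset.mem_filter.mp hKs).2
    · intro B hB
      have hB' : ∀ i, B i ∈ SQ 2 S3 := fun i => Fintype.mem_piFinset.mp hB i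
      funext i
      exact proj_pi hB' i
    · intro Ks hKs
      obtain ⟨hKs', hrect⟩ := Finset.mem_filter.mp hKs
      have hB' : ∀ i, proj i Ks ∈ SQ 2 S3 := fun i => proj_mem hKs' i
      have hidx : idx Ks = ∏ i, (if proj i Ks = ({1} : Set S3) then (6 : ℕ) else 3) := by
        conv_lhs => rw [← hrect]
        rw [rect]
        exact idx_pi hB'
      have hz : ((-2 : ℤ)) ^ (zc Ks)
          = ∏ i, (if proj i Ks = ({1} : Set S3) then (-2 : ℤ) else 1) := by
        rw [Finset.prod_ite _ _, Finset.prod_const, Finset.prod_const_one, mul_one]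
        rfl
      rw [hidx, hz, Nat.cast_prod, ← Finset.prod_mul_distrib]
      refine Finset.prod_congr rfl fun i _ => ?_
      split_ifs <;> norm_num
  rw [hbij, ← Finset.prod_univ_sum (fun _ : Fin m => SQ 2 S3)
    (fun _ b => if b = ({1} : Set S3) then (-12 : ℤ) else 3)]
  rw [Finset.prod_congr rfl (fun i (_ : i ∈ Finset.univ) => SQ3_sum_factor), Finset.prod_const,
    Finset.card_univ, Fintype.card_fin]
  exact Even.neg_pow hEven 3

theorem part2 : (3 ^ m : ℕ) = ordCompl[2] (Fintype.card (Fin m → S3)) := by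
  have hcard : Fintype.card (Fin m → S3) = 6 ^ m := by
    rw [Fintype.card_pi]
    rw [Finset.prod_congr rfl (fun i (_ : i ∈ Finset.univ) => card_S3), Finset.prod_const,
      Finset.card_univ, Fintype.card_fin]
  rw [hcard]
  have hf : (6 ^ m : ℕ).factorization 2 = m := by
    rw [Nat.factorization_pow]
    simp only [Finsupp.smul_apply, smul_eq_mul]
    have h6 : (6 : ℕ).factorization 2 = 1 := by
      rw [show (6 : ℕ) = 2 * 3 from by norm_num,
        Nat.factorization_mul (by norm_num) (by norm_num)]
      simp only [Finsupp.add_apply]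
      rw [Nat.Prime.factorization_self Nat.prime_two,
        Nat.factorization_eq_zero_of_not_dvd (by norm_num)]
    rw [h6, mul_one]
  show (3 ^ m : ℕ) = 6 ^ m / 2 ^ ((6 ^ m : ℕ).factorization 2)
  rw [hf, show (6 : ℕ) = 2 * 3 from by norm_num, mul_pow,
    Nat.mul_div_cancel_left _ (pow_pos (by norm_num) m)]

theorem part3 (hm : 0 < m) :
    ¬ ∃ P : Sylow 2 (Fin m → S3), (P : Subgroup (Fin m → S3)).Normal := by
  haveI : Fact (Nat.Prime 2) := ⟨Nat.prime_two⟩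
  haveI : Fact (Nat.Prime 3) := ⟨Nat.prime_three⟩
  rintro ⟨P, hP⟩
  haveI := Sylow.unique_of_normal P hP
  set a : Fin m → S3 := fun _ => Equiv.swap 0 1 with ha
  set b : Fin m → S3 := fun _ => Equiv.swap 0 2 with hb
  have haa : a * a = 1 := by
    funext i
    simp [ha, Equiv.swap_mul_self]
  have hbb : b * b = 1 := by
    funext i
    simp [hb, Equiv.swap_mul_self]
  have hmem : ∀ x : Fin m → S3, x * x = 1 → x ∈ (P : Subgroup (Fin m → S3)) := by
    intro x hx
    have hord : orderOf x ∣ 2 := orderOf_dvd_of_pow_eq_one (by rw [pow_two, hx])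
    have hpg : IsPGroup 2 (Subgroup.zpowers x) := by
      refine IsPGroup.iff_card.mpr ?_
      rcases (Nat.dvd_prime Nat.prime_two).mp hord with h1 | h2
      · exact ⟨0, by rw [Nat.card_zpowers, h1, pow_zero]⟩
      · exact ⟨1, by rw [Nat.card_zpowers, h2, pow_one]⟩
    obtain ⟨Q, hQ⟩ := hpg.exists_le_sylow
    have hQP : Q = P := Subsingleton.elim Q P
    exact hQP ▸ hQ (Subgroup.mem_zpowers x)
  have hab : a * b ∈ (P : Subgroup (Fin m → S3)) := mul_mem (hmem a haa) (hmem b hbb)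
  obtain ⟨k, hk⟩ := P.isPGroup' ⟨a * b, hab⟩
  have hk' : (a * b) ^ (2 ^ k) = 1 := by
    have := congrArg Subtype.val hk
    push_cast at this
    exact this
  have hcoord : ((Equiv.swap (0 : Fin 3) 1 * Equiv.swap 0 2) ^ (2 ^ k)) = 1 := by
    have := congrFun hk' ⟨0, hm⟩
    simpa [ha, hb, Pi.pow_apply] using this
  have horder : orderOf (Equiv.swap (0 : Fin 3) 1 * Equiv.swap 0 2) = 3 := by
    refine orderOf_eq_prime ?_ ?_
    · decide
    · decide
  have hdvd3 : (3 : ℕ) ∣ 2 ^ k := horder ▸ orderOf_dvd_of_pow_eq_one hcoord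
  have h32 : (3 : ℕ) ∣ 2 := Nat.Prime.dvd_of_dvd_pow Nat.prime_three hdvd3
  norm_num at h32

end CEAux

/-- For `G = S₃ × ⋯ × S₃` (`m` factors) with `m` a positive even integer,
`χ(C₂(G)) = 3^m = |G|_{2'}` and `G` is not `2`-closed. -/
theorem euler_char_pCosets_prod_S3 (m : ℕ) (hm : 0 < m) (hEven : Even m) :
    posetEulerChar ↥(pCosets 2 (Fin m → Equiv.Perm (Fin 3))) = (3 : ℤ) ^ m ∧
    (3 ^ m : ℕ) = ordCompl[2] (Fintype.card (Fin m → Equiv.Perm (Fin 3))) ∧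
    ¬ ∃ P : Sylow 2 (Fin m → Equiv.Perm (Fin 3)),
        (P : Subgroup (Fin m → Equiv.Perm (Fin 3))).Normal :=
  ⟨CEAux.chi_final hEven, CEAux.part2, CEAux.part3 hm⟩
end
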